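/- arXiv:2012.15617 — 10 statements merged into one kernel-verified Lean document; each statement's English description precedes it below -/
import Mathlib

section
/- If a regular expression R (built from letters, union, and concatenation, without ∅, ε, or star) describes a homogeneous language L(R) ⊆ {0,1}^n, then there is a monotone arithmetic formula of size at most the number of nodes of R whose set of exponent vectors equals L(R), viewing each word w ∈ {0,1}^n as the vector (w_1,...,w_n) ∈ ℕ^n. -/
inductive RE (α : Type) : Type where
  | eps : RE α
  | char : α → RE α
  | union : RE α → RE α → RE α
  | cat : RE α → RE α → RE α

namespace RE
variable {α : Type}

/-- The language described by a star-free regular expression. -/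
def lang : RE α → Language α
  | eps => 1
  | char a => {[a]}
  | union r s => r.lang + s.lang
  | cat r s => r.lang * s.lang

/-- Reverse polish length: the number of nodes of the syntax tree. -/
def size : RE α → ℕ
  | eps => 1
  | char _ => 1
  | union r s => r.size + s.size + 1
  | cat r s => r.size + s.size + 1

/-- `r` is homogeneous of degree `d`: every described word has length `d`. -/
def Homog (r : RE α) (d : ℕ) : Prop := ∀ w ∈ r.lang, w.length = d

/-- Log-product expressions. -/
inductive LogProd : RE α → Prop where
  | char (a : α) : LogProd (char a)
  | catL {B₁ B₂ : RE α} {d₁ d₂ : ℕ} : LogProd B₁ → B₁.Homog d₁ → B₂.Homog d₂ →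
      d₂ ≤ d₁ → LogProd (cat B₁ B₂)
  | catR {B₁ B₂ : RE α} {d₁ d₂ : ℕ} : LogProd B₁ → B₁.Homog d₁ → B₂.Homog d₂ →
      d₂ ≤ d₁ → LogProd (cat B₂ B₁)

end RE

open scoped NNReal

/-- A monotone arithmetic formula in variables `x_1, …, x_n`: leaves hold
nonnegative real constants or variables, gates are addition or multiplication. -/
inductive MonFormula (n : ℕ) : Type where
  | const : ℝ≥0 → MonFormula n
  | var : Fin n → MonFormula n
  | add : MonFormula n → MonFormula n → MonFormula n
  | mul : MonFormula n → MonFormula n → MonFormula n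

namespace MonFormula
variable {n : ℕ}

/-- The polynomial computed by a monotone arithmetic formula. -/
noncomputable def eval : MonFormula n → MvPolynomial (Fin n) ℝ
  | const c => MvPolynomial.C (c : ℝ)
  | var i => MvPolynomial.X i
  | add f g => eval f + eval g
  | mul f g => eval f * eval g

/-- The size of a formula: its number of nodes. -/
def fsize : MonFormula n → ℕ
  | const _ => 1
  | var _ => 1
  | add f g => fsize f + fsize g + 1
  | mul f g => fsize f + fsize g + 1

open Classical in
/-- The produced set of exponent vectors, defined structurally: union at
addition gates and Minkowski sum at multiplication gates. -/
noncomputable def produced : MonFormula n → Set (Fin n →₀ ℕ)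
  | const c => if c = 0 then ∅ else {0}
  | var i => {Finsupp.single i 1}
  | add f g => produced f ∪ produced g
  | mul f g => Set.image2 (· + ·) (produced f) (produced g)

end MonFormula

def RE.EpsFree {α : Type} : RE α → Prop
  | .eps => False
  | .char _ => True
  | .union r s => r.EpsFree ∧ s.EpsFree
  | .cat r s => r.EpsFree ∧ s.EpsFree


noncomputable def vec (n o : ℕ) (w : List Bool) : Fin n →₀ ℕ :=
  Finsupp.equivFunOnFinite.symm
    (fun i => if o ≤ i.1 ∧ w.getD (i.1 - o) false = true then 1 else 0)

lemma vec_apply (n o : ℕ) (w : List Bool) (i : Fin n) :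
    vec n o w i = if o ≤ i.1 ∧ w.getD (i.1 - o) false = true then 1 else 0 := rfl

lemma vec_append (n o : ℕ) (w1 w2 : List Bool) :
    vec n o (w1 ++ w2) = vec n o w1 + vec n (o + w1.length) w2 := by
  ext i
  simp only [Finsupp.add_apply, vec_apply]
  rcases lt_or_ge i.1 o with h | h
  · have ha : ¬ o ≤ i.1 := by omega
    have hb : ¬ o + w1.length ≤ i.1 := by omega
    simp [ha, hb]
  rcases lt_or_ge i.1 (o + w1.length) with h2 | h2
  · have hl : i.1 - o < w1.length := by omega
    have hg : (w1 ++ w2).getD (i.1 - o) false = w1.getD (i.1 - o) false := by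
      rw [List.getD_eq_getElem?_getD, List.getD_eq_getElem?_getD,
        List.getElem?_append_left hl]
    have hn : ¬ o + w1.length ≤ i.1 := by omega
    rw [hg]
    simp [hn, h]
  · have hl : w1.length ≤ i.1 - o := by omega
    have hg : (w1 ++ w2).getD (i.1 - o) false = w2.getD (i.1 - (o + w1.length)) false := by
      rw [List.getD_eq_getElem?_getD, List.getD_eq_getElem?_getD,
        List.getElem?_append_right hl]
      congr 2
      omega
    rw [hg, List.getD_eq_default _ _ hl]
    simp [h, h2]

lemma MonFormula.coeff_eval_nonneg {n : ℕ} (F : MonFormula n) (m : Fin n →₀ ℕ) :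
    0 ≤ (MonFormula.eval F).coeff m := by
  induction F generalizing m with
  | const c =>
      simp only [MonFormula.eval, MvPolynomial.coeff_C]
      split <;> positivity
  | var i =>
      simp only [MonFormula.eval, MvPolynomial.coeff_X']
      split <;> norm_num
  | add f g hf hg =>
      simp only [MonFormula.eval, MvPolynomial.coeff_add]
      exact add_nonneg (hf m) (hg m)
  | mul f g hf hg =>
      simp only [MonFormula.eval, MvPolynomial.coeff_mul]
      exact Finset.sum_nonneg fun x _ => mul_nonneg (hf x.1) (hg x.2)

lemma MonFormula.mem_support_add {n : ℕ} (f g : MonFormula n) (m : Fin n →₀ ℕ) :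
    m ∈ (MonFormula.eval (MonFormula.add f g)).support ↔
      m ∈ (MonFormula.eval f).support ∨ m ∈ (MonFormula.eval g).support := by
  simp only [MonFormula.eval, MvPolynomial.mem_support_iff, MvPolynomial.coeff_add]
  constructor
  · intro h
    by_contra hc
    push_neg at hc
    rw [hc.1, hc.2, add_zero] at h
    exact h rfl
  · intro h hc
    have hf := MonFormula.coeff_eval_nonneg f m
    have hg := MonFormula.coeff_eval_nonneg g m
    rcases h with h | h
    · exact h (by linarith [le_antisymm (by linarith) hf])
    · exact h (by linarith [le_antisymm (by linarith) hg])

lemma MonFormula.mem_support_mul {n : ℕ} (f g : MonFormula n) (m : Fin n →₀ ℕ) :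
    m ∈ (MonFormula.eval (MonFormula.mul f g)).support ↔
      ∃ a ∈ (MonFormula.eval f).support, ∃ b ∈ (MonFormula.eval g).support, a + b = m := by
  simp only [MonFormula.eval, MvPolynomial.mem_support_iff, MvPolynomial.coeff_mul]
  constructor
  · intro h
    obtain ⟨x, hx, hne⟩ := Finset.exists_ne_zero_of_sum_ne_zero h
    refine ⟨x.1, ?_, x.2, ?_, Finset.HasAntidiagonal.mem_antidiagonal.mp hx⟩
    · exact fun h0 => hne (by rw [h0, zero_mul])
    · exact fun h0 => hne (by rw [h0, mul_zero])
  · rintro ⟨a, ha, b, hb, hab⟩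
    have hpos : 0 < ∑ x ∈ Finset.HasAntidiagonal.antidiagonal m,
        (MonFormula.eval f).coeff x.1 * (MonFormula.eval g).coeff x.2 := by
      apply Finset.sum_pos'
      · exact fun x _ => mul_nonneg (MonFormula.coeff_eval_nonneg f x.1)
          (MonFormula.coeff_eval_nonneg g x.2)
      · refine ⟨(a, b), Finset.HasAntidiagonal.mem_antidiagonal.mpr hab, ?_⟩
        exact mul_pos ((MonFormula.coeff_eval_nonneg f a).lt_of_ne (Ne.symm ha))
          ((MonFormula.coeff_eval_nonneg g b).lt_of_ne (Ne.symm hb))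
    exact ne_of_gt hpos

lemma RE.lang_nonempty {α : Type} (r : RE α) (h : r.EpsFree) : ∃ w, w ∈ r.lang := by
  induction r with
  | eps => exact absurd h id
  | char a => exact ⟨[a], rfl⟩
  | union r s hr hs =>
      obtain ⟨w, hw⟩ := hr h.1
      exact ⟨w, Or.inl hw⟩
  | cat r s hr hs =>
      obtain ⟨w1, h1⟩ := hr h.1
      obtain ⟨w2, h2⟩ := hs h.2
      exact ⟨w1 ++ w2, Language.mem_mul.mpr ⟨w1, h1, w2, h2, rfl⟩⟩

lemma re_main {n : ℕ} (r : RE Bool) (hfree : r.EpsFree) :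
    ∀ d, r.Homog d → ∀ o, o + d ≤ n →
    ∃ F : MonFormula n, F.fsize ≤ r.size ∧
      ∀ m : Fin n →₀ ℕ, m ∈ (MonFormula.eval F).support ↔ ∃ w ∈ r.lang, m = vec n o w := by
  induction r with
  | eps => exact absurd hfree id
  | char a =>
      intro d hd o ho
      have hd1 : d = 1 := by simpa using (hd [a] rfl).symm
      subst hd1
      have hon : o < n := by omega
      cases a with
      | false =>
          refine ⟨MonFormula.const 1, le_refl _, fun m => ?_⟩
          have hv : vec n o [false] = 0 := by
            ext i
            rw [vec_apply]
            have hg : ([false] : List Bool).getD (i.1 - o) false = false := by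
              rcases Nat.eq_zero_or_pos (i.1 - o) with h | h
              · simp [h]
              · exact List.getD_eq_default _ _
                  (by simp only [List.length_singleton]; omega)
            simp [hg]
          have hsupp : m ∈ (MonFormula.eval (MonFormula.const (n := n) 1)).support ↔ m = 0 := by
            simp only [MonFormula.eval, MvPolynomial.mem_support_iff, MvPolynomial.coeff_C]
            rcases eq_or_ne m 0 with h | h
            · simp [h]
            · simp [h, Ne.symm h]
          rw [hsupp]
          constructor
          · intro h
            exact ⟨[false], rfl, h.trans hv.symm⟩
          · rintro ⟨w, hw, hm⟩
            have hw' : w = [false] := hw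
            subst hw'
            rw [hm, hv]
      | true =>
          refine ⟨MonFormula.var ⟨o, hon⟩, le_refl _, fun m => ?_⟩
          have hv : vec n o [true] = Finsupp.single ⟨o, hon⟩ 1 := by
            ext i
            rw [vec_apply, Finsupp.single_apply]
            by_cases hio : o = i.1
            · have h0 : i.1 - o = 0 := by omega
              have hfi : (⟨o, hon⟩ : Fin n) = i := Fin.ext hio
              simp [h0, hfi, hio.le]
            · have hne : (⟨o, hon⟩ : Fin n) ≠ i := fun h => hio (congrArg Fin.val h)
              have hg2 : ¬ (o ≤ i.1 ∧ ([true] : List Bool).getD (i.1 - o) false = true) := by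
                rintro ⟨h1, h2⟩
                rcases Nat.lt_or_ge (i.1 - o) 1 with h | h
                · exact hio (by omega)
                · rw [List.getD_eq_default _ _ (by simpa using h)] at h2
                  exact Bool.false_ne_true h2
              rw [if_neg hg2, if_neg hne]
          have hsupp : m ∈ (MonFormula.eval (MonFormula.var (⟨o, hon⟩ : Fin n))).support ↔
              m = Finsupp.single ⟨o, hon⟩ 1 := by
            simp [MonFormula.eval, MvPolynomial.support_X]
          rw [hsupp]
          constructor
          · intro h
            exact ⟨[true], rfl, h.trans hv.symm⟩
          · rintro ⟨w, hw, hm⟩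
            have hw' : w = [true] := hw
            subst hw'
            rw [hm, hv]
  | union r s hr hs =>
      intro d hd o ho
      have hdr : r.Homog d := fun w hw => hd w (Or.inl hw)
      have hds : s.Homog d := fun w hw => hd w (Or.inr hw)
      obtain ⟨F1, hF1, hs1⟩ := hr hfree.1 d hdr o ho
      obtain ⟨F2, hF2, hs2⟩ := hs hfree.2 d hds o ho
      refine ⟨MonFormula.add F1 F2, ?_, ?_⟩
      · simp only [MonFormula.fsize, RE.size]
        omega
      · intro m
        rw [MonFormula.mem_support_add, hs1, hs2]
        constructor
        · rintro (⟨w, hw, hm⟩ | ⟨w, hw, hm⟩)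
          · exact ⟨w, Or.inl hw, hm⟩
          · exact ⟨w, Or.inr hw, hm⟩
        · rintro ⟨w, hw | hw, hm⟩
          · exact Or.inl ⟨w, hw, hm⟩
          · exact Or.inr ⟨w, hw, hm⟩
  | cat r s hr hs =>
      intro d hd o ho
      obtain ⟨w1, h1⟩ := RE.lang_nonempty r hfree.1
      obtain ⟨w2, h2⟩ := RE.lang_nonempty s hfree.2
      set d1 := w1.length with hd1
      set d2 := w2.length with hd2
      have hsum : d1 + d2 = d := by
        have := hd (w1 ++ w2) (Language.mem_mul.mpr ⟨w1, h1, w2, h2, rfl⟩)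
        simpa using this
      have hdr : r.Homog d1 := by
        intro u hu
        have := hd (u ++ w2) (Language.mem_mul.mpr ⟨u, hu, w2, h2, rfl⟩)
        simp only [List.length_append] at this
        omega
      have hds : s.Homog d2 := by
        intro u hu
        have := hd (w1 ++ u) (Language.mem_mul.mpr ⟨w1, h1, u, hu, rfl⟩)
        simp only [List.length_append] at this
        omega
      obtain ⟨F1, hF1, hs1⟩ := hr hfree.1 d1 hdr o (show o + d1 ≤ n by omega)
      obtain ⟨F2, hF2, hs2⟩ := hs hfree.2 d2 hds (o + d1) (show o + d1 + d2 ≤ n by omega)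
      refine ⟨MonFormula.mul F1 F2, ?_, ?_⟩
      · simp only [MonFormula.fsize, RE.size]
        omega
      · intro m
        rw [MonFormula.mem_support_mul]
        constructor
        · rintro ⟨a, ha, b, hb, hab⟩
          obtain ⟨u, hu, hau⟩ := (hs1 a).mp ha
          obtain ⟨v, hv, hbv⟩ := (hs2 b).mp hb
          refine ⟨u ++ v, Language.mem_mul.mpr ⟨u, hu, v, hv, rfl⟩, ?_⟩
          rw [vec_append, hdr u hu, ← hau, ← hbv]
          exact hab.symm
        · rintro ⟨w, hw, hm⟩
          obtain ⟨u, hu, v, hv, huv⟩ := Language.mem_mul.mp hw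
          refine ⟨vec n o u, (hs1 _).mpr ⟨u, hu, rfl⟩,
            vec n (o + d1) v, (hs2 _).mpr ⟨v, hv, rfl⟩, ?_⟩
          rw [hm, ← huv, vec_append, hdr u hu]

/-- If a regular expression `R` built from letters, union and concatenation
describes a homogeneous language `L(R) ⊆ {0,1}^n`, then there is a monotone
arithmetic formula of size at most the number of nodes of `R` whose set of
exponent vectors is exactly `L(R)`, viewing a word `w ∈ {0,1}^n` as the
vector `(w_1, …, w_n) ∈ ℕ^n`. -/
theorem re_to_monFormula {n : ℕ} (r : RE Bool) (hfree : r.EpsFree) (hhom : r.Homog n) :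
    ∃ F : MonFormula n, F.fsize ≤ r.size ∧
      ∀ m : Fin n →₀ ℕ,
        m ∈ (MonFormula.eval F).support ↔
          ∃ w ∈ r.lang, ∀ i : Fin n, m i = (if w.getD i.1 false then 1 else 0) := by
  obtain ⟨F, hF, hsup⟩ := re_main (n := n) r hfree n hhom 0 (by omega)
  refine ⟨F, hF, fun m => ?_⟩
  rw [hsup]
  constructor
  · rintro ⟨w, hw, rfl⟩
    refine ⟨w, hw, fun i => ?_⟩
    rw [vec_apply]
    simp
  · rintro ⟨w, hw, hm⟩
    refine ⟨w, hw, ?_⟩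
    ext i
    rw [vec_apply, hm i]
    simp
end

section
/- Every homogeneous regular expression R (not equal to ε, built without ∅ and without star) is equivalent to a union B_1 + ... + B_ℓ of at most ℓ ≤ |R| log-product expressions, where |R| is the number of nodes in the syntax tree of R. -/

theorem RE.lang_nonempty_s2 {α : Type} (r : RE α) : r.lang.Nonempty := by
  induction r with
  | eps => exact ⟨[], by exact (Language.mem_one _).2 rfl⟩
  | char a => exact ⟨[a], rfl⟩
  | union r s ihr ihs =>
    obtain ⟨w, hw⟩ := ihr
    exact ⟨w, (Language.mem_add _ _ _).2 (Or.inl hw)⟩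
  | cat r s ihr ihs =>
    obtain ⟨w, hw⟩ := ihr
    obtain ⟨v, hv⟩ := ihs
    exact ⟨w ++ v, Language.append_mem_mul hw hv⟩

/-- Every homogeneous regular expression `R` (of degree at least `1`, i.e. not
describing `{ε}`, built without `∅` and without star) is equivalent to a union
`B₁ + ⋯ + B_ℓ` of at most `ℓ ≤ |R|` log-product expressions, where `|R|` is
the number of nodes of the syntax tree of `R`. -/
theorem homog_eq_union_of_logProd {α : Type} (r : RE α) (d : ℕ) (hd : 1 ≤ d)
    (hhom : r.Homog d) :
    ∃ Bs : List (RE α), Bs.length ≤ r.size ∧ (∀ B ∈ Bs, RE.LogProd B) ∧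
      ∀ w, w ∈ r.lang ↔ ∃ B ∈ Bs, w ∈ B.lang := by
  induction r generalizing d with
  | eps =>
    exfalso
    have h0 := hhom [] (by simp [RE.lang])
    simp at h0
    omega
  | char a =>
    refine ⟨[RE.char a], by simp [RE.size], ?_, ?_⟩
    · intro B hB
      simp at hB
      subst hB
      exact RE.LogProd.char a
    · intro w
      simp [RE.lang]
  | union r s ihr ihs =>
    obtain ⟨Bs₁, h₁, hl₁, hm₁⟩ := ihr d hd (fun w hw => hhom w ((Language.mem_add _ _ _).2 (Or.inl hw)))
    obtain ⟨Bs₂, h₂, hl₂, hm₂⟩ := ihs d hd (fun w hw => hhom w ((Language.mem_add _ _ _).2 (Or.inr hw)))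
    refine ⟨Bs₁ ++ Bs₂, ?_, ?_, ?_⟩
    · simp [RE.size]
      omega
    · intro B hB
      rcases List.mem_append.1 hB with h | h
      exacts [hl₁ B h, hl₂ B h]
    · intro w
      constructor
      · intro hw
        rcases (Language.mem_add _ _ _).1 hw with hw | hw
        · obtain ⟨B, hB, hwB⟩ := (hm₁ w).1 hw
          exact ⟨B, List.mem_append_left _ hB, hwB⟩
        · obtain ⟨B, hB, hwB⟩ := (hm₂ w).1 hw
          exact ⟨B, List.mem_append_right _ hB, hwB⟩
      · rintro ⟨B, hB, hwB⟩
        rcases List.mem_append.1 hB with h | h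
        · exact (Language.mem_add _ _ _).2 (Or.inl ((hm₁ w).2 ⟨B, h, hwB⟩))
        · exact (Language.mem_add _ _ _).2 (Or.inr ((hm₂ w).2 ⟨B, h, hwB⟩))
  | cat r s ihr ihs =>
    obtain ⟨w₁, hw₁⟩ := r.lang_nonempty_s2
    obtain ⟨w₂, hw₂⟩ := s.lang_nonempty_s2
    have hsum : w₁.length + w₂.length = d := by
      have := hhom (w₁ ++ w₂) (Language.append_mem_mul hw₁ hw₂)
      simpa using this
    have hr : r.Homog w₁.length := by
      intro u hu
      have := hhom (u ++ w₂) (Language.append_mem_mul hu hw₂)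
      simp at this
      omega
    have hs : s.Homog w₂.length := by
      intro v hv
      have := hhom (w₁ ++ v) (Language.append_mem_mul hw₁ hv)
      simp at this
      omega
    rcases le_or_gt w₂.length w₁.length with hle | hlt
    · obtain ⟨Bs, hlen, hlp, hmem⟩ := ihr w₁.length (by omega) hr
      refine ⟨Bs.map (fun B => RE.cat B s), ?_, ?_, ?_⟩
      · simp [RE.size]
        omega
      · intro B hB
        obtain ⟨B₁, hB₁, rfl⟩ := List.mem_map.1 hB
        exact RE.LogProd.catL (hlp B₁ hB₁)
          (fun u hu => hr u ((hmem u).2 ⟨B₁, hB₁, hu⟩)) hs hle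
      · intro w
        constructor
        · intro hw
          obtain ⟨u, hu, v, hv, rfl⟩ := Language.mem_mul.1 hw
          obtain ⟨B, hB, huB⟩ := (hmem u).1 hu
          exact ⟨RE.cat B s, List.mem_map_of_mem hB, Language.append_mem_mul huB hv⟩
        · rintro ⟨B, hB, hwB⟩
          obtain ⟨B₁, hB₁, rfl⟩ := List.mem_map.1 hB
          obtain ⟨u, hu, v, hv, rfl⟩ := Language.mem_mul.1 hwB
          exact Language.append_mem_mul ((hmem u).2 ⟨B₁, hB₁, hu⟩) hv
    · obtain ⟨Bs, hlen, hlp, hmem⟩ := ihs w₂.length (by omega) hs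
      refine ⟨Bs.map (fun B => RE.cat r B), ?_, ?_, ?_⟩
      · simp [RE.size]
        omega
      · intro B hB
        obtain ⟨B₂, hB₂, rfl⟩ := List.mem_map.1 hB
        exact RE.LogProd.catR (hlp B₂ hB₂)
          (fun v hv => hs v ((hmem v).2 ⟨B₂, hB₂, hv⟩)) hr (le_of_lt hlt)
      · intro w
        constructor
        · intro hw
          obtain ⟨u, hu, v, hv, rfl⟩ := Language.mem_mul.1 hw
          obtain ⟨B, hB, hvB⟩ := (hmem v).1 hv
          exact ⟨RE.cat r B, List.mem_map_of_mem hB, Language.append_mem_mul hu hvB⟩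
        · rintro ⟨B, hB, hwB⟩
          obtain ⟨B₂, hB₂, rfl⟩ := List.mem_map.1 hB
          obtain ⟨u, hu, v, hv, rfl⟩ := Language.mem_mul.1 hwB
          exact Language.append_mem_mul hu ((hmem v).2 ⟨B₂, hB₂, hv⟩)
end

section
/- Let L ⊆ Σ^n be a homogeneous language and h ≥ 0. If every log-product expression B with L(B) ⊆ L satisfies |L(B)| ≤ h, then every regular expression describing L has at least |L|/h nodes in its syntax tree. -/

lemma my_ncard_biUnion_le {β γ : Type*} (S : Finset β) (f : β → Set γ)
    (hf : ∀ b ∈ S, (f b).Finite) :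
    Set.ncard (⋃ b ∈ S, f b) ≤ ∑ b ∈ S, Set.ncard (f b) := by
  classical
  induction S using Finset.induction with
  | empty => simp
  | @insert a S ha ih =>
    have h1 : (⋃ b ∈ insert a S, f b) = f a ∪ ⋃ b ∈ S, f b := by
      simp [Set.biUnion_insert]
    rw [h1, Finset.sum_insert ha]
    have hfin : (⋃ b ∈ S, f b).Finite :=
      Set.Finite.biUnion S.finite_toSet (fun b hb => hf b (Finset.mem_insert_of_mem hb))
    calc Set.ncard (f a ∪ ⋃ b ∈ S, f b) ≤ Set.ncard (f a) + Set.ncard (⋃ b ∈ S, f b) :=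
          Set.ncard_union_le _ _
      _ ≤ Set.ncard (f a) + ∑ b ∈ S, Set.ncard (f b) := by
          exact Nat.add_le_add_left (ih (fun b hb => hf b (Finset.mem_insert_of_mem hb))) _

lemma cover {α : Type} (r : RE α) : ∀ (d : ℕ), 1 ≤ d → (∀ w ∈ r.lang, w.length = d) →
    ∃ S : Finset (RE α), S.card ≤ r.size ∧
      (∀ B ∈ S, RE.LogProd B ∧ ∀ w ∈ B.lang, w ∈ r.lang) ∧
      (∀ w ∈ r.lang, ∃ B ∈ S, w ∈ B.lang) := by
  classical
  induction r with
  | eps =>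
    intro d hd hhom
    exfalso
    have : ([] : List α).length = d := hhom [] (by simp [RE.lang])
    simp at this; omega
  | char a =>
    intro d hd hhom
    refine ⟨{RE.char a}, by simp [RE.size], ?_, ?_⟩
    · intro B hB
      simp only [Finset.mem_singleton] at hB
      subst hB
      exact ⟨RE.LogProd.char a, fun w hw => hw⟩
    · intro w hw
      exact ⟨RE.char a, Finset.mem_singleton_self _, hw⟩
  | union r s ihr ihs =>
    intro d hd hhom
    have hmemr : ∀ w ∈ r.lang, w ∈ (RE.union r s).lang := by
      intro w hw; exact (Language.mem_add _ _ _).mpr (Or.inl hw)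
    have hmems : ∀ w ∈ s.lang, w ∈ (RE.union r s).lang := by
      intro w hw; exact (Language.mem_add _ _ _).mpr (Or.inr hw)
    obtain ⟨Sr, hSr1, hSr2, hSr3⟩ := ihr d hd (fun w hw => hhom w (hmemr w hw))
    obtain ⟨Ss, hSs1, hSs2, hSs3⟩ := ihs d hd (fun w hw => hhom w (hmems w hw))
    refine ⟨Sr ∪ Ss, ?_, ?_, ?_⟩
    · calc (Sr ∪ Ss).card ≤ Sr.card + Ss.card := Finset.card_union_le _ _
        _ ≤ r.size + s.size := Nat.add_le_add hSr1 hSs1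
        _ ≤ (RE.union r s).size := by simp only [RE.size]; omega
    · intro B hB
      rcases Finset.mem_union.mp hB with hB | hB
      · exact ⟨(hSr2 B hB).1, fun w hw => hmemr w ((hSr2 B hB).2 w hw)⟩
      · exact ⟨(hSs2 B hB).1, fun w hw => hmems w ((hSs2 B hB).2 w hw)⟩
    · intro w hw
      rcases (Language.mem_add _ _ _).mp hw with hw | hw
      · obtain ⟨B, hB, hwB⟩ := hSr3 w hw
        exact ⟨B, Finset.mem_union_left _ hB, hwB⟩
      · obtain ⟨B, hB, hwB⟩ := hSs3 w hw
        exact ⟨B, Finset.mem_union_right _ hB, hwB⟩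
  | cat r s ihr ihs =>
    intro d hd hhom
    by_cases hne : ((RE.cat r s).lang : Set (List α)).Nonempty
    swap
    · refine ⟨∅, by simp, by simp, ?_⟩
      intro w hw
      exact absurd ⟨w, hw⟩ hne
    obtain ⟨w0, hw0⟩ := hne
    obtain ⟨u0, hu0, v0, hv0, huv0⟩ := Language.mem_mul.mp hw0
    have hlen0 : u0.length + v0.length = d := by
      have := hhom w0 hw0
      rw [← huv0] at this
      simpa using this
    have hhomr : ∀ w ∈ r.lang, w.length = u0.length := by
      intro w hw
      have h1 : w ++ v0 ∈ (RE.cat r s).lang :=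
        Language.mem_mul.mpr ⟨w, hw, v0, hv0, rfl⟩
      have := hhom _ h1
      simp at this; omega
    have hhoms : ∀ w ∈ s.lang, w.length = v0.length := by
      intro w hw
      have h1 : u0 ++ w ∈ (RE.cat r s).lang :=
        Language.mem_mul.mpr ⟨u0, hu0, w, hw, rfl⟩
      have := hhom _ h1
      simp at this; omega
    by_cases hcase : v0.length ≤ u0.length
    · -- use left factor
      have hd1 : 1 ≤ u0.length := by omega
      obtain ⟨Sr, hSr1, hSr2, hSr3⟩ := ihr u0.length hd1 hhomr
      refine ⟨Sr.image (fun B => RE.cat B s), ?_, ?_, ?_⟩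
      · calc (Sr.image _).card ≤ Sr.card := Finset.card_image_le
          _ ≤ r.size := hSr1
          _ ≤ (RE.cat r s).size := by simp only [RE.size]; omega
      · intro B' hB'
        obtain ⟨B, hB, rfl⟩ := Finset.mem_image.mp hB'
        constructor
        · exact RE.LogProd.catL (hSr2 B hB).1
            (fun w hw => hhomr w ((hSr2 B hB).2 w hw)) hhoms hcase
        · intro w hw
          obtain ⟨u, hu, v, hv, rfl⟩ := Language.mem_mul.mp hw
          exact Language.mem_mul.mpr ⟨u, (hSr2 B hB).2 u hu, v, hv, rfl⟩
      · intro w hw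
        obtain ⟨u, hu, v, hv, rfl⟩ := Language.mem_mul.mp hw
        obtain ⟨B, hB, huB⟩ := hSr3 u hu
        exact ⟨RE.cat B s, Finset.mem_image_of_mem _ hB,
          Language.mem_mul.mpr ⟨u, huB, v, hv, rfl⟩⟩
    · -- use right factor
      have hd1 : 1 ≤ v0.length := by omega
      obtain ⟨Ss, hSs1, hSs2, hSs3⟩ := ihs v0.length hd1 hhoms
      refine ⟨Ss.image (fun B => RE.cat r B), ?_, ?_, ?_⟩
      · calc (Ss.image _).card ≤ Ss.card := Finset.card_image_le
          _ ≤ s.size := hSs1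
          _ ≤ (RE.cat r s).size := by simp only [RE.size]; omega
      · intro B' hB'
        obtain ⟨B, hB, rfl⟩ := Finset.mem_image.mp hB'
        constructor
        · exact RE.LogProd.catR (hSs2 B hB).1
            (fun w hw => hhoms w ((hSs2 B hB).2 w hw)) hhomr (by omega)
        · intro w hw
          obtain ⟨u, hu, v, hv, rfl⟩ := Language.mem_mul.mp hw
          exact Language.mem_mul.mpr ⟨u, hu, v, (hSs2 B hB).2 v hv, rfl⟩
      · intro w hw
        obtain ⟨u, hu, v, hv, rfl⟩ := Language.mem_mul.mp hw
        obtain ⟨B, hB, hvB⟩ := hSs3 v hv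
        exact ⟨RE.cat r B, Finset.mem_image_of_mem _ hB,
          Language.mem_mul.mpr ⟨u, hu, v, hvB, rfl⟩⟩

/-- The log-product bound: if `L ⊆ Σ^n` is a homogeneous language (`n ≥ 1`) and
every log-product expression `B` with `L(B) ⊆ L` satisfies `|L(B)| ≤ h`, then
every regular expression describing `L` has at least `|L|/h` nodes in its
syntax tree. -/
theorem logProduct_bound {α : Type} (n : ℕ) (hn : 1 ≤ n) (L : Language α)
    (hL : ∀ w ∈ L, w.length = n) (h : ℝ) (hh : 0 ≤ h)
    (hbound : ∀ B : RE α, RE.LogProd B → (∀ w ∈ B.lang, w ∈ L) →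
      (Set.ncard (show Set (List α) from B.lang) : ℝ) ≤ h) :
    ∀ r : RE α, r.lang = L →
      (Set.ncard (show Set (List α) from L) : ℝ) / h ≤ (r.size : ℝ) := by
  intro r hr
  subst hr
  by_cases hfin : (show Set (List α) from r.lang).Finite
  swap
  · rw [Set.Infinite.ncard hfin]
    simp
  · obtain ⟨S, hS1, hS2, hS3⟩ := cover r n hn hL
    have hsub : (show Set (List α) from r.lang) ⊆ ⋃ B ∈ S, (show Set (List α) from B.lang) := by
      intro w hw
      obtain ⟨B, hB, hwB⟩ := hS3 w hw
      exact Set.mem_biUnion hB hwB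
    have hUfin : (⋃ B ∈ S, (show Set (List α) from B.lang)).Finite :=
      Set.Finite.biUnion S.finite_toSet (fun B hB => hfin.subset ((hS2 B hB).2))
    have h1 : Set.ncard (show Set (List α) from r.lang) ≤
        ∑ B ∈ S, Set.ncard (show Set (List α) from B.lang) :=
      le_trans (Set.ncard_le_ncard hsub hUfin)
        (my_ncard_biUnion_le S _ (fun B hB => hfin.subset ((hS2 B hB).2)))
    have h2 : (Set.ncard (show Set (List α) from r.lang) : ℝ) ≤ (S.card : ℝ) * h := by
      calc (Set.ncard (show Set (List α) from r.lang) : ℝ)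
          ≤ ((∑ B ∈ S, Set.ncard (show Set (List α) from B.lang) : ℕ) : ℝ) := by
            exact_mod_cast h1
        _ = ∑ B ∈ S, (Set.ncard (show Set (List α) from B.lang) : ℝ) := by
            push_cast; ring
        _ ≤ (S.card : ℝ) * h := by
            rw [← nsmul_eq_mul]
            exact Finset.sum_le_card_nsmul S _ h
              (fun B hB => hbound B (hS2 B hB).1 (hS2 B hB).2)
    have h3 : (Set.ncard (show Set (List α) from r.lang) : ℝ) ≤ (r.size : ℝ) * h :=
      le_trans h2 (mul_le_mul_of_nonneg_right (by exact_mod_cast hS1) hh)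
    rcases hh.eq_or_lt with h0 | hpos
    · rw [← h0, div_zero]
      positivity
    · rw [div_le_iff₀ hpos]
      exact h3
end

section
/- For every log-product expression B of degree n ≥ 2, there exist homogeneous expressions X and Y with L(B) = L(X)·L(Y) and n/3 ≤ deg X ≤ 2n/3 and n/3 ≤ deg Y ≤ 2n/3. -/
namespace LogProdAux

open RE

lemma homog_eps {α : Type} : (RE.eps : RE α).Homog 0 := by
  intro w hw
  simp only [RE.lang, Language.mem_one] at hw
  simp [hw]

lemma lang_cat {α : Type} (r s : RE α) : (RE.cat r s).lang = r.lang * s.lang := rfl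

lemma homog_cat {α : Type} {X Y : RE α} {s t : ℕ} (hX : X.Homog s) (hY : Y.Homog t) :
    (RE.cat X Y).Homog (s + t) := by
  intro w hw
  rw [lang_cat, Language.mem_mul] at hw
  obtain ⟨a, ha, b, hb, rfl⟩ := hw
  simp [List.length_append, hX a ha, hY b hb]

/-- Key lemma: a nonempty log-product of degree `d` can be cut at some point `t`
in any interval `[a, b]` satisfying the stated arithmetic conditions. -/
lemma key {α : Type} {B : RE α} (hB : RE.LogProd B) :
    ∀ d a b : ℕ, B.Homog d → (∃ w, w ∈ B.lang) → a ≤ b → b ≤ d →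
      2 * a ≤ b + 2 → d + a ≤ 2 * b + 2 →
      ∃ (X Y : RE α) (t : ℕ), X.Homog t ∧ Y.Homog (d - t) ∧
        B.lang = X.lang * Y.lang ∧ a ≤ t ∧ t ≤ b := by
  induction hB with
  | char c =>
    intro d a b hom ⟨w, hw⟩ hab hbd h1 h2
    have hd : d = 1 := by
      have : w = [c] := by simp only [RE.lang] at hw; exact hw
      have := hom w hw
      simp [this, ‹w = [c]›] at this ⊢
      omega
    rcases Nat.eq_zero_or_pos a with ha | ha
    · exact ⟨RE.eps, RE.char c, 0, homog_eps, by simpa using hom,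
        by simp [RE.lang, one_mul], by omega, by omega⟩
    · have : a = 1 ∧ b = 1 := by omega
      exact ⟨RE.char c, RE.eps, 1, by simpa [hd] using hom, by simpa [hd] using homog_eps,
        by simp [RE.lang, mul_one], by omega, by omega⟩
  | catL h1 hh1 hh2 hle ih =>
    rename_i B₁ B₂ d₁ d₂
    intro d a b hom ⟨w, hw⟩ hab hbd hc1 hc2
    rw [lang_cat, Language.mem_mul] at hw
    obtain ⟨w₁, hw1, w₂, hw2, rfl⟩ := hw
    have hd : d = d₁ + d₂ := by
      have := hom _ (by rw [lang_cat, Language.mem_mul]; exact ⟨w₁, hw1, w₂, hw2, rfl⟩)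
      rw [List.length_append, hh1 w₁ hw1, hh2 w₂ hw2] at this
      omega
    rcases Nat.eq_zero_or_pos a with ha | ha
    · exact ⟨RE.eps, RE.cat B₁ B₂, 0, homog_eps, by simpa using hom,
        by simp [RE.lang, one_mul], by omega, by omega⟩
    rcases le_or_gt a d₁ with had | had
    · rcases le_or_gt d₁ b with hdb | hdb
      · exact ⟨B₁, B₂, d₁, hh1, by rwa [show d - d₁ = d₂ by omega], rfl, had, hdb⟩
      · obtain ⟨X₁, Y₁, t, hX, hY, hl, hat, htb⟩ :=
          ih d₁ a b hh1 ⟨w₁, hw1⟩ hab (by omega) hc1 (by omega)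
        refine ⟨X₁, RE.cat Y₁ B₂, t, hX, ?_, ?_, hat, htb⟩
        · have := homog_cat hY hh2
          rwa [show d₁ - t + d₂ = d - t by omega] at this
        · rw [lang_cat, lang_cat, hl, mul_assoc]
    · -- d₁ < a : then d = b, cut at the top
      have hdb : d = b := by omega
      exact ⟨RE.cat B₁ B₂, RE.eps, d, hom, by simpa using homog_eps,
        by simp [RE.lang, mul_one], by omega, by omega⟩
  | catR h1 hh1 hh2 hle ih =>
    rename_i B₁ B₂ d₁ d₂
    intro d a b hom ⟨w, hw⟩ hab hbd hc1 hc2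
    rw [lang_cat, Language.mem_mul] at hw
    obtain ⟨w₂, hw2, w₁, hw1, rfl⟩ := hw
    have hd : d = d₂ + d₁ := by
      have := hom _ (by rw [lang_cat, Language.mem_mul]; exact ⟨w₂, hw2, w₁, hw1, rfl⟩)
      rw [List.length_append, hh1 w₁ hw1, hh2 w₂ hw2] at this
      omega
    rcases Nat.eq_zero_or_pos a with ha | ha
    · exact ⟨RE.eps, RE.cat B₂ B₁, 0, homog_eps, by simpa using hom,
        by simp [RE.lang, one_mul], by omega, by omega⟩
    rcases le_or_gt a d₂ with had | had
    · have hdb : d₂ ≤ b := by omega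
      exact ⟨B₂, B₁, d₂, hh2, by rwa [show d - d₂ = d₁ by omega], rfl, had, hdb⟩
    · obtain ⟨X₁, Y₁, t, hX, hY, hl, hat, htb⟩ :=
        ih d₁ (a - d₂) (b - d₂) hh1 ⟨w₁, hw1⟩ (by omega) (by omega) (by omega) (by omega)
      refine ⟨RE.cat B₂ X₁, Y₁, d₂ + t, homog_cat hh2 hX, ?_, ?_, by omega, by omega⟩
      · rw [show d - (d₂ + t) = d₁ - t by omega]; exact hY
      · rw [lang_cat, lang_cat, hl, mul_assoc]

end LogProdAux

/-- For every log-product expression `B` of degree `n ≥ 2` there are homogeneous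
expressions `X` and `Y` with `L(B) = L(X)·L(Y)` and
`n/3 ≤ deg X ≤ 2n/3` and `n/3 ≤ deg Y ≤ 2n/3`. -/
theorem logProd_balanced_split {α : Type} (B : RE α) (n : ℕ) (hn : 2 ≤ n)
    (hB : RE.LogProd B) (hhom : B.Homog n) :
    ∃ (X Y : RE α) (dX dY : ℕ), X.Homog dX ∧ Y.Homog dY ∧
      B.lang = X.lang * Y.lang ∧
      n ≤ 3 * dX ∧ 3 * dX ≤ 2 * n ∧ n ≤ 3 * dY ∧ 3 * dY ≤ 2 * n := by
  by_cases hne : ∃ w, w ∈ B.lang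
  · set a := (n + 2) / 3 with ha
    set b := 2 * n / 3 with hb
    obtain ⟨X, Y, t, hX, hY, hl, hat, htb⟩ :=
      LogProdAux.key hB n a b hhom hne (by omega) (by omega) (by omega) (by omega)
    exact ⟨X, Y, t, n - t, hX, hY, hl, by omega, by omega, by omega, by omega⟩
  · push_neg at hne
    have hempty : B.lang = 0 := by
      ext w; simpa using hne w
    have hhX : B.Homog ((n + 2) / 3) := by
      intro w hw; exact absurd hw (by rw [hempty]; simp)
    refine ⟨B, B, (n + 2) / 3, (n + 2) / 3, hhX, hhX, ?_, by omega, by omega, by omega, by omega⟩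
    rw [hempty, zero_mul]
end

section
/- For every log-product expression B of degree n and every real γ ≥ 1, there exist m ≥ log₂(1 + n/γ) and homogeneous expressions P_1,...,P_m, S_1,...,S_m such that L(B) = L(P_1)·L(P_2)···L(P_m)·L(S_m)···L(S_1), with deg P_i + deg S_i ≥ γ for all i ∈ [m−1] and deg P_m + deg S_m ≤ γ. -/
namespace RE
variable {α : Type}

lemma lang_nonempty_s5 (B : RE α) : ∃ w, w ∈ B.lang := by
  induction B with
  | eps => exact ⟨[], rfl⟩
  | char a => exact ⟨[a], rfl⟩
  | union r s ih1 ih2 =>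
    obtain ⟨w, h⟩ := ih1
    exact ⟨w, (Language.mem_add _ _ _).2 (Or.inl h)⟩
  | cat r s ih1 ih2 =>
    obtain ⟨u, hu⟩ := ih1
    obtain ⟨v, hv⟩ := ih2
    exact ⟨u ++ v, Language.mem_mul.2 ⟨u, hu, v, hv, rfl⟩⟩

lemma Homog.eps' : (eps : RE α).Homog 0 := by
  intro w hw
  have : w = [] := hw
  simp [this]

lemma homog_cat {r s : RE α} {d e : ℕ} (hr : r.Homog d) (hs : s.Homog e) :
    (RE.cat r s).Homog (d + e) := by
  intro w hw
  obtain ⟨u, hu, v, hv, rfl⟩ := Language.mem_mul.1 hw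
  simp [hr u hu, hs v hv]

lemma homog_unique {B : RE α} {d e : ℕ} (hd : B.Homog d) (he : B.Homog e) : d = e := by
  obtain ⟨w, hw⟩ := lang_nonempty_s5 B
  rw [← hd w hw, he w hw]


theorem key (γ : ℝ) (hγ : 1 ≤ γ) {B : RE α} (hB : B.LogProd) :
    ∀ n : ℕ, B.Homog n → ∀ a : ℝ, 0 ≤ a → a < γ →
    ∃ L : List (RE α × RE α × ℕ × ℕ), L ≠ [] ∧
      (n : ℝ) + a ≤ γ * (2 ^ L.length - 1) ∧
      (∀ q ∈ L, q.1.Homog q.2.2.1 ∧ q.2.1.Homog q.2.2.2) ∧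
      B.lang = (L.map fun q => q.1.lang).prod *
        ((L.map fun q => q.2.1.lang).reverse.prod) ∧
      (∀ i, (h : i + 1 < L.length) →
        γ ≤ (if i = 0 then a else 0) +
          ((L[i]'(by omega)).2.2.1 + (L[i]'(by omega)).2.2.2 : ℕ)) ∧
      (∀ i, (h : i < L.length) → i + 1 = L.length →
        (((L[i]).2.2.1 + (L[i]).2.2.2 : ℕ) : ℝ) + (if i = 0 then a else 0) ≤ γ) := by
  induction hB with
  | char c =>
    intro n hn a ha0 haγ
    have hn1 : n = 1 := by
      have := hn [c] rfl
      simpa using this.symm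
    subst hn1
    by_cases hfit : (1 : ℝ) + a ≤ γ
    · refine ⟨[(RE.char c, RE.eps, 1, 0)], by simp, ?_, ?_, ?_, ?_, ?_⟩
      · norm_num
        linarith
      · rintro q hq
        simp only [List.mem_singleton] at hq
        subst hq
        exact ⟨fun w hw => by simpa using hw ▸ rfl, Homog.eps'⟩
      · simp [lang]
      · intro i h; simp at h
      · intro i h h1
        simp only [List.length_cons, List.length_nil] at h1
        obtain rfl : i = 0 := by omega
        simp only [if_pos rfl]
        norm_num
        linarith
    · refine ⟨[(RE.char c, RE.eps, 1, 0), (RE.eps, RE.eps, 0, 0)], by simp, ?_, ?_, ?_, ?_⟩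
      · norm_num
        push_cast
        nlinarith
      · rintro q hq
        simp only [List.mem_cons, List.mem_singleton, List.not_mem_nil, or_false] at hq
        rcases hq with rfl | rfl
        · exact ⟨fun w hw => by simpa using hw ▸ rfl, Homog.eps'⟩
        · exact ⟨Homog.eps', Homog.eps'⟩
      · simp [lang]
      · constructor
        · intro i h
          simp only [List.length_cons, List.length_nil] at h
          obtain rfl : i = 0 := by omega
          simp only [if_pos rfl]
          norm_num
          linarith
        · intro i h h1
          simp only [List.length_cons, List.length_nil] at h h1
          obtain rfl : i = 1 := by omega
          norm_num
          linarith
  | @catL B₁ B₂ d₁ d₂ h1 hh1 hh2 hle ih =>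
    intro n hn a ha0 haγ
    have hn' : n = d₁ + d₂ := homog_unique hn (homog_cat hh1 hh2)
    subst hn'
    have hd21 : (d₂ : ℝ) ≤ (d₁ : ℝ) := Nat.cast_le.2 hle
    by_cases hfit : ((d₁ + d₂ : ℕ) : ℝ) + a ≤ γ
    · refine ⟨[(RE.cat B₁ B₂, RE.eps, d₁ + d₂, 0)], by simp, ?_, ?_, ?_, ?_, ?_⟩
      · push_cast at hfit ⊢
        norm_num
        linarith
      · rintro q hq
        simp only [List.mem_singleton] at hq
        subst hq
        exact ⟨hn, Homog.eps'⟩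
      · simp [lang]
      · intro i h; simp at h
      · intro i h h1
        simp only [List.length_cons, List.length_nil] at h1
        obtain rfl : i = 0 := by omega
        simpa using hfit
    · by_cases hnew : γ ≤ a + (d₂ : ℝ)
      · obtain ⟨L, hne, hbd, hhom, hlang, hmid, hlast⟩ := ih d₁ hh1 0 le_rfl (by linarith)
        refine ⟨(RE.eps, B₂, 0, d₂) :: L, by simp, ?_, ?_, ?_, ?_, ?_⟩
        · have hx : ((2:ℝ)) ^ (((RE.eps, B₂, 0, d₂) :: L).length) = 2 * 2 ^ L.length := by
            simp [List.length_cons, pow_succ]; ring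
          rw [hx]
          push_cast [Nat.cast_add] at hbd ⊢
          nlinarith
        · intro q hq
          rcases List.mem_cons.1 hq with rfl | hq
          · exact ⟨Homog.eps', hh2⟩
          · exact hhom q hq
        · show lang B₁ * lang B₂ = _
          rw [hlang]
          simp [lang, List.reverse_cons, List.prod_append, mul_assoc]
        · intro i h
          match i with
          | 0 =>
            simp only [List.getElem_cons_zero, if_pos rfl]
            push_cast
            linarith
          | (j+1) =>
            simp only [List.getElem_cons_succ, List.length_cons] at h ⊢
            have := hmid j (by omega)
            simp only [Nat.add_eq_zero, and_false, if_neg (by omega : ¬ j + 1 = 0)] at this ⊢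
            rcases eq_or_ne j 0 with rfl | hj
            · simpa using this
            · simpa [if_neg hj] using this
        · intro i h h1
          simp only [List.length_cons] at h h1
          match i with
          | 0 =>
            exfalso
            have : L.length = 0 := by omega
            exact hne (List.length_eq_zero_iff.1 this)
          | (j+1) =>
            simp only [List.getElem_cons_succ, if_neg (by omega : ¬ j + 1 = 0)]
            have := hlast j (by omega) (by omega)
            rcases eq_or_ne j 0 with rfl | hj
            · simp at this ⊢; linarith
            · simp [hj] at this ⊢; linarith
      · have haccum : a + (d₂ : ℝ) < γ := lt_of_not_ge hnew
        obtain ⟨L, hne, hbd, hhom, hlang, hmid, hlast⟩ :=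
          ih d₁ hh1 (a + (d₂ : ℝ)) (by positivity) haccum
        obtain ⟨q, rest, rfl⟩ : ∃ q rest, L = q :: rest := by
          cases L with
          | nil => exact absurd rfl hne
          | cons q rest => exact ⟨q, rest, rfl⟩
        simp only [List.length_cons] at hbd hmid hlast
        refine ⟨(q.1, RE.cat q.2.1 B₂, q.2.2.1, q.2.2.2 + d₂) :: rest, by simp, ?_, ?_, ?_, ?_, ?_⟩
        · simp only [List.length_cons]
          push_cast at hbd ⊢
          linarith
        · intro p hp
          rcases List.mem_cons.1 hp with rfl | hp
          · exact ⟨(hhom q List.mem_cons_self).1,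
              homog_cat (hhom q List.mem_cons_self).2 hh2⟩
          · exact hhom p (List.mem_cons_of_mem _ hp)
        · show lang B₁ * lang B₂ = _
          rw [hlang]
          simp [lang, List.reverse_cons, List.prod_append, mul_assoc]
        · intro i h
          simp only [List.length_cons] at h ⊢
          match i with
          | 0 =>
            have := hmid 0 (by omega)
            simp only [List.getElem_cons_zero, if_pos rfl] at this ⊢
            push_cast at this ⊢
            linarith
          | (j+1) =>
            have := hmid (j+1) (by omega)
            simp only [List.getElem_cons_succ, if_neg (by omega : ¬ j + 1 = 0)] at this ⊢
            exact this
        · intro i h h1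
          simp only [List.length_cons] at h h1 ⊢
          match i with
          | 0 =>
            have := hlast 0 (by omega) (by omega)
            simp only [List.getElem_cons_zero, if_pos rfl] at this ⊢
            push_cast at this ⊢
            linarith
          | (j+1) =>
            have := hlast (j+1) (by omega) (by omega)
            simp only [List.getElem_cons_succ, if_neg (by omega : ¬ j + 1 = 0)] at this ⊢
            exact this
  | @catR B₁ B₂ d₁ d₂ h1 hh1 hh2 hle ih =>
    intro n hn a ha0 haγ
    have hn' : n = d₂ + d₁ := homog_unique hn (homog_cat hh2 hh1)
    subst hn'
    have hd21 : (d₂ : ℝ) ≤ (d₁ : ℝ) := Nat.cast_le.2 hle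
    by_cases hfit : ((d₂ + d₁ : ℕ) : ℝ) + a ≤ γ
    · refine ⟨[(RE.cat B₂ B₁, RE.eps, d₂ + d₁, 0)], by simp, ?_, ?_, ?_, ?_, ?_⟩
      · push_cast at hfit ⊢
        norm_num
        linarith
      · rintro q hq
        simp only [List.mem_singleton] at hq
        subst hq
        exact ⟨hn, Homog.eps'⟩
      · simp [lang]
      · intro i h; simp at h
      · intro i h h1
        simp only [List.length_cons, List.length_nil] at h1
        obtain rfl : i = 0 := by omega
        simpa using hfit
    · by_cases hnew : γ ≤ a + (d₂ : ℝ)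
      · obtain ⟨L, hne, hbd, hhom, hlang, hmid, hlast⟩ := ih d₁ hh1 0 le_rfl (by linarith)
        refine ⟨(B₂, RE.eps, d₂, 0) :: L, by simp, ?_, ?_, ?_, ?_, ?_⟩
        · have hx : ((2:ℝ)) ^ (((B₂, RE.eps, d₂, 0) :: L).length) = 2 * 2 ^ L.length := by
            simp [List.length_cons, pow_succ]; ring
          rw [hx]
          push_cast [Nat.cast_add] at hbd ⊢
          nlinarith
        · intro q hq
          rcases List.mem_cons.1 hq with rfl | hq
          · exact ⟨hh2, Homog.eps'⟩
          · exact hhom q hq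
        · show lang B₂ * lang B₁ = _
          rw [hlang]
          simp [lang, List.reverse_cons, List.prod_append, mul_assoc]
        · intro i h
          match i with
          | 0 =>
            simp only [List.getElem_cons_zero, if_pos rfl]
            push_cast
            linarith
          | (j+1) =>
            simp only [List.getElem_cons_succ, List.length_cons] at h ⊢
            have := hmid j (by omega)
            simp only [Nat.add_eq_zero, and_false, if_neg (by omega : ¬ j + 1 = 0)] at this ⊢
            rcases eq_or_ne j 0 with rfl | hj
            · simpa using this
            · simpa [if_neg hj] using this
        · intro i h h1
          simp only [List.length_cons] at h h1
          match i with
          | 0 =>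
            exfalso
            have : L.length = 0 := by omega
            exact hne (List.length_eq_zero_iff.1 this)
          | (j+1) =>
            simp only [List.getElem_cons_succ, if_neg (by omega : ¬ j + 1 = 0)]
            have := hlast j (by omega) (by omega)
            rcases eq_or_ne j 0 with rfl | hj
            · simp at this ⊢; linarith
            · simp [hj] at this ⊢; linarith
      · have haccum : a + (d₂ : ℝ) < γ := lt_of_not_ge hnew
        obtain ⟨L, hne, hbd, hhom, hlang, hmid, hlast⟩ :=
          ih d₁ hh1 (a + (d₂ : ℝ)) (by positivity) haccum
        obtain ⟨q, rest, rfl⟩ : ∃ q rest, L = q :: rest := by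
          cases L with
          | nil => exact absurd rfl hne
          | cons q rest => exact ⟨q, rest, rfl⟩
        simp only [List.length_cons] at hbd hmid hlast
        refine ⟨(RE.cat B₂ q.1, q.2.1, d₂ + q.2.2.1, q.2.2.2) :: rest, by simp, ?_, ?_, ?_, ?_, ?_⟩
        · simp only [List.length_cons]
          push_cast at hbd ⊢
          linarith
        · intro p hp
          rcases List.mem_cons.1 hp with rfl | hp
          · exact ⟨homog_cat hh2 (hhom q List.mem_cons_self).1,
              (hhom q List.mem_cons_self).2⟩
          · exact hhom p (List.mem_cons_of_mem _ hp)
        · show lang B₂ * lang B₁ = _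
          rw [hlang]
          simp [lang, List.reverse_cons, List.prod_append, mul_assoc]
        · intro i h
          simp only [List.length_cons] at h ⊢
          match i with
          | 0 =>
            have := hmid 0 (by omega)
            simp only [List.getElem_cons_zero, if_pos rfl] at this ⊢
            push_cast at this ⊢
            linarith
          | (j+1) =>
            have := hmid (j+1) (by omega)
            simp only [List.getElem_cons_succ, if_neg (by omega : ¬ j + 1 = 0)] at this ⊢
            exact this
        · intro i h h1
          simp only [List.length_cons] at h h1 ⊢
          match i with
          | 0 =>
            have := hlast 0 (by omega) (by omega)
            simp only [List.getElem_cons_zero, if_pos rfl] at this ⊢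
            push_cast at this ⊢
            linarith
          | (j+1) =>
            have := hlast (j+1) (by omega) (by omega)
            simp only [List.getElem_cons_succ, if_neg (by omega : ¬ j + 1 = 0)] at this ⊢
            exact this

end RE

/-- The `γ`-factorization: for every log-product expression `B` of degree `n`
and every real `γ ≥ 1` there exist `m ≥ log₂(1 + n/γ)` and homogeneous
expressions `P₁, …, P_m, S₁, …, S_m` with
`L(B) = L(P₁)·L(P₂)⋯L(P_m)·L(S_m)⋯L(S₁)`, where
`deg P_i + deg S_i ≥ γ` for all `i ∈ [m−1]` and `deg P_m + deg S_m ≤ γ`. -/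
theorem logProd_gamma_factorization {α : Type} (B : RE α) (n : ℕ)
    (hB : RE.LogProd B) (hhom : B.Homog n) (γ : ℝ) (hγ : 1 ≤ γ) :
    ∃ (m : ℕ) (P S : Fin m → RE α) (dP dS : Fin m → ℕ),
      Real.logb 2 (1 + (n : ℝ) / γ) ≤ (m : ℝ) ∧
      (∀ i, (P i).Homog (dP i)) ∧ (∀ i, (S i).Homog (dS i)) ∧
      B.lang = (List.ofFn fun i => (P i).lang).prod *
        ((List.ofFn fun i => (S i).lang).reverse.prod) ∧
      (∀ i : Fin m, (i : ℕ) + 1 < m → γ ≤ ((dP i + dS i : ℕ) : ℝ)) ∧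
      (∀ i : Fin m, (i : ℕ) + 1 = m → ((dP i + dS i : ℕ) : ℝ) ≤ γ) := by
  have hγ0 : (0:ℝ) < γ := by linarith
  obtain ⟨L, hne, hbd, hhomL, hlang, hmid, hlast⟩ :=
    RE.key γ hγ hB n hhom 0 le_rfl (by linarith)
  refine ⟨L.length, fun i => (L.get i).1, fun i => (L.get i).2.1,
    fun i => (L.get i).2.2.1, fun i => (L.get i).2.2.2, ?_, ?_, ?_, ?_, ?_, ?_⟩
  · have hx : (0:ℝ) < 1 + (n:ℝ)/γ := by positivity
    rw [Real.logb_le_iff_le_rpow (by norm_num) hx, Real.rpow_natCast]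
    have h2 : (n:ℝ) ≤ γ * (2 ^ L.length - 1) := by linarith
    have h3 : (n:ℝ)/γ ≤ 2 ^ L.length - 1 := by
      rw [div_le_iff₀ hγ0]
      nlinarith
    linarith
  · exact fun i => (hhomL _ (L.get_mem i)).1
  · exact fun i => (hhomL _ (L.get_mem i)).2
  · have hP : (List.ofFn fun i : Fin L.length => (L.get i).1.lang) =
        L.map fun q => q.1.lang := by
      apply List.ext_getElem <;> simp
    have hS : (List.ofFn fun i : Fin L.length => (L.get i).2.1.lang) =
        L.map fun q => q.2.1.lang := by
      apply List.ext_getElem <;> simp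
    rw [hP, hS, hlang]
  · intro i hi
    have := hmid i.val hi
    rcases eq_or_ne i.val 0 with h0 | h0
    · simpa [h0, List.get_eq_getElem] using this
    · simpa [h0, List.get_eq_getElem] using this
  · intro i hi
    have := hlast i.val i.isLt hi
    rcases eq_or_ne i.val 0 with h0 | h0
    · simpa [h0, List.get_eq_getElem] using this
    · simpa [h0, List.get_eq_getElem] using this
end

section
/- Every finite language over a k-letter alphabet accepted by a layered NFA of width ω, length n, and f final states can be described by a regular expression of length O(f·k·n·ω·ω^{log₂ n}). -/
set_option linter.unusedSectionVars false


section
variable {α σ : Type} (M : NFA α σ)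

lemma my_mem_evalFrom_iff (w : List α) : ∀ (S : Set σ) (q : σ),
    q ∈ M.evalFrom S w ↔ ∃ p ∈ S, q ∈ M.evalFrom {p} w := by
  induction w with
  | nil => intro S q; simp [NFA.evalFrom]
  | cons a w ih =>
    intro S q
    have h1 : M.evalFrom S (a :: w) = M.evalFrom (M.stepSet S a) w := rfl
    rw [h1, ih]
    constructor
    · rintro ⟨r, hr, hq⟩
      rw [NFA.mem_stepSet] at hr
      obtain ⟨p, hp, hr⟩ := hr
      refine ⟨p, hp, ?_⟩
      have h2 : M.evalFrom {p} (a :: w) = M.evalFrom (M.stepSet {p} a) w := rfl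
      rw [h2, ih]
      exact ⟨r, by rw [NFA.mem_stepSet]; exact ⟨p, rfl, hr⟩, hq⟩
    · rintro ⟨p, hp, hq⟩
      have h2 : M.evalFrom {p} (a :: w) = M.evalFrom (M.stepSet {p} a) w := rfl
      rw [h2, ih] at hq
      obtain ⟨r, hr, hq⟩ := hq
      rw [NFA.mem_stepSet] at hr
      obtain ⟨p', hp', hr⟩ := hr
      cases hp'
      exact ⟨r, by rw [NFA.mem_stepSet]; exact ⟨p, hp, hr⟩, hq⟩

lemma my_evalFrom_append (S : Set σ) (u v : List α) :
    M.evalFrom S (u ++ v) = M.evalFrom (M.evalFrom S u) v :=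
  List.foldl_append

lemma my_layer_eval (layer : σ → ℕ)
    (hstep : ∀ q a q', q' ∈ M.step q a → layer q' = layer q + 1) :
    ∀ (w : List α) (p q : σ), q ∈ M.evalFrom {p} w → layer q = layer p + w.length := by
  intro w
  induction w with
  | nil => intro p q hq; simp [NFA.evalFrom] at hq; simp [hq]
  | cons a w ih =>
    intro p q hq
    have h2 : M.evalFrom {p} (a :: w) = M.evalFrom (M.stepSet {p} a) w := rfl
    rw [h2, my_mem_evalFrom_iff] at hq
    obtain ⟨r, hr, hq⟩ := hq
    rw [NFA.mem_stepSet] at hr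
    obtain ⟨p', hp', hr⟩ := hr
    cases hp'
    rw [ih r q hq, hstep p a r hr]
    simp; omega

end

lemma my_union_list {α : Type} (l : List (RE α)) (hne : l ≠ []) :
    ∃ r : RE α, r.lang = {w | ∃ s ∈ l, w ∈ s.lang} ∧ r.size + 1 ≤ (l.map RE.size).sum + l.length := by
  induction l with
  | nil => exact absurd rfl hne
  | cons a l ih =>
    rcases eq_or_ne l [] with rfl | hl
    · refine ⟨a, ?_, by simp⟩
      ext w; simp; exact Iff.rfl
    · obtain ⟨r, hr, hs⟩ := ih hl
      refine ⟨RE.union a r, ?_, ?_⟩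
      · ext w
        show w ∈ a.lang + r.lang ↔ _
        rw [Language.mem_add, hr]
        simp only [Set.mem_setOf_eq, List.mem_cons]
        constructor
        · rintro (h | ⟨s, hs1, hs2⟩)
          exacts [⟨a, Or.inl rfl, h⟩, ⟨s, Or.inr hs1, hs2⟩]
        · rintro ⟨s, (rfl | hs1), hs2⟩
          exacts [Or.inl hs2, Or.inr ⟨s, hs1, hs2⟩]
      · simp only [RE.size, List.map_cons, List.sum_cons, List.length_cons]
        omega

section
variable {k : ℕ} {σ : Type} [Fintype σ] (M : NFA (Fin k) σ)

lemma my_build_one (S : Set σ) (q : σ) :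
    ({w : List (Fin k) | w.length = 1 ∧ q ∈ M.evalFrom S w}).Nonempty →
    ∃ r : RE (Fin k), r.lang = {w | w.length = 1 ∧ q ∈ M.evalFrom S w} ∧
      r.size + 1 ≤ 2 * k := by
  classical
  intro hne
  set A : Finset (Fin k) := Finset.univ.filter (fun a => q ∈ M.stepSet S a) with hA
  have hmemA : ∀ a, a ∈ A ↔ q ∈ M.stepSet S a := by
    intro a; simp [hA]
  set l : List (RE (Fin k)) := A.toList.map RE.char with hl
  have hlne : l ≠ [] := by
    obtain ⟨w, hw1, hw2⟩ := hne
    obtain ⟨a, rfl⟩ : ∃ a, w = [a] := by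
      match w, hw1 with
      | [a], _ => exact ⟨a, rfl⟩
    have ha : a ∈ A := (hmemA a).2 (by rwa [M.evalFrom_singleton] at hw2)
    intro h
    rw [hl, List.map_eq_nil_iff, Finset.toList_eq_nil] at h
    rw [h] at ha
    exact absurd ha (Finset.notMem_empty a)
  obtain ⟨r, hr1, hr2⟩ := my_union_list l hlne
  refine ⟨r, ?_, ?_⟩
  · rw [hr1]
    ext w
    simp only [Set.mem_setOf_eq, hl, List.mem_map, Finset.mem_toList]
    constructor
    · rintro ⟨s, ⟨a, ha, rfl⟩, hw⟩
      have : w = [a] := hw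
      subst this
      exact ⟨rfl, by rw [M.evalFrom_singleton]; exact (hmemA a).1 ha⟩
    · rintro ⟨hw1, hw2⟩
      obtain ⟨a, rfl⟩ : ∃ a, w = [a] := by
        match w, hw1 with
        | [a], _ => exact ⟨a, rfl⟩
      rw [M.evalFrom_singleton] at hw2
      exact ⟨RE.char a, ⟨a, (hmemA a).2 hw2, rfl⟩, rfl⟩
  · have h1 : (l.map RE.size).sum = A.card := by
      rw [hl, List.map_map]
      have he : (RE.size ∘ RE.char : Fin k → ℕ) = fun _ => 1 := rfl
      rw [he]
      simp
    have h2 : l.length = A.card := by simp [hl]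
    have h3 : A.card ≤ k := by
      calc A.card ≤ Fintype.card (Fin k) := Finset.card_le_univ A
      _ = k := Fintype.card_fin k
    omega

lemma my_build (ω : ℕ) (layer : σ → ℕ)
    (hstep : ∀ q a q', q' ∈ M.step q a → layer q' = layer q + 1)
    (hw : ∀ j, Set.ncard {q | layer q = j} ≤ ω) (hω : 1 ≤ ω) :
    ∀ t m, 1 ≤ m → m ≤ 2 ^ t → ∀ (S : Set σ) (q : σ),
      ({w : List (Fin k) | w.length = m ∧ q ∈ M.evalFrom S w}).Nonempty →
      ∃ r : RE (Fin k), r.lang = {w | w.length = m ∧ q ∈ M.evalFrom S w} ∧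
        r.size + 1 ≤ (2 * k + 2) * (2 * ω) ^ t := by
  classical
  intro t
  induction t with
  | zero =>
    intro m hm1 hm2 S q hne
    have hm : m = 1 := by omega
    subst hm
    obtain ⟨r, hr1, hr2⟩ := my_build_one M S q hne
    exact ⟨r, hr1, by simpa using by omega⟩
  | succ t ih =>
    intro m hm1 hm2 S q hne
    have hpow1 : 1 ≤ (2 * ω) ^ (t + 1) := Nat.one_le_pow _ _ (by omega)
    rcases eq_or_lt_of_le hm1 with hm | hm
    · subst hm
      obtain ⟨r, hr1, hr2⟩ := my_build_one M S q hne
      refine ⟨r, hr1, ?_⟩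
      have : 2 * k ≤ (2 * k + 2) * (2 * ω) ^ (t + 1) := by
        calc 2 * k ≤ (2 * k + 2) * 1 := by omega
        _ ≤ (2 * k + 2) * (2 * ω) ^ (t + 1) := by
            exact Nat.mul_le_mul_left _ hpow1
      omega
    · -- m ≥ 2
      set m1 := (m + 1) / 2 with hm1def
      set m2 := m - m1 with hm2def
      have hpow : (2:ℕ) ^ (t + 1) = 2 * 2 ^ t := by ring
      have hsplit : m1 + m2 = m := by omega
      have hm11 : 1 ≤ m1 := by omega
      have hm21 : 1 ≤ m2 := by omega
      have hm1t : m1 ≤ 2 ^ t := by omega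
      have hm2t : m2 ≤ 2 ^ t := by omega
      set P := (2 * k + 2) * (2 * ω) ^ t with hP
      set F : Finset σ := Finset.univ.filter (fun r =>
          ({w : List (Fin k) | w.length = m1 ∧ r ∈ M.evalFrom S w}).Nonempty ∧
          ({w : List (Fin k) | w.length = m2 ∧ q ∈ M.evalFrom {r} w}).Nonempty) with hF
      have hmemF : ∀ r, r ∈ F ↔
          ({w : List (Fin k) | w.length = m1 ∧ r ∈ M.evalFrom S w}).Nonempty ∧
          ({w : List (Fin k) | w.length = m2 ∧ q ∈ M.evalFrom {r} w}).Nonempty := by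
        intro r; simp [hF]
      have hAex : ∀ r : {x // x ∈ F}, ∃ A : RE (Fin k),
          A.lang = {w : List (Fin k) | w.length = m1 ∧ r.1 ∈ M.evalFrom S w} ∧ A.size + 1 ≤ P :=
        fun r => ih m1 hm11 hm1t S r.1 ((hmemF r.1).1 r.2).1
      have hBex : ∀ r : {x // x ∈ F}, ∃ B : RE (Fin k),
          B.lang = {w : List (Fin k) | w.length = m2 ∧ q ∈ M.evalFrom {r.1} w} ∧ B.size + 1 ≤ P :=
        fun r => ih m2 hm21 hm2t {r.1} q ((hmemF r.1).1 r.2).2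
      choose A hA1 hA2 using hAex
      choose B hB1 hB2 using hBex
      set l : List (RE (Fin k)) := F.attach.toList.map (fun r => RE.cat (A r) (B r)) with hl
      -- a helper: membership in T implies details
      have hsplitmem : ∀ w : List (Fin k), w.length = m ∧ q ∈ M.evalFrom S w →
          ∃ r : {x // x ∈ F}, (w.take m1) ∈ (A r).lang ∧ (w.drop m1) ∈ (B r).lang := by
        rintro w ⟨hlen, hq⟩
        have htake : (w.take m1).length = m1 := by
          rw [List.length_take]; omega
        have hdrop : (w.drop m1).length = m2 := by
          rw [List.length_drop]; omega
        have happ : w.take m1 ++ w.drop m1 = w := List.take_append_drop _ _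
        rw [← happ, my_evalFrom_append, my_mem_evalFrom_iff] at hq
        obtain ⟨r, hr, hq⟩ := hq
        have hrF : r ∈ F := (hmemF r).2
          ⟨⟨w.take m1, htake, hr⟩, ⟨w.drop m1, hdrop, hq⟩⟩
        refine ⟨⟨r, hrF⟩, ?_, ?_⟩
        · rw [hA1]; exact ⟨htake, hr⟩
        · rw [hB1]; exact ⟨hdrop, hq⟩
      have hlne : l ≠ [] := by
        obtain ⟨w, hwmem⟩ := hne
        obtain ⟨rr, -, -⟩ := hsplitmem w hwmem
        intro h
        rw [hl, List.map_eq_nil_iff, Finset.toList_eq_nil, Finset.attach_eq_empty_iff] at h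
        have hFne : F.Nonempty := ⟨rr.1, rr.2⟩
        rw [h] at hFne
        exact absurd hFne (by simp)
      obtain ⟨r, hr1, hr2⟩ := my_union_list l hlne
      refine ⟨r, ?_, ?_⟩
      · rw [hr1]
        ext w
        simp only [Set.mem_setOf_eq, hl, List.mem_map, Finset.mem_toList, Finset.mem_attach,
          true_and]
        constructor
        · rintro ⟨s, ⟨rr, rfl⟩, hwmem⟩
          have : w ∈ (A rr).lang * (B rr).lang := hwmem
          rw [Language.mem_mul] at this
          obtain ⟨u, hu, v, hv, rfl⟩ := this
          rw [hA1] at hu; rw [hB1] at hv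
          obtain ⟨hu1, hu2⟩ := hu
          obtain ⟨hv1, hv2⟩ := hv
          constructor
          · rw [List.length_append]; omega
          · rw [my_evalFrom_append, my_mem_evalFrom_iff]
            exact ⟨rr.1, hu2, hv2⟩
        · intro hwmem
          obtain ⟨rr, hu, hv⟩ := hsplitmem w hwmem
          refine ⟨RE.cat (A rr) (B rr), ⟨rr, rfl⟩, ?_⟩
          show w ∈ (A rr).lang * (B rr).lang
          rw [Language.mem_mul]
          exact ⟨_, hu, _, hv, List.take_append_drop _ _⟩
      · -- size bound
        have hcard : F.card ≤ ω := by
          have hsub : (↑F : Set σ) ⊆ {x | layer x = layer q - m2} := by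
            intro x hx
            obtain ⟨-, ⟨v, hv1, hv2⟩⟩ := (hmemF x).1 hx
            have := my_layer_eval M layer hstep v x q hv2
            simp only [Set.mem_setOf_eq]
            omega
          calc F.card = (↑F : Set σ).ncard := (Set.ncard_coe_finset F).symm
          _ ≤ Set.ncard {x | layer x = layer q - m2} :=
              Set.ncard_le_ncard hsub (Set.toFinite _)
          _ ≤ ω := hw _
        have hlen : l.length = F.card := by simp [hl]
        have hsum : (l.map RE.size).sum ≤ l.length * (2 * P - 1) := by
          have hbnd : ∀ x ∈ l.map RE.size, x ≤ 2 * P - 1 := by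
            intro x hx
            simp only [hl, List.map_map, List.mem_map] at hx
            obtain ⟨rr, -, rfl⟩ := hx
            have h1 := hA2 rr
            have h2 := hB2 rr
            show ((A rr).size + (B rr).size + 1) ≤ 2 * P - 1
            omega
          calc (l.map RE.size).sum ≤ (l.map RE.size).length • (2 * P - 1) :=
              List.sum_le_card_nsmul _ _ hbnd
          _ = l.length * (2 * P - 1) := by simp [smul_eq_mul]
        have hP1 : 1 ≤ P := by
          have := Nat.one_le_pow t (2 * ω) (by omega)
          calc 1 ≤ 1 * 1 := by omega
          _ ≤ (2 * k + 2) * (2 * ω) ^ t := Nat.mul_le_mul (by omega) this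
        have hfin : (2 * k + 2) * (2 * ω) ^ (t + 1) = 2 * ω * P := by
          rw [hP]; ring
        rw [hfin]
        rw [hlen] at hsum hr2
        have h2P : 2 * P - 1 + 1 = 2 * P := by omega
        have heq : F.card * (2 * P) = F.card * (2 * P - 1) + F.card := by
          rw [← h2P]; exact Nat.mul_succ _ _
        have hle : F.card * (2 * P) ≤ ω * (2 * P) := Nat.mul_le_mul_right _ hcard
        have heq2 : ω * (2 * P) = 2 * ω * P := by ring
        omega

end

/-- Conversion of layered NFAs: every (nonempty) finite language over a
`k`-letter alphabet accepted by a layered NFA of width `ω`, length `n` and `f`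
final states can be described by a regular expression of length
`O(f·k·n·ω·ω^{log₂ n})`. -/
theorem layered_nfa_to_re :
    ∃ C : ℝ, 0 < C ∧
      ∀ (k n ω f : ℕ) (σ : Type) (_ : Fintype σ) (M : NFA (Fin k) σ)
        (layer : σ → ℕ),
        1 ≤ k → 1 ≤ n →
        (∀ q a q', q' ∈ M.step q a → layer q' = layer q + 1) →
        (∀ q ∈ M.start, layer q = 0) →
        (∀ j, Set.ncard {q | layer q = j} ≤ ω) →
        (∀ q ∈ M.accept, layer q ≤ n) →
        Set.ncard M.accept ≤ f →
        (∃ w, w ∈ M.accepts) →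
        ∃ r : RE (Fin k), r.lang = M.accepts ∧
          (r.size : ℝ) ≤ C * f * k * n * ω * (ω : ℝ) ^ Real.logb 2 (n : ℝ) := by
  classical
  refine ⟨8, by norm_num, ?_⟩
  intro k n ω f σ _ M layer hk hn hstep hstart hwidth hacc hf hne
  obtain ⟨w0, hw0⟩ := hne
  rw [NFA.mem_accepts] at hw0
  obtain ⟨q0, hq0acc, hq0⟩ := hw0
  obtain ⟨p0, hp0, -⟩ := (my_mem_evalFrom_iff M w0 M.start q0).1 hq0
  have hω : 1 ≤ ω := by
    have h1 : (0 : ℕ) < Set.ncard {q : σ | layer q = 0} :=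
      (Set.ncard_pos (Set.toFinite _)).2 ⟨p0, hstart p0 hp0⟩
    have := hwidth 0
    omega
  have hlenq : ∀ (w : List (Fin k)) (q : σ), q ∈ M.evalFrom M.start w →
      w.length = layer q := by
    intro w q hq
    obtain ⟨p, hp, hq⟩ := (my_mem_evalFrom_iff M w M.start q).1 hq
    have := my_layer_eval M layer hstep w p q hq
    rw [this, hstart p hp]
    omega
  set t := Nat.clog 2 n with ht
  have hn2t : n ≤ 2 ^ t := Nat.le_pow_clog (by norm_num) n
  set P := (2 * k + 2) * (2 * ω) ^ t with hP
  have hpowt : 1 ≤ (2 * ω) ^ t := Nat.one_le_pow _ _ (by omega)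
  set Lq : σ → Language (Fin k) :=
    fun q => {w | w.length = layer q ∧ q ∈ M.evalFrom M.start w} with hLq
  set T : Finset σ := Finset.univ.filter (fun q => q ∈ M.accept ∧ (Lq q).Nonempty) with hT
  have hmemT : ∀ q, q ∈ T ↔ q ∈ M.accept ∧ (Lq q).Nonempty := by
    intro q; simp [hT]
  have hgex : ∀ q : {x // x ∈ T}, ∃ r : RE (Fin k),
      r.lang = Lq q.1 ∧ r.size + 1 ≤ P := by
    intro q
    have hqne : (Lq q.1).Nonempty := ((hmemT q.1).1 q.2).2
    rcases Nat.eq_zero_or_pos (layer q.1) with h0 | h1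
    · refine ⟨RE.eps, ?_, ?_⟩
      · have hqstart : q.1 ∈ M.start := by
          obtain ⟨w, hw1, hw2⟩ := hqne
          rw [h0] at hw1
          rw [List.length_eq_zero_iff.mp hw1] at hw2
          exact hw2
        ext w
        show w ∈ (1 : Language (Fin k)) ↔ _
        rw [Language.mem_one]
        constructor
        · rintro rfl
          exact ⟨by simp [h0], hqstart⟩
        · rintro ⟨hw1, -⟩
          rw [h0] at hw1
          exact List.length_eq_zero_iff.mp hw1
      · show 1 + 1 ≤ P
        calc (2:ℕ) ≤ (2 * k + 2) * 1 := by omega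
        _ ≤ P := Nat.mul_le_mul_left _ hpowt
    · have hql : layer q.1 ≤ n := hacc q.1 ((hmemT q.1).1 q.2).1
      exact my_build M ω layer hstep hwidth hω t (layer q.1) h1 (le_trans hql hn2t)
        M.start q.1 hqne
  choose g hg1 hg2 using hgex
  set l : List (RE (Fin k)) := T.attach.toList.map g with hl
  have hq0T : q0 ∈ T := by
    rw [hmemT]
    exact ⟨hq0acc, ⟨w0, hlenq w0 q0 hq0, hq0⟩⟩
  have hlne : l ≠ [] := by
    intro h
    rw [hl, List.map_eq_nil_iff, Finset.toList_eq_nil, Finset.attach_eq_empty_iff] at h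
    rw [h] at hq0T
    exact absurd hq0T (Finset.notMem_empty _)
  obtain ⟨r, hr1, hr2⟩ := my_union_list l hlne
  refine ⟨r, ?_, ?_⟩
  · rw [hr1]
    ext w
    simp only [Set.mem_setOf_eq, hl, List.mem_map, Finset.mem_toList, Finset.mem_attach,
      true_and]
    constructor
    · rintro ⟨s, ⟨qq, rfl⟩, hwmem⟩
      rw [hg1] at hwmem
      rw [NFA.mem_accepts]
      exact ⟨qq.1, ((hmemT qq.1).1 qq.2).1, hwmem.2⟩
    · intro hwa
      rw [NFA.mem_accepts] at hwa
      obtain ⟨q, hqacc, hqe⟩ := hwa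
      have hwq : w ∈ Lq q := ⟨hlenq w q hqe, hqe⟩
      have hqT : q ∈ T := (hmemT q).2 ⟨hqacc, ⟨w, hwq⟩⟩
      exact ⟨g ⟨q, hqT⟩, ⟨⟨q, hqT⟩, rfl⟩, by rw [hg1]; exact hwq⟩
  · -- size bound
    have hcard : T.card ≤ f := by
      have hsub : (↑T : Set σ) ⊆ M.accept := by
        intro x hx
        exact ((hmemT x).1 hx).1
      calc T.card = (↑T : Set σ).ncard := (Set.ncard_coe_finset T).symm
      _ ≤ Set.ncard M.accept := Set.ncard_le_ncard hsub (Set.toFinite _)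
      _ ≤ f := hf
    have hlen : l.length = T.card := by simp [hl]
    have hP1 : 1 ≤ P := by
      calc (1:ℕ) ≤ (2 * k + 2) * 1 := by omega
      _ ≤ P := Nat.mul_le_mul_left _ hpowt
    have hsum : (l.map RE.size).sum ≤ T.card * (P - 1) := by
      have hbnd : ∀ x ∈ l.map RE.size, x ≤ P - 1 := by
        intro x hx
        simp only [hl, List.map_map, List.mem_map] at hx
        obtain ⟨qq, -, rfl⟩ := hx
        have := hg2 qq
        show (g qq).size ≤ P - 1
        omega
      calc (l.map RE.size).sum ≤ (l.map RE.size).length • (P - 1) :=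
          List.sum_le_card_nsmul _ _ hbnd
      _ = T.card * (P - 1) := by simp [smul_eq_mul, hlen]
    rw [hlen] at hr2
    have hPm : P - 1 + 1 = P := by omega
    have heq : T.card * P = T.card * (P - 1) + T.card := by
      rw [← hPm]; exact Nat.mul_succ _ _
    have hfP : T.card * P ≤ f * P := Nat.mul_le_mul_right _ hcard
    have hnat : r.size ≤ f * P := by omega
    -- real estimates
    have hf1 : 1 ≤ f := by
      have h1 : (0 : ℕ) < Set.ncard M.accept :=
        (Set.ncard_pos (Set.toFinite _)).2 ⟨q0, hq0acc⟩
      omega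
    have h2t : (2:ℕ) ^ t ≤ 2 * n := by
      rcases Nat.lt_or_ge n 2 with h2 | h2
      · have hn1 : n = 1 := by omega
        subst hn1
        rw [ht, Nat.clog_one_right]
        norm_num
      · have h3 : (2:ℕ) ^ (t - 1) < n := by
          have h := Nat.pow_pred_clog_lt_self (b := 2) (by norm_num) h2
          simpa [ht, Nat.pred_eq_sub_one] using h
        have h4 : 0 < t := Nat.clog_pos (by norm_num) h2
        have h5 : t - 1 + 1 = t := by omega
        have h6 : (2:ℕ) ^ t = 2 * 2 ^ (t - 1) := by
          calc (2:ℕ) ^ t = 2 ^ (t - 1 + 1) := by rw [h5]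
          _ = 2 ^ (t - 1) * 2 := pow_succ 2 (t - 1)
          _ = 2 * 2 ^ (t - 1) := by ring
        omega
    have hωR : (1:ℝ) ≤ (ω:ℝ) := by exact_mod_cast hω
    have hωt : ((ω:ℝ)) ^ t ≤ (ω:ℝ) * (ω:ℝ) ^ Real.logb 2 (n:ℝ) := by
      have hlogb0 : 0 ≤ Real.logb 2 (n:ℝ) := by
        apply Real.logb_nonneg (by norm_num)
        exact_mod_cast hn
      have hte : ((t:ℕ):ℝ) ≤ Real.logb 2 (n:ℝ) + 1 := by
        rcases Nat.lt_or_ge n 2 with h2 | h2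
        · have hn1 : n = 1 := by omega
          subst hn1
          rw [ht, Nat.clog_one_right]
          push_cast
          simp [Real.logb_one]
        · have h3 : (2:ℕ) ^ (t - 1) < n := by
            have h := Nat.pow_pred_clog_lt_self (b := 2) (by norm_num) h2
            simpa [ht, Nat.pred_eq_sub_one] using h
          have h4 : 0 < t := Nat.clog_pos (by norm_num) h2
          have h5 : ((2:ℝ)) ^ ((t - 1 : ℕ):ℝ) < (n:ℝ) := by
            rw [Real.rpow_natCast]
            exact_mod_cast h3
          have h6 : ((t - 1 : ℕ):ℝ) < Real.logb 2 (n:ℝ) := by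
            rw [Real.lt_logb_iff_rpow_lt (by norm_num) (by positivity)]
            exact h5
          have h7 : ((t:ℕ):ℝ) = ((t-1:ℕ):ℝ) + 1 := by
            have : t - 1 + 1 = t := by omega
            exact_mod_cast (by omega : t = (t-1) + 1)
          linarith
      calc ((ω:ℝ)) ^ t = (ω:ℝ) ^ ((t:ℕ):ℝ) := (Real.rpow_natCast _ _).symm
      _ ≤ (ω:ℝ) ^ (Real.logb 2 (n:ℝ) + 1) := Real.rpow_le_rpow_of_exponent_le hωR hte
      _ = (ω:ℝ) ^ Real.logb 2 (n:ℝ) * (ω:ℝ) ^ (1:ℝ) := by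
          rw [← Real.rpow_add (by linarith)]
      _ = (ω:ℝ) * (ω:ℝ) ^ Real.logb 2 (n:ℝ) := by
          rw [Real.rpow_one]; ring
    have hkR : (1:ℝ) ≤ (k:ℝ) := by exact_mod_cast hk
    have h2tR : ((2:ℝ)) ^ t ≤ 2 * (n:ℝ) := by exact_mod_cast h2t
    have hsizeR : (r.size : ℝ) ≤ (f:ℝ) * (2 * k + 2) * (2:ℝ)^t * (ω:ℝ)^t := by
      have : (r.size : ℝ) ≤ ((f * P : ℕ) : ℝ) := by exact_mod_cast hnat
      calc (r.size : ℝ) ≤ ((f * P : ℕ) : ℝ) := this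
      _ = (f:ℝ) * (2 * k + 2) * (2:ℝ)^t * (ω:ℝ)^t := by
          rw [hP]; push_cast; ring
    calc (r.size : ℝ) ≤ (f:ℝ) * (2 * k + 2) * (2:ℝ)^t * (ω:ℝ)^t := hsizeR
    _ ≤ (f:ℝ) * (4 * k) * (2 * n) * ((ω:ℝ) * (ω:ℝ) ^ Real.logb 2 (n:ℝ)) := by
        have hfR : (0:ℝ) ≤ (f:ℝ) := by positivity
        gcongr
        · linarith
    _ = 8 * (f:ℝ) * (k:ℝ) * (n:ℝ) * (ω:ℝ) * (ω:ℝ) ^ Real.logb 2 (n:ℝ) := by ring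
end

section
/- Let p > 2 be odd and L = {w ∈ {0,1}^n : bin(w) ≡ 0 (mod p)}. Then every regular expression describing L has length at least Ω(n^{−1}·p^{log₂(n/log₂ p) − 2}). -/
/-- The value of a binary word, most significant bit leftmost; `binVal [] = 0`. -/
def binVal (w : List Bool) : ℕ :=
  w.foldl (fun acc b => 2 * acc + (if b then 1 else 0)) 0


lemma binVal_foldl (a : ℕ) (w : List Bool) :
    w.foldl (fun acc b => 2 * acc + (if b then 1 else 0)) a
      = a * 2 ^ w.length + binVal w := by
  induction w generalizing a with
  | nil => simp [binVal]
  | cons b t ih =>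
    simp only [List.foldl_cons, List.length_cons]
    rw [ih]
    have hb : binVal (b :: t) = (if b then 1 else 0) * 2 ^ t.length + binVal t := by
      show List.foldl _ _ (b :: t) = _
      rw [List.foldl_cons, ih]
      ring_nf
    rw [hb]
    ring

lemma binVal_append (u v : List Bool) :
    binVal (u ++ v) = binVal u * 2 ^ v.length + binVal v := by
  unfold binVal
  rw [List.foldl_append, binVal_foldl]
  rfl

lemma binVal_cons (b : Bool) (t : List Bool) :
    binVal (b :: t) = (if b then 1 else 0) * 2 ^ t.length + binVal t := by
  have := binVal_append [b] t
  simpa [binVal] using this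

lemma binVal_lt (w : List Bool) : binVal w < 2 ^ w.length := by
  induction w with
  | nil => simp [binVal]
  | cons b t ih =>
    rw [binVal_cons]
    have : (if b then 1 else 0) ≤ 1 := by cases b <;> simp
    have h1 : (if b then 1 else 0) * 2 ^ t.length ≤ 2 ^ t.length := by
      cases b <;> simp
    have := pow_succ 2 t.length
    simp only [List.length_cons]
    omega

lemma binVal_inj : ∀ {u v : List Bool}, u.length = v.length → binVal u = binVal v → u = v := by
  intro u
  induction u with
  | nil =>
    intro v h _
    cases v with
    | nil => rfl
    | cons b s => simp at h
  | cons a t ih =>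
    intro v h hv
    cases v with
    | nil => simp at h
    | cons b s =>
      simp only [List.length_cons, Nat.succ_inj] at h
      rw [binVal_cons, binVal_cons, h] at hv
      have h1 := binVal_lt t
      have h2 := binVal_lt s
      rw [h] at h1
      have hab : a = b := by cases a <;> cases b <;> simp_all <;> omega
      subst hab
      have : binVal t = binVal s := by cases a <;> simp at hv <;> omega
      rw [ih h this]

def toWord : ℕ → ℕ → List Bool
  | 0, _ => []
  | d+1, m => toWord d (m / 2) ++ [m % 2 == 1]

lemma length_toWord (d m : ℕ) : (toWord d m).length = d := by
  induction d generalizing m with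
  | zero => rfl
  | succ d ih => simp [toWord, ih]

lemma binVal_toWord {d m : ℕ} (h : m < 2 ^ d) : binVal (toWord d m) = m := by
  induction d generalizing m with
  | zero => interval_cases m; rfl
  | succ d ih =>
    have h2 : m / 2 < 2 ^ d := by omega
    rw [toWord, binVal_append, ih h2]
    have : binVal [m % 2 == 1] = m % 2 := by
      rcases Nat.mod_two_eq_zero_or_one m with h | h <;> simp [h, binVal]
    simp only [this, List.length_singleton, pow_one]
    omega


/-- The residue-class language. -/
def resCl (p d : ℕ) (c : ZMod p) : Set (List Bool) :=
  {w | w.length = d ∧ (binVal w : ZMod p) = c}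

lemma resCl_finite (p d : ℕ) (c : ZMod p) : (resCl p d c).Finite :=
  (List.finite_length_eq Bool d).subset fun _ h => h.1

lemma finite_of_len (d : ℕ) {S : Set (List Bool)} (h : ∀ w ∈ S, w.length = d) : S.Finite :=
  (List.finite_length_eq Bool d).subset fun _ hw => h _ hw

lemma resCl_card_le (p d : ℕ) (hp : 0 < p) (c : ZMod p) :
    (resCl p d c).ncard ≤ 2 ^ d / p + 1 := by
  classical
  have hinj : Set.InjOn binVal (resCl p d c) := fun u hu v hv h =>
    binVal_inj (hu.1.trans hv.1.symm) h
  rw [← Set.ncard_image_of_injOn hinj]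
  set F : Finset ℕ := (Finset.range (2 ^ d)).filter (fun m => (m : ZMod p) = c) with hF
  have hsub : binVal '' (resCl p d c) ⊆ ↑F := by
    rintro x ⟨w, hw, rfl⟩
    simp only [hF, Finset.coe_filter, Finset.mem_range, Set.mem_setOf_eq]
    exact ⟨by rw [← hw.1]; exact binVal_lt w, hw.2⟩
  calc (binVal '' (resCl p d c)).ncard ≤ (↑F : Set ℕ).ncard :=
        Set.ncard_le_ncard hsub (F.finite_toSet)
    _ = F.card := Set.ncard_coe_finset F
    _ ≤ (Finset.range (2 ^ d / p + 1)).card := by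
        apply Finset.card_le_card_of_injOn (fun m => m / p)
        · intro m hm
          simp only [hF, Finset.mem_coe, Finset.mem_filter, Finset.mem_range] at hm
          simp only [Finset.mem_coe, Finset.mem_range]
          have := Nat.div_le_div_right (c := p) (Nat.le_of_lt_succ (Nat.lt_succ_of_lt hm.1))
          omega
        · intro m1 h1 m2 h2 hdiv
          simp only [hF, Finset.coe_filter, Set.mem_setOf_eq, Finset.mem_range] at h1 h2
          have : (m1 : ZMod p) = (m2 : ZMod p) := h1.2.trans h2.2.symm
          rw [ZMod.natCast_eq_natCast_iff'] at this
          have hdiv' : m1 / p = m2 / p := hdiv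
          rw [← Nat.div_add_mod m1 p, ← Nat.div_add_mod m2 p, this, hdiv']
    _ = 2 ^ d / p + 1 := Finset.card_range _

lemma resCl_card_lower (p n : ℕ) (hp : 0 < p) :
    2 ^ n / p ≤ (resCl p n (0 : ZMod p)).ncard := by
  classical
  set T : Finset (List Bool) := (Finset.range (2 ^ n / p)).image (fun k => toWord n (k * p))
    with hT
  have hlt : ∀ k ∈ Finset.range (2 ^ n / p), k * p < 2 ^ n := by
    intro k hk
    simp only [Finset.mem_range] at hk
    have : (k + 1) * p ≤ (2 ^ n / p) * p := Nat.mul_le_mul_right p hk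
    have h2 := Nat.div_mul_le_self (2 ^ n) p
    nlinarith
  have hsub : ↑T ⊆ resCl p n (0 : ZMod p) := by
    intro w hw
    simp only [hT, Finset.coe_image, Set.mem_image, Finset.mem_coe] at hw
    obtain ⟨k, hk, rfl⟩ := hw
    refine ⟨length_toWord n _, ?_⟩
    rw [binVal_toWord (hlt k hk)]
    simp
  have hcard : T.card = 2 ^ n / p := by
    rw [hT, Finset.card_image_of_injOn, Finset.card_range]
    intro k1 h1 k2 h2 heq
    have : binVal (toWord n (k1 * p)) = binVal (toWord n (k2 * p)) := congrArg binVal heq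
    rw [binVal_toWord (hlt _ h1), binVal_toWord (hlt _ h2)] at this
    exact Nat.eq_of_mul_eq_mul_right hp this
  calc 2 ^ n / p = T.card := hcard.symm
    _ = (↑T : Set (List Bool)).ncard := (Set.ncard_coe_finset T).symm
    _ ≤ _ := Set.ncard_le_ncard hsub (resCl_finite p n 0)

lemma ncard_mul_le (A B : Language Bool) (hA : A.Finite) (hB : B.Finite) :
    (A * B : Language Bool).ncard ≤ A.ncard * B.ncard := by
  classical
  have hsub : ∀ w ∈ (A * B : Language Bool),
      w ∈ (↑((hA.toFinset ×ˢ hB.toFinset).image fun x => x.1 ++ x.2) : Set (List Bool)) := by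
    intro w hw
    rw [Language.mem_mul] at hw
    obtain ⟨a, ha, b, hb, rfl⟩ := hw
    simp only [Finset.coe_image, Set.mem_image, Finset.mem_coe, Finset.mem_product]
    exact ⟨(a, b), ⟨hA.mem_toFinset.2 ha, hB.mem_toFinset.2 hb⟩, rfl⟩
  calc (A * B : Language Bool).ncard ≤ _ := Set.ncard_le_ncard hsub (Finset.finite_toSet _)
    _ = ((hA.toFinset ×ˢ hB.toFinset).image fun x => x.1 ++ x.2).card := Set.ncard_coe_finset _
    _ ≤ (hA.toFinset ×ˢ hB.toFinset).card := Finset.card_image_le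
    _ = A.ncard * B.ncard := by
        rw [Finset.card_product, Set.ncard_eq_toFinset_card A hA, Set.ncard_eq_toFinset_card B hB]

namespace RE
variable {α : Type}

lemma lang_nonempty_s9 (r : RE α) : r.lang.Nonempty := by
  induction r with
  | eps => exact ⟨[], rfl⟩
  | char a => exact ⟨[a], rfl⟩
  | union r s ihr ihs =>
    obtain ⟨w, hw⟩ := ihr
    exact ⟨w, Or.inl hw⟩
  | cat r s ihr ihs =>
    obtain ⟨w, hw⟩ := ihr
    obtain ⟨v, hv⟩ := ihs
    exact ⟨w ++ v, Language.mem_mul.2 ⟨w, hw, v, hv, rfl⟩⟩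

lemma one_le_size (r : RE α) : 1 ≤ r.size := by
  induction r <;> simp [size] <;> omega

lemma homog_cat_iff {r s : RE α} {d₁ d₂ : ℕ} (hr : r.Homog d₁) (hs : s.Homog d₂) :
    (cat r s).Homog (d₁ + d₂) := by
  intro w hw
  obtain ⟨u, hu, v, hv, rfl⟩ := Language.mem_mul.1 hw
  rw [List.length_append, hr u hu, hs v hv]

lemma homog_cat_s9 {r s : RE α} {d : ℕ} (h : (cat r s).Homog d) :
    ∃ d₁ d₂, d₁ + d₂ = d ∧ r.Homog d₁ ∧ s.Homog d₂ := by
  obtain ⟨u₀, hu₀⟩ := lang_nonempty_s9 r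
  obtain ⟨v₀, hv₀⟩ := lang_nonempty_s9 s
  have key : ∀ u ∈ r.lang, ∀ v ∈ s.lang, u.length + v.length = d := by
    intro u hu v hv
    have := h (u ++ v) (Language.mem_mul.2 ⟨u, hu, v, hv, rfl⟩)
    simpa [List.length_append] using this
  refine ⟨u₀.length, v₀.length, key u₀ hu₀ v₀ hv₀, ?_, ?_⟩
  · intro u hu
    have h1 := key u hu v₀ hv₀
    have h2 := key u₀ hu₀ v₀ hv₀
    omega
  · intro v hv
    have h1 := key u₀ hu₀ v hv
    have h2 := key u₀ hu₀ v₀ hv₀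
    omega

lemma homog_union {r s : RE α} {d : ℕ} (h : (union r s).Homog d) :
    r.Homog d ∧ s.Homog d :=
  ⟨fun w hw => h w ((Language.mem_add _ _ _).2 (Or.inl hw)),
   fun w hw => h w ((Language.mem_add _ _ _).2 (Or.inr hw))⟩

lemma homog_zero_lang {r : RE α} (h : r.Homog 0) : r.lang = 1 := by
  ext w
  rw [Language.mem_one]
  constructor
  · intro hw; exact List.length_eq_zero_iff.1 (h w hw)
  · rintro rfl
    obtain ⟨v, hv⟩ := lang_nonempty_s9 r
    have := List.length_eq_zero_iff.1 (h v hv)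
    subst this; exact hv

theorem decomp (r : RE α) (d : ℕ) (hd : 1 ≤ d) (h : r.Homog d) :
    ∃ Ps : List (RE α), Ps.length ≤ r.size ∧
      (∀ P ∈ Ps, P.LogProd ∧ P.Homog d ∧ ∀ w ∈ P.lang, w ∈ r.lang) ∧
      (∀ w ∈ r.lang, ∃ P ∈ Ps, w ∈ P.lang) := by
  induction r generalizing d with
  | eps =>
    exfalso
    have := h [] (by rw [lang]; exact (Language.mem_one _).2 rfl)
    simp at this; omega
  | char a =>
    refine ⟨[char a], by simp [size], ?_, ?_⟩
    · intro P hP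
      simp only [List.mem_singleton] at hP
      subst hP
      exact ⟨LogProd.char a, h, fun w hw => hw⟩
    · intro w hw; exact ⟨char a, List.mem_singleton.2 rfl, hw⟩
  | union r s ihr ihs =>
    obtain ⟨hr, hs⟩ := homog_union h
    obtain ⟨Ps, hlen, hprop, hcov⟩ := ihr d hd hr
    obtain ⟨Qs, hlen', hprop', hcov'⟩ := ihs d hd hs
    refine ⟨Ps ++ Qs, by simp [size]; omega, ?_, ?_⟩
    · intro P hP
      rcases List.mem_append.1 hP with hP | hP
      · obtain ⟨h1, h2, h3⟩ := hprop P hP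
        exact ⟨h1, h2, fun w hw => (Language.mem_add _ _ _).2 (Or.inl (h3 w hw))⟩
      · obtain ⟨h1, h2, h3⟩ := hprop' P hP
        exact ⟨h1, h2, fun w hw => (Language.mem_add _ _ _).2 (Or.inr (h3 w hw))⟩
    · intro w hw
      rcases (Language.mem_add _ _ _).1 hw with hw | hw
      · obtain ⟨P, hP, hwP⟩ := hcov w hw
        exact ⟨P, List.mem_append.2 (Or.inl hP), hwP⟩
      · obtain ⟨P, hP, hwP⟩ := hcov' w hw
        exact ⟨P, List.mem_append.2 (Or.inr hP), hwP⟩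
  | cat r s ihr ihs =>
    obtain ⟨d₁, d₂, hdd, hr, hs⟩ := homog_cat_s9 h
    rcases Nat.eq_zero_or_pos d₂ with h2 | h2
    · -- s.lang = 1, lang (cat r s) = r.lang
      subst h2
      have hsl : s.lang = 1 := homog_zero_lang hs
      have hcl : (cat r s).lang = r.lang := by
        show r.lang * s.lang = r.lang
        rw [hsl, mul_one]
      obtain ⟨Ps, hlen, hprop, hcov⟩ := ihr d₁ (by omega) hr
      refine ⟨Ps, hlen.trans (by simp [size]; omega), ?_, ?_⟩
      · intro P hP
        obtain ⟨h1', h2', h3'⟩ := hprop P hP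
        rw [hcl]
        exact ⟨h1', by rwa [show d = d₁ by omega], h3'⟩
      · intro w hw
        rw [hcl] at hw
        exact hcov w hw
    rcases Nat.eq_zero_or_pos d₁ with h1 | h1
    · subst h1
      have hsl : r.lang = 1 := homog_zero_lang hr
      have hcl : (cat r s).lang = s.lang := by
        show r.lang * s.lang = s.lang
        rw [hsl, one_mul]
      obtain ⟨Ps, hlen, hprop, hcov⟩ := ihs d₂ (by omega) hs
      refine ⟨Ps, hlen.trans (by simp [size]; omega), ?_, ?_⟩
      · intro P hP
        obtain ⟨h1', h2', h3'⟩ := hprop P hP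
        rw [hcl]
        exact ⟨h1', by rwa [show d = d₂ by omega], h3'⟩
      · intro w hw
        rw [hcl] at hw
        exact hcov w hw
    rcases le_total d₂ d₁ with hle | hle
    · obtain ⟨Ps, hlen, hprop, hcov⟩ := ihr d₁ (by omega) hr
      refine ⟨Ps.map (fun P => cat P s), by simpa [size] using hlen.trans (by omega), ?_, ?_⟩
      · intro Q hQ
        obtain ⟨P, hP, rfl⟩ := List.mem_map.1 hQ
        obtain ⟨hlp, hhom, hsub⟩ := hprop P hP
        refine ⟨LogProd.catL hlp hhom hs hle, ?_, ?_⟩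
        · rw [← hdd]; exact homog_cat_iff hhom hs
        · intro w hw
          obtain ⟨u, hu, v, hv, rfl⟩ := Language.mem_mul.1 hw
          exact Language.mem_mul.2 ⟨u, hsub u hu, v, hv, rfl⟩
      · intro w hw
        obtain ⟨u, hu, v, hv, rfl⟩ := Language.mem_mul.1 hw
        obtain ⟨P, hP, hwP⟩ := hcov u hu
        exact ⟨cat P s, List.mem_map.2 ⟨P, hP, rfl⟩,
          Language.mem_mul.2 ⟨u, hwP, v, hv, rfl⟩⟩
    · obtain ⟨Ps, hlen, hprop, hcov⟩ := ihs d₂ (by omega) hs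
      refine ⟨Ps.map (fun P => cat r P), by simpa [size] using hlen.trans (by omega), ?_, ?_⟩
      · intro Q hQ
        obtain ⟨P, hP, rfl⟩ := List.mem_map.1 hQ
        obtain ⟨hlp, hhom, hsub⟩ := hprop P hP
        refine ⟨LogProd.catR hlp hhom hr hle, ?_, ?_⟩
        · rw [← hdd]; exact homog_cat_iff hr hhom
        · intro w hw
          obtain ⟨u, hu, v, hv, rfl⟩ := Language.mem_mul.1 hw
          exact Language.mem_mul.2 ⟨u, hu, v, hsub v hv, rfl⟩
      · intro w hw
        obtain ⟨u, hu, v, hv, rfl⟩ := Language.mem_mul.1 hw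
        obtain ⟨P, hP, hwP⟩ := hcov v hv
        exact ⟨cat r P, List.mem_map.2 ⟨P, hP, rfl⟩,
          Language.mem_mul.2 ⟨u, hu, v, hwP, rfl⟩⟩


lemma lang_finite (r : RE Bool) : r.lang.Finite := by
  induction r with
  | eps =>
    exact (Set.finite_singleton ([] : List Bool)).subset fun w hw => by
      have := (Language.mem_one w).1 hw; simp [this]
  | char a => exact Set.finite_singleton [a]
  | union r s ihr ihs =>
    exact (ihr.union ihs).subset fun w hw => (Language.mem_add _ _ _).1 hw
  | cat r s ihr ihs =>
    exact (Set.Finite.image2 (fun a b => a ++ b) ihr ihs).subset fun w hw =>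
      Set.mem_image2.2 (Language.mem_mul.1 hw)

end RE

open RE in
lemma logprod_count {p : ℕ} (hp2 : 2 < p) (hodd : Odd p) {P : RE Bool} (hP : P.LogProd) :
    ∀ (d : ℕ) (c : ZMod p), P.Homog d → (∀ w ∈ P.lang, (binVal w : ZMod p) = c) →
    ∃ x β : ℕ, 1 ≤ x ∧ d ≤ 2 ^ β * x ∧ P.lang.ncard * p ^ β * 2 ^ x ≤ 2 ^ (d + β) := by
  have hp0 : 0 < p := by omega
  have hunit : IsUnit (2 : ZMod p) := by
    have : ((2 : ℕ) : ZMod p) = (2 : ZMod p) := by push_cast; ring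
    rw [← this, ZMod.isUnit_iff_coprime]
    exact hodd.coprime_two_left
  induction hP with
  | char a =>
    intro d c hhom _
    have hd : d = 1 := (hhom [a] rfl).symm
    subst hd
    refine ⟨1, 0, le_refl 1, by norm_num, ?_⟩
    have h1 : (RE.char a : RE Bool).lang.ncard = 1 := by
      show ({[a]} : Set (List Bool)).ncard = 1
      simp
    rw [h1]; norm_num
  | @catL B₁ B₂ d₁ d₂ hB1 h₁ h₂ hle ih =>
    intro d c hhom hres
    obtain ⟨u₀, hu₀⟩ := lang_nonempty_s9 B₁
    obtain ⟨v₀, hv₀⟩ := lang_nonempty_s9 B₂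
    have hmem : ∀ u ∈ B₁.lang, ∀ v ∈ B₂.lang, u ++ v ∈ (B₁.cat B₂).lang := by
      intro u hu v hv
      exact Language.mem_mul.2 ⟨u, hu, v, hv, rfl⟩
    have hd : d = d₁ + d₂ := by
      have := hhom (u₀ ++ v₀) (hmem _ hu₀ _ hv₀)
      rw [List.length_append, h₁ u₀ hu₀, h₂ v₀ hv₀] at this
      omega
    subst hd
    have hsplit : ∀ u ∈ B₁.lang, ∀ v ∈ B₂.lang,
        (binVal u : ZMod p) * 2 ^ d₂ + (binVal v : ZMod p) = c := by
      intro u hu v hv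
      have h := hres (u ++ v) (hmem _ hu _ hv)
      rw [binVal_append, h₂ v hv] at h
      push_cast at h
      exact_mod_cast h
    have hres1 : ∀ u ∈ B₁.lang, (binVal u : ZMod p) = (binVal u₀ : ZMod p) := by
      intro u hu
      have ha := hsplit u hu v₀ hv₀
      have hb := hsplit u₀ hu₀ v₀ hv₀
      have : (binVal u : ZMod p) * 2 ^ d₂ = (binVal u₀ : ZMod p) * 2 ^ d₂ := by
        have := ha.trans hb.symm
        exact add_right_cancel this
      exact (hunit.pow d₂).mul_right_cancel this
    have hres2 : ∀ v ∈ B₂.lang, (binVal v : ZMod p) = c - (binVal u₀ : ZMod p) * 2 ^ d₂ := by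
      intro v hv
      exact eq_sub_of_add_eq' (hsplit u₀ hu₀ v hv)
    obtain ⟨x, β, hx, hxd, hcount⟩ := ih d₁ (binVal u₀ : ZMod p) h₁ hres1
    have hnc2 : B₂.lang.ncard ≤ 2 ^ d₂ / p + 1 := by
      have hsub : ∀ v ∈ B₂.lang, v ∈ resCl p d₂ (c - (binVal u₀ : ZMod p) * 2 ^ d₂) :=
        fun v hv => ⟨h₂ v hv, hres2 v hv⟩
      exact le_trans (Set.ncard_le_ncard (s := B₂.lang) hsub (resCl_finite p d₂ _))
        (resCl_card_le p d₂ hp0 _)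
    have hncmul : (B₁.cat B₂).lang.ncard ≤ B₁.lang.ncard * B₂.lang.ncard :=
      ncard_mul_le B₁.lang B₂.lang (lang_finite B₁) (lang_finite B₂)
    rcases lt_or_ge (2 ^ d₂) p with hcase | hcase
    · -- small factor
      have hnc2' : B₂.lang.ncard ≤ 1 := by
        rw [Nat.div_eq_of_lt hcase] at hnc2; omega
      refine ⟨x + d₂, β, by omega, ?_, ?_⟩
      · have h1b : 1 ≤ 2 ^ β := Nat.one_le_two_pow
        calc d₁ + d₂ ≤ 2 ^ β * x + d₂ := by omega
          _ ≤ 2 ^ β * x + 2 ^ β * d₂ := by nlinarith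
          _ = 2 ^ β * (x + d₂) := by ring
      · calc (B₁.cat B₂).lang.ncard * p ^ β * 2 ^ (x + d₂)
            ≤ (B₁.lang.ncard * 1) * p ^ β * (2 ^ x * 2 ^ d₂) := by
              rw [pow_add]
              exact Nat.mul_le_mul (Nat.mul_le_mul_right _
                (hncmul.trans (Nat.mul_le_mul_left _ hnc2'))) (le_refl _)
          _ = (B₁.lang.ncard * p ^ β * 2 ^ x) * 2 ^ d₂ := by ring
          _ ≤ 2 ^ (d₁ + β) * 2 ^ d₂ := Nat.mul_le_mul_right _ hcount
          _ = 2 ^ (d₁ + d₂ + β) := by rw [← pow_add]; ring_nf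
    · -- big factor
      have hnc2' : B₂.lang.ncard * p ≤ 2 ^ (d₂ + 1) := by
        have h1 := Nat.div_mul_le_self (2 ^ d₂) p
        calc B₂.lang.ncard * p ≤ (2 ^ d₂ / p + 1) * p := Nat.mul_le_mul_right _ hnc2
          _ = (2 ^ d₂ / p) * p + p := by ring
          _ ≤ 2 ^ d₂ + 2 ^ d₂ := by omega
          _ = 2 ^ (d₂ + 1) := by rw [pow_succ]; ring
      refine ⟨x, β + 1, hx, ?_, ?_⟩
      · calc d₁ + d₂ ≤ 2 ^ β * x + 2 ^ β * x := by omega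
          _ = 2 ^ (β + 1) * x := by rw [pow_succ]; ring
      · calc (B₁.cat B₂).lang.ncard * p ^ (β + 1) * 2 ^ x
            ≤ (B₁.lang.ncard * B₂.lang.ncard) * (p ^ β * p) * 2 ^ x := by
              rw [pow_succ]
              exact Nat.mul_le_mul_right _ (Nat.mul_le_mul_right _ hncmul)
          _ = (B₁.lang.ncard * p ^ β * 2 ^ x) * (B₂.lang.ncard * p) := by ring
          _ ≤ 2 ^ (d₁ + β) * 2 ^ (d₂ + 1) := Nat.mul_le_mul hcount hnc2'
          _ = 2 ^ (d₁ + d₂ + (β + 1)) := by rw [← pow_add]; ring_nf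
  | @catR B₁ B₂ d₁ d₂ hB1 h₁ h₂ hle ih =>
    intro d c hhom hres
    obtain ⟨u₀, hu₀⟩ := lang_nonempty_s9 B₁
    obtain ⟨v₀, hv₀⟩ := lang_nonempty_s9 B₂
    have hmem : ∀ v ∈ B₂.lang, ∀ u ∈ B₁.lang, v ++ u ∈ (B₂.cat B₁).lang := by
      intro v hv u hu
      exact Language.mem_mul.2 ⟨v, hv, u, hu, rfl⟩
    have hd : d = d₂ + d₁ := by
      have := hhom (v₀ ++ u₀) (hmem _ hv₀ _ hu₀)
      rw [List.length_append, h₁ u₀ hu₀, h₂ v₀ hv₀] at this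
      omega
    subst hd
    have hsplit : ∀ v ∈ B₂.lang, ∀ u ∈ B₁.lang,
        (binVal v : ZMod p) * 2 ^ d₁ + (binVal u : ZMod p) = c := by
      intro v hv u hu
      have h := hres (v ++ u) (hmem _ hv _ hu)
      rw [binVal_append, h₁ u hu] at h
      push_cast at h
      exact_mod_cast h
    have hres1 : ∀ u ∈ B₁.lang, (binVal u : ZMod p) = c - (binVal v₀ : ZMod p) * 2 ^ d₁ := by
      intro u hu
      exact eq_sub_of_add_eq' (hsplit v₀ hv₀ u hu)
    have hres2 : ∀ v ∈ B₂.lang, (binVal v : ZMod p) = (binVal v₀ : ZMod p) := by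
      intro v hv
      have ha := hsplit v hv u₀ hu₀
      have hb := hsplit v₀ hv₀ u₀ hu₀
      have : (binVal v : ZMod p) * 2 ^ d₁ = (binVal v₀ : ZMod p) * 2 ^ d₁ := by
        have := ha.trans hb.symm
        exact add_right_cancel this
      exact (hunit.pow d₁).mul_right_cancel this
    obtain ⟨x, β, hx, hxd, hcount⟩ := ih d₁ _ h₁ hres1
    have hnc2 : B₂.lang.ncard ≤ 2 ^ d₂ / p + 1 := by
      have hsub : ∀ v ∈ B₂.lang, v ∈ resCl p d₂ ((binVal v₀ : ZMod p)) :=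
        fun v hv => ⟨h₂ v hv, hres2 v hv⟩
      exact le_trans (Set.ncard_le_ncard (s := B₂.lang) hsub (resCl_finite p d₂ _))
        (resCl_card_le p d₂ hp0 _)
    have hncmul : (B₂.cat B₁).lang.ncard ≤ B₂.lang.ncard * B₁.lang.ncard :=
      ncard_mul_le B₂.lang B₁.lang (lang_finite B₂) (lang_finite B₁)
    rcases lt_or_ge (2 ^ d₂) p with hcase | hcase
    · have hnc2' : B₂.lang.ncard ≤ 1 := by
        rw [Nat.div_eq_of_lt hcase] at hnc2; omega
      refine ⟨x + d₂, β, by omega, ?_, ?_⟩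
      · have h1b : 1 ≤ 2 ^ β := Nat.one_le_two_pow
        calc d₂ + d₁ ≤ 2 ^ β * x + d₂ := by omega
          _ ≤ 2 ^ β * x + 2 ^ β * d₂ := by nlinarith
          _ = 2 ^ β * (x + d₂) := by ring
      · calc (B₂.cat B₁).lang.ncard * p ^ β * 2 ^ (x + d₂)
            ≤ (1 * B₁.lang.ncard) * p ^ β * (2 ^ x * 2 ^ d₂) := by
              rw [pow_add]
              exact Nat.mul_le_mul (Nat.mul_le_mul_right _
                (hncmul.trans (Nat.mul_le_mul_right _ hnc2'))) (le_refl _)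
          _ = (B₁.lang.ncard * p ^ β * 2 ^ x) * 2 ^ d₂ := by ring
          _ ≤ 2 ^ (d₁ + β) * 2 ^ d₂ := Nat.mul_le_mul_right _ hcount
          _ = 2 ^ (d₂ + d₁ + β) := by rw [← pow_add]; ring_nf
    · have hnc2' : B₂.lang.ncard * p ≤ 2 ^ (d₂ + 1) := by
        have h1 := Nat.div_mul_le_self (2 ^ d₂) p
        calc B₂.lang.ncard * p ≤ (2 ^ d₂ / p + 1) * p := Nat.mul_le_mul_right _ hnc2
          _ = (2 ^ d₂ / p) * p + p := by ring
          _ ≤ 2 ^ d₂ + 2 ^ d₂ := by omega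
          _ = 2 ^ (d₂ + 1) := by rw [pow_succ]; ring
      refine ⟨x, β + 1, hx, ?_, ?_⟩
      · calc d₂ + d₁ ≤ 2 ^ β * x + 2 ^ β * x := by omega
          _ = 2 ^ (β + 1) * x := by rw [pow_succ]; ring
      · calc (B₂.cat B₁).lang.ncard * p ^ (β + 1) * 2 ^ x
            ≤ (B₂.lang.ncard * B₁.lang.ncard) * (p ^ β * p) * 2 ^ x := by
              rw [pow_succ]
              exact Nat.mul_le_mul_right _ (Nat.mul_le_mul_right _ hncmul)
          _ = (B₁.lang.ncard * p ^ β * 2 ^ x) * (B₂.lang.ncard * p) := by ring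
          _ ≤ 2 ^ (d₁ + β) * 2 ^ (d₂ + 1) := Nat.mul_le_mul hcount hnc2'
          _ = 2 ^ (d₂ + d₁ + (β + 1)) := by rw [← pow_add]; ring_nf

open RE in
lemma ncard_le_sum_list (Ps : List (RE Bool)) :
    ∀ (S : Set (List Bool)), S.Finite → (∀ w ∈ S, ∃ P ∈ Ps, w ∈ P.lang) →
    S.ncard ≤ (Ps.map (fun P => P.lang.ncard)).sum := by
  induction Ps with
  | nil =>
    intro S hS hcov
    have : S = ∅ := by
      ext w
      simp only [Set.mem_empty_iff_false, iff_false]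
      intro hw
      obtain ⟨P, hP, _⟩ := hcov w hw
      simp at hP
    simp [this]
  | cons P t ih =>
    intro S hS hcov
    have hsplit : S = (S ∩ P.lang) ∪ (S \ P.lang) := (Set.inter_union_diff S P.lang).symm
    calc S.ncard = ((S ∩ P.lang) ∪ (S \ P.lang)).ncard := by rw [← hsplit]
      _ ≤ (S ∩ P.lang).ncard + (S \ P.lang).ncard := Set.ncard_union_le _ _
      _ ≤ P.lang.ncard + (t.map (fun P => P.lang.ncard)).sum := by
          refine Nat.add_le_add ?_ ?_
          · exact Set.ncard_le_ncard Set.inter_subset_right (lang_finite P)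
          · refine ih (S \ P.lang) hS.diff ?_
            intro w hw
            obtain ⟨Q, hQ, hwQ⟩ := hcov w hw.1
            rcases List.mem_cons.1 hQ with rfl | hQ
            · exact absurd hwQ hw.2
            · exact ⟨Q, hQ, hwQ⟩
      _ = ((P :: t).map (fun P => P.lang.ncard)).sum := by simp


lemma logb_le_self {y : ℝ} (hy : 1 ≤ y) : Real.logb 2 y ≤ y := by
  have hy0 : 0 < y := by linarith
  have hs0 : 0 < Real.sqrt y := Real.sqrt_pos.2 hy0
  have hs1 : 1 ≤ Real.sqrt y := by
    rw [show (1:ℝ) = Real.sqrt 1 by simp]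
    exact Real.sqrt_le_sqrt hy
  have hlog : Real.log (Real.sqrt y) ≤ Real.sqrt y - 1 :=
    Real.log_le_sub_one_of_pos hs0
  have hhalf : Real.log (Real.sqrt y) = Real.log y / 2 := Real.log_sqrt (le_of_lt hy0)
  have hsq : Real.sqrt y ^ 2 = y := Real.sq_sqrt (le_of_lt hy0)
  have hl2 : (0.6931471803 : ℝ) < Real.log 2 := Real.log_two_gt_d9
  rw [Real.logb, div_le_iff₀ (by linarith)]
  nlinarith [sq_nonneg (Real.sqrt y - 3/2), sq_nonneg (Real.sqrt y - 1)]

lemma key_real (n p x β : ℕ) (hp : 2 < p) (hn : 1 ≤ n) (hx : 1 ≤ x)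
    (hβ : n ≤ 2 ^ β * x) :
    (n:ℝ)⁻¹ * (p:ℝ) ^ (Real.logb 2 ((n:ℝ) / Real.logb 2 (p:ℝ)) - 2) ≤
      (p:ℝ)⁻¹ * 2 ^ x * ((p:ℝ) / 2) ^ β := by
  have hpR : (2:ℝ) < p := by exact_mod_cast hp
  have hp0 : (0:ℝ) < p := by linarith
  have hnR : (1:ℝ) ≤ n := by exact_mod_cast hn
  have hn0 : (0:ℝ) < n := by linarith
  have hxR : (1:ℝ) ≤ x := by exact_mod_cast hx
  have hx0 : (0:ℝ) < x := by linarith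
  set ℓ : ℝ := Real.logb 2 (p:ℝ) with hℓ
  have hℓ1 : 1 < ℓ := by
    rw [hℓ, show (1:ℝ) = Real.logb 2 2 from (Real.logb_self_eq_one (by norm_num)).symm]
    exact Real.logb_lt_logb (by norm_num) (by norm_num) hpR
  have hℓ0 : 0 < ℓ := by linarith
  have hpℓ : (p:ℝ) = 2 ^ ℓ := (Real.rpow_logb (by norm_num) (by norm_num) hp0).symm
  set a : ℝ := Real.logb 2 (n:ℝ) with ha
  set lx : ℝ := Real.logb 2 (x:ℝ) with hlx
  set b : ℝ := Real.logb 2 ℓ with hb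
  have ha0 : 0 ≤ a := Real.logb_nonneg (by norm_num) hnR
  have hlx0 : 0 ≤ lx := Real.logb_nonneg (by norm_num) hxR
  have hb0 : 0 ≤ b := Real.logb_nonneg (by norm_num) (le_of_lt hℓ1)
  have hconstr : a ≤ (β : ℝ) + lx := by
    have h1 : (n:ℝ) ≤ 2 ^ (β:ℕ) * (x:ℝ) := by exact_mod_cast hβ
    have h2 : Real.logb 2 (n:ℝ) ≤ Real.logb 2 ((2:ℝ) ^ (β:ℕ) * (x:ℝ)) :=
      Real.logb_le_logb_of_le (by norm_num) hn0 h1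
    rw [Real.logb_mul (by positivity) (by positivity), Real.logb_pow,
      Real.logb_self_eq_one (by norm_num), mul_one] at h2
    exact h2
  have hexp : ℓ * ((a - b) - 2) - a ≤ -ℓ + (x:ℝ) + (ℓ - 1) * (β:ℝ) := by
    have hsuff : (ℓ - 1) * lx ≤ (x:ℝ) + ℓ * b + ℓ := by
      rcases le_total (x:ℝ) ℓ with hcase | hcase
      · have h1 : lx ≤ b := Real.logb_le_logb_of_le (by norm_num) hx0 hcase
        nlinarith
      · have h1 : lx = b + Real.logb 2 ((x:ℝ)/ℓ) := by
          rw [hlx, hb, ← Real.logb_mul (by positivity) (by positivity)]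
          congr 1
          field_simp
        have h2 : Real.logb 2 ((x:ℝ)/ℓ) ≤ (x:ℝ)/ℓ := by
          apply logb_le_self
          rw [le_div_iff₀ hℓ0]; linarith
        have h3 : ℓ * ((x:ℝ)/ℓ) = (x:ℝ) := by field_simp
        nlinarith [mul_le_mul_of_nonneg_left h2 (le_of_lt hℓ0)]
    nlinarith [mul_le_mul_of_nonneg_left hconstr (by linarith : (0:ℝ) ≤ ℓ - 1)]
  have hdiv : Real.logb 2 ((n:ℝ)/ℓ) = a - b := Real.logb_div (by positivity) (by positivity)
  have hlhs : (n:ℝ)⁻¹ * (p:ℝ) ^ (Real.logb 2 ((n:ℝ) / ℓ) - 2)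
      = (2:ℝ) ^ (ℓ * ((a - b) - 2) - a) := by
    rw [hdiv]
    have e1 : (p:ℝ) ^ ((a - b) - 2) = (2:ℝ) ^ (ℓ * ((a - b) - 2)) := by
      rw [hpℓ, ← Real.rpow_mul (by norm_num)]
    have e2 : (n:ℝ)⁻¹ = (2:ℝ) ^ (-a) := by
      rw [Real.rpow_neg (by norm_num), ha, Real.rpow_logb (by norm_num) (by norm_num) hn0]
    rw [e1, e2, ← Real.rpow_add (by norm_num)]
    ring_nf
  have hrhs : (p:ℝ)⁻¹ * 2 ^ x * ((p:ℝ) / 2) ^ β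
      = (2:ℝ) ^ (-ℓ + (x:ℝ) + (ℓ - 1) * (β:ℝ)) := by
    have e1 : (p:ℝ)⁻¹ = (2:ℝ) ^ (-ℓ) := by
      rw [Real.rpow_neg (by norm_num), hpℓ]
    have e2 : ((2:ℝ)) ^ (x:ℕ) = (2:ℝ) ^ ((x:ℕ):ℝ) := (Real.rpow_natCast 2 x).symm
    have e3 : ((p:ℝ) / 2) ^ (β:ℕ) = (2:ℝ) ^ ((ℓ - 1) * (β:ℝ)) := by
      have : (p:ℝ) / 2 = (2:ℝ) ^ (ℓ - 1) := by
        rw [Real.rpow_sub (by norm_num), Real.rpow_one, hpℓ]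
      rw [this, ← Real.rpow_natCast ((2:ℝ) ^ (ℓ - 1)) β, ← Real.rpow_mul (by norm_num)]
    rw [e1, e2, e3, ← Real.rpow_add (by norm_num), ← Real.rpow_add (by norm_num)]
  rw [hlhs, hrhs]
  exact Real.rpow_le_rpow_left_iff (by norm_num) |>.2 hexp

lemma nat_div_lower (n p : ℕ) (hp : 0 < p) (hple : p ≤ 2 ^ n) :
    2 ^ n ≤ 2 * (p * (2 ^ n / p)) := by
  have h1 : p * (2 ^ n / p) + 2 ^ n % p = 2 ^ n := Nat.div_add_mod _ _
  have h2 : 2 ^ n % p < p := Nat.mod_lt _ hp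
  have h3 : 1 ≤ 2 ^ n / p := (Nat.one_le_div_iff hp).2 hple
  have h4 : p ≤ p * (2 ^ n / p) := Nat.le_mul_of_pos_right p h3
  omega

/-- Lower bound for the divisibility language: for odd `p > 2`, every regular
expression describing `L = {w ∈ {0,1}^n : bin(w) ≡ 0 (mod p)}` has length at
least `Ω(n⁻¹ · p^{log₂(n / log₂ p) − 2})`. -/
theorem divisibility_lower_bound :
    ∃ C : ℝ, 0 < C ∧
      ∀ (n p : ℕ), Odd p → 2 < p → 1 ≤ n →
        ∀ r : RE Bool,
          (∀ w, w ∈ r.lang ↔ (w.length = n ∧ binVal w % p = 0)) →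
          C * ((n : ℝ)⁻¹ *
              (p : ℝ) ^ (Real.logb 2 ((n : ℝ) / Real.logb 2 (p : ℝ)) - 2)) ≤
            (r.size : ℝ) := by
  refine ⟨1/2, by norm_num, ?_⟩
  intro n p hodd hp2 hn r hr
  have hp0 : 0 < p := by omega
  have hpR : (2:ℝ) < p := by exact_mod_cast hp2
  have hp0R : (0:ℝ) < p := by linarith
  have hnR : (1:ℝ) ≤ n := by exact_mod_cast hn
  have hn0 : (0:ℝ) < n := by linarith
  have hsize1 : (1:ℝ) ≤ r.size := by exact_mod_cast RE.one_le_size r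
  set ℓ : ℝ := Real.logb 2 (p:ℝ) with hℓ
  have hℓ1 : 1 < ℓ := by
    rw [hℓ, show (1:ℝ) = Real.logb 2 2 from (Real.logb_self_eq_one (by norm_num)).symm]
    exact Real.logb_lt_logb (by norm_num) (by norm_num) hpR
  have hℓ0 : 0 < ℓ := by linarith
  set T : ℝ := (n:ℝ)⁻¹ * (p:ℝ) ^ (Real.logb 2 ((n:ℝ) / ℓ) - 2) with hT
  have hT0 : 0 < T := by
    apply mul_pos (by positivity)
    exact Real.rpow_pos_of_pos hp0R _
  show 1/2 * T ≤ (r.size : ℝ)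
  rcases lt_or_ge (2 ^ n) p with hcase | hcase
  · -- trivial case : p > 2^n, bound below 1
    have h2n : ((2:ℝ)) ^ (n:ℕ) < p := by exact_mod_cast hcase
    have hnℓ : (n:ℝ) < ℓ := by
      have e1 : Real.logb 2 ((2:ℝ) ^ (n:ℕ)) = n := by
        rw [Real.logb_pow, Real.logb_self_eq_one (by norm_num), mul_one]
      rw [hℓ, ← e1]
      exact Real.logb_lt_logb (by norm_num) (by positivity) h2n
    have hfrac : (n:ℝ)/ℓ < 1 := (div_lt_one hℓ0).2 hnℓ
    have hexp : Real.logb 2 ((n:ℝ)/ℓ) - 2 < 0 := by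
      have := Real.logb_neg (b := 2) (by norm_num) (by positivity) hfrac
      linarith
    have hpow : (p:ℝ) ^ (Real.logb 2 ((n:ℝ)/ℓ) - 2) ≤ 1 :=
      Real.rpow_le_one_of_one_le_of_nonpos (by linarith) (le_of_lt hexp)
    have hninv : (n:ℝ)⁻¹ ≤ 1 := by
      rw [inv_le_one_iff₀]; right; exact hnR
    have hT1 : T ≤ 1 := by
      rw [hT]
      calc (n:ℝ)⁻¹ * (p:ℝ) ^ (Real.logb 2 ((n:ℝ)/ℓ) - 2) ≤ 1 * 1 := by
            apply mul_le_mul hninv hpow (le_of_lt (Real.rpow_pos_of_pos hp0R _)) (by norm_num)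
        _ = 1 := by norm_num
    linarith
  · -- main case
    have hhom : r.Homog n := fun w hw => ((hr w).1 hw).1
    obtain ⟨Ps, hlen, hprop, hcov⟩ := RE.decomp r n hn hhom
    -- lower bound on the language cardinality
    have hset : resCl p n (0 : ZMod p) = r.lang := by
      ext w
      refine Iff.trans ?_ (hr w).symm
      simp only [resCl, Set.mem_setOf_eq, and_congr_right_iff]
      intro _
      rw [ZMod.natCast_eq_zero_iff, Nat.dvd_iff_mod_eq_zero]
    have hLlow : 2 ^ n / p ≤ r.lang.ncard := by
      rw [← hset]; exact resCl_card_lower p n hp0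
    -- per-product bound
    set M : ℝ := 2 ^ n / ((p:ℝ) * T) with hM
    have hM0 : 0 < M := by positivity
    have hperP : ∀ P ∈ Ps, (P.lang.ncard : ℝ) ≤ M := by
      intro P hP
      obtain ⟨hlp, hhomP, hsubP⟩ := hprop P hP
      have hresP : ∀ w ∈ P.lang, (binVal w : ZMod p) = 0 := by
        intro w hw
        rw [ZMod.natCast_eq_zero_iff]
        exact Nat.dvd_of_mod_eq_zero ((hr w).1 (hsubP w hw)).2
      obtain ⟨x, β, hx, hxd, hcount⟩ := logprod_count hp2 hodd hlp n 0 hhomP hresP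
      have h1 : (P.lang.ncard : ℝ) * (p:ℝ) ^ β * 2 ^ x ≤ 2 ^ (n + β) := by
        exact_mod_cast hcount
      have hkey := key_real n p x β hp2 hn hx hxd
      have h2 : (P.lang.ncard : ℝ) ≤ 2 ^ (n + β) / ((p:ℝ) ^ β * 2 ^ x) := by
        rw [le_div_iff₀ (by positivity)]
        calc (P.lang.ncard : ℝ) * ((p:ℝ) ^ β * 2 ^ x)
            = (P.lang.ncard : ℝ) * (p:ℝ) ^ β * 2 ^ x := by ring
          _ ≤ 2 ^ (n + β) := h1
      refine h2.trans ?_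
      rw [hM, div_le_div_iff₀ (by positivity) (by positivity)]
      calc (2:ℝ) ^ (n + β) * ((p:ℝ) * T)
          ≤ (2:ℝ) ^ (n + β) * ((p:ℝ) * ((p:ℝ)⁻¹ * 2 ^ x * ((p:ℝ) / 2) ^ β)) := by
            apply mul_le_mul_of_nonneg_left _ (by positivity)
            exact mul_le_mul_of_nonneg_left hkey (by positivity)
        _ = 2 ^ n * ((p:ℝ) ^ β * 2 ^ x) := by
            rw [div_pow, pow_add]
            field_simp
    -- summation
    have hsumN : r.lang.ncard ≤ (Ps.map (fun P => P.lang.ncard)).sum :=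
      ncard_le_sum_list Ps r.lang (RE.lang_finite r) hcov
    have hsumR : (((Ps.map (fun P => P.lang.ncard)).sum : ℕ) : ℝ) ≤ (Ps.length : ℝ) * M := by
      have h1 : (((Ps.map (fun P => P.lang.ncard)).sum : ℕ) : ℝ)
          = ((Ps.map (fun P => (P.lang.ncard : ℝ)))).sum := by
        rw [Nat.cast_list_sum, List.map_map]
        rfl
      rw [h1]
      have h2 := List.sum_le_card_nsmul (Ps.map (fun P => (P.lang.ncard : ℝ))) M ?_
      · simpa [List.length_map, nsmul_eq_mul] using h2
      · intro y hy
        obtain ⟨P, hP, rfl⟩ := List.mem_map.1 hy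
        exact hperP P hP
    -- lower bound chain
    have hlow : (2:ℝ) ^ n / (2 * p) ≤ ((2 ^ n / p : ℕ) : ℝ) := by
      have := nat_div_lower n p hp0 hcase
      have hc : (2:ℝ) ^ n ≤ 2 * ((p:ℝ) * ((2 ^ n / p : ℕ) : ℝ)) := by exact_mod_cast this
      rw [div_le_iff₀ (by positivity)]
      linarith
    have hchain : (2:ℝ) ^ n / (2 * p) ≤ (r.size : ℝ) * M := by
      calc (2:ℝ) ^ n / (2 * p) ≤ ((2 ^ n / p : ℕ) : ℝ) := hlow
        _ ≤ (r.lang.ncard : ℝ) := by exact_mod_cast hLlow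
        _ ≤ (((Ps.map (fun P => P.lang.ncard)).sum : ℕ) : ℝ) := by exact_mod_cast hsumN
        _ ≤ (Ps.length : ℝ) * M := hsumR
        _ ≤ (r.size : ℝ) * M := by
            apply mul_le_mul_of_nonneg_right _ (le_of_lt hM0)
            exact_mod_cast hlen
    -- conclude
    have hfinal : ((2:ℝ) ^ n / (2 * p)) / M ≤ (r.size : ℝ) :=
      (div_le_iff₀ hM0).2 hchain
    have heq : ((2:ℝ) ^ n / (2 * p)) / M = 1/2 * T := by
      rw [hM]
      field_simp
    linarith [heq ▸ hfinal]
end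

section
/- Let k ≥ 2 and n be even. The number of words w ∈ {1,...,k}^n in which every letter occurs an even number of times is at least k^n · 2^{1−k}. -/
open Finset

private noncomputable def epsF (k : ℕ) (S : Finset (Fin k)) (j : Fin k) : ℝ :=
  if j ∈ S then -1 else 1

private lemma prod_eps_eq (k n : ℕ) (S : Finset (Fin k)) (g : Fin n → Fin k) :
    (∏ i : Fin n, epsF k S (g i)) = ∏ j ∈ S, (-1 : ℝ) ^ ((List.ofFn g).count j) := by
  have h2 : (∏ i : Fin n, epsF k S (g i)) = ((List.ofFn g).map (epsF k S)).prod := by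
    rw [List.map_ofFn, List.prod_ofFn]; rfl
  rw [h2, Finset.prod_list_map_count]
  -- extend toFinset to univ
  have h3 : ∏ j ∈ (List.ofFn g).toFinset, epsF k S j ^ ((List.ofFn g).count j) =
      ∏ j : Fin k, epsF k S j ^ ((List.ofFn g).count j) := by
    apply Finset.prod_subset (Finset.subset_univ _)
    intro j _ hj
    rw [List.mem_toFinset] at hj
    rw [List.count_eq_zero_of_not_mem hj, pow_zero]
  rw [h3]
  rw [← Finset.prod_filter_mul_prod_filter_not Finset.univ (· ∈ S)]
  have h4 : ∏ j ∈ Finset.univ.filter (fun j => ¬ j ∈ S),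
      epsF k S j ^ ((List.ofFn g).count j) = 1 :=
    Finset.prod_eq_one fun j hj => by
      simp only [Finset.mem_filter] at hj
      simp [epsF, hj.2]
  rw [h4, mul_one]
  rw [Finset.filter_univ_mem]
  exact Finset.prod_congr rfl fun j hj => by simp [epsF, hj]

private lemma signed_sum (k : ℕ) (c : Fin k → ℕ) :
    ∑ S : Finset (Fin k), ∏ j ∈ S, (-1 : ℝ) ^ (c j) =
      ∏ j : Fin k, ((-1 : ℝ) ^ (c j) + 1) := by
  rw [Finset.prod_add]
  rw [Finset.powerset_univ]
  exact Finset.sum_congr rfl fun S _ => by simp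

private lemma key_identity (k n : ℕ) :
    ∑ S : Finset (Fin k), (∑ j, epsF k S j) ^ n =
      ∑ g ∈ Fintype.piFinset (fun _ : Fin n => (univ : Finset (Fin k))),
        ∏ j : Fin k, ((-1 : ℝ) ^ ((List.ofFn g).count j) + 1) := by
  have h1 : ∀ S : Finset (Fin k), (∑ j, epsF k S j) ^ n =
      ∑ g ∈ Fintype.piFinset (fun _ : Fin n => (univ : Finset (Fin k))),
        ∏ i : Fin n, epsF k S (g i) := by
    intro S
    rw [← Finset.prod_univ_sum]
    simp [Finset.prod_const]
  simp_rw [h1]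
  rw [Finset.sum_comm]
  exact Finset.sum_congr rfl fun g _ => by
    simp_rw [prod_eps_eq k n _ g]; exact signed_sum k _

/-- For `k ≥ 2` and even `n`, the number of words `w ∈ [k]^n` in which every
letter occurs an even number of times is at least `k^n · 2^{1−k}`. -/
theorem parity_language_count_lower (k n : ℕ) (hk : 2 ≤ k) (hn : Even n) :
    (k : ℝ) ^ n * (2 : ℝ) ^ ((1 : ℤ) - (k : ℤ)) ≤
      (Set.ncard {w : List (Fin k) | w.length = n ∧ ∀ j : Fin k, Even (w.count j)} : ℝ) := by
  classical
  -- the good finset of functions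
  set G : Finset (Fin n → Fin k) :=
    Finset.univ.filter (fun g => ∀ j : Fin k, Even ((List.ofFn g).count j)) with hG
  -- Step 1 : the list set is the image of G, so ncard = G.card
  have hset : {w : List (Fin k) | w.length = n ∧ ∀ j : Fin k, Even (w.count j)} =
      (fun g : Fin n → Fin k => List.ofFn g) '' ↑G := by
    ext w
    simp only [Set.mem_setOf_eq, Set.mem_image, Finset.coe_filter, Set.mem_setOf_eq,
      Finset.mem_univ, true_and, hG]
    constructor
    · rintro ⟨hlen, hev⟩
      subst hlen
      exact ⟨w.get, by simpa [List.ofFn_get] using hev, List.ofFn_get w⟩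
    · rintro ⟨g, hg, rfl⟩
      exact ⟨List.length_ofFn, hg⟩
  have hcard : ({w : List (Fin k) | w.length = n ∧ ∀ j : Fin k, Even (w.count j)}).ncard
      = G.card := by
    rw [hset, Set.ncard_image_of_injective _ (fun a b h => List.ofFn_injective h),
      Set.ncard_coe_finset]
  -- Step 2 : the algebraic identity  ∑_S (∑ eps)^n = 2^k * G.card
  have hid : ∑ S : Finset (Fin k), (∑ j, epsF k S j) ^ n = 2 ^ k * (G.card : ℝ) := by
    rw [key_identity]
    have hpi : Fintype.piFinset (fun _ : Fin n => (univ : Finset (Fin k))) = Finset.univ := by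
      ext g; simp
    rw [hpi, ← Finset.sum_filter_add_sum_filter_not Finset.univ
      (fun g => ∀ j : Fin k, Even ((List.ofFn g).count j))]
    have hA : ∑ g ∈ G, ∏ j : Fin k, ((-1 : ℝ) ^ ((List.ofFn g).count j) + 1)
        = 2 ^ k * (G.card : ℝ) := by
      rw [Finset.sum_congr rfl (fun g hg => ?_), Finset.sum_const, nsmul_eq_mul, mul_comm]
      rw [Finset.mem_filter] at hg
      have : ∀ j : Fin k, ((-1 : ℝ) ^ ((List.ofFn g).count j) + 1) = 2 := by
        intro j; rw [(hg.2 j).neg_one_pow]; norm_num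
      rw [Finset.prod_congr rfl fun j _ => this j, Finset.prod_const]
      simp
    have hB : ∑ g ∈ Finset.univ.filter
        (fun g : Fin n → Fin k => ¬ ∀ j : Fin k, Even ((List.ofFn g).count j)),
        ∏ j : Fin k, ((-1 : ℝ) ^ ((List.ofFn g).count j) + 1) = 0 := by
      apply Finset.sum_eq_zero
      intro g hg
      rw [Finset.mem_filter] at hg
      push_neg at hg
      obtain ⟨j, hj⟩ := hg.2
      apply Finset.prod_eq_zero (Finset.mem_univ j)
      rw [Nat.not_even_iff_odd] at hj
      rw [hj.neg_one_pow]; ring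
    rw [hA, hB, add_zero]
  -- Step 3 : lower bound the sum by the two extreme terms
  have hlow : 2 * (k : ℝ) ^ n ≤ ∑ S : Finset (Fin k), (∑ j, epsF k S j) ^ n := by
    have hsub : ({∅, Finset.univ} : Finset (Finset (Fin k))) ⊆ Finset.univ :=
      Finset.subset_univ _
    haveI : Nonempty (Fin k) := ⟨⟨0, by omega⟩⟩
    have hne : (∅ : Finset (Fin k)) ≠ Finset.univ := by
      intro h
      have := Finset.univ_nonempty (α := Fin k)
      rw [← h] at this
      exact Finset.not_nonempty_empty this
    have hsum2 : ∑ S ∈ ({∅, Finset.univ} : Finset (Finset (Fin k))),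
        (∑ j, epsF k S j) ^ n = 2 * (k : ℝ) ^ n := by
      rw [Finset.sum_pair hne]
      have he : (∑ j, epsF k (∅ : Finset (Fin k)) j) = (k : ℝ) := by
        simp [epsF]
      have hu : (∑ j, epsF k (Finset.univ : Finset (Fin k)) j) = -(k : ℝ) := by
        simp [epsF]
      rw [he, hu, hn.neg_pow]
      ring
    calc 2 * (k : ℝ) ^ n
        = ∑ S ∈ ({∅, Finset.univ} : Finset (Finset (Fin k))), (∑ j, epsF k S j) ^ n :=
          hsum2.symm
      _ ≤ ∑ S : Finset (Fin k), (∑ j, epsF k S j) ^ n := by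
          apply Finset.sum_le_sum_of_subset_of_nonneg hsub
          intro S _ _
          exact hn.pow_nonneg _
  -- conclude
  rw [hcard]
  rw [hid] at hlow
  have h2k : (0 : ℝ) < 2 ^ k := by positivity
  rw [zpow_sub₀ (by norm_num : (2:ℝ) ≠ 0), zpow_one, zpow_natCast]
  have heq : (k : ℝ) ^ n * (2 / 2 ^ k) = 2 * (k : ℝ) ^ n / 2 ^ k := by ring
  rw [heq, div_le_iff₀ h2k]
  nlinarith [hlow]
end

section
/- Let k ≥ 2, n ≥ k·ln k, and q ∈ {0,1}^k. The number of words w ∈ {1,...,k}^n such that |w|_j ≡ q_j (mod 2) for all j ∈ [k] is at most k^n · 2^{2−k}. -/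
set_option maxHeartbeats 1000000

noncomputable def psgn (b : Bool) : ℝ := if b then -1 else 1

lemma expand_pow' {k n : ℕ} (f : Fin k → ℝ) :
    (∑ a : Fin k, f a) ^ n = ∑ w : Fin n → Fin k, ∏ i : Fin n, f (w i) := by
  rw [← Fintype.piFinset_univ, ← Finset.prod_univ_sum]
  simp

lemma sum_pi_bool' {k : ℕ} (F : Fin k → Bool → ℝ) :
    ∑ s : Fin k → Bool, ∏ j, F j (s j) = ∏ j, ∑ b, F j b := by
  rw [← Fintype.piFinset_univ, ← Finset.prod_univ_sum]

lemma fiber_prod' {k n : ℕ} (f : Fin k → ℝ) (w : Fin n → Fin k) :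
    ∏ i : Fin n, f (w i)
      = ∏ j : Fin k, f j ^ (Finset.filter (fun i => w i = j) Finset.univ).card := by
  rw [← Finset.prod_fiberwise_of_maps_to (g := w) (t := Finset.univ)
    (fun x _ => Finset.mem_univ _)]
  refine Finset.prod_congr rfl fun j _ => ?_
  rw [← Finset.prod_const]
  refine Finset.prod_congr rfl fun i hi => ?_
  rw [(Finset.mem_filter.1 hi).2]

lemma bool_factor' (qb : Bool) (c : ℕ) :
    ∑ b : Bool, (if qb then psgn b else 1) * psgn b ^ c
      = if c % 2 = (if qb then 1 else 0) then 2 else 0 := by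
  have h : (-1 : ℝ) ^ c = if c % 2 = 0 then 1 else -1 := by
    rcases Nat.even_or_odd c with h | h
    · simp [h.neg_one_pow, Nat.even_iff.1 h]
    · simp [h.neg_one_pow, Nat.odd_iff.1 h]
  rcases Nat.mod_two_eq_zero_or_one c with hc | hc <;> cases qb <;>
      simp [Fintype.sum_bool, psgn, h, hc] <;> norm_num

lemma key_identity' (k n : ℕ) (q : Fin k → Bool) :
    ∑ s : Fin k → Bool, (∏ j, (if q j then psgn (s j) else 1)) * (∑ a, psgn (s a)) ^ n
      = 2 ^ k * ((Finset.univ.filter (fun w : Fin n → Fin k =>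
          ∀ j, (Finset.filter (fun i => w i = j) Finset.univ).card % 2
            = (if q j then 1 else 0))).card : ℝ) := by
  have step1 : ∀ s : Fin k → Bool, (∑ a, psgn (s a)) ^ n
      = ∑ w : Fin n → Fin k, ∏ j : Fin k,
          psgn (s j) ^ (Finset.filter (fun i => w i = j) Finset.univ).card := by
    intro s
    rw [expand_pow']
    exact Finset.sum_congr rfl fun w _ => fiber_prod' (fun a => psgn (s a)) w
  calc ∑ s : Fin k → Bool, (∏ j, (if q j then psgn (s j) else 1)) * (∑ a, psgn (s a)) ^ n
      = ∑ s : Fin k → Bool, ∑ w : Fin n → Fin k, ∏ j : Fin k,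
          ((if q j then psgn (s j) else 1)
            * psgn (s j) ^ (Finset.filter (fun i => w i = j) Finset.univ).card) := by
        refine Finset.sum_congr rfl fun s _ => ?_
        rw [step1 s, Finset.mul_sum]
        exact Finset.sum_congr rfl fun w _ => (Finset.prod_mul_distrib).symm
    _ = ∑ w : Fin n → Fin k, ∏ j : Fin k, ∑ b : Bool,
          ((if q j then psgn b else 1)
            * psgn b ^ (Finset.filter (fun i => w i = j) Finset.univ).card) := by
        rw [Finset.sum_comm]
        exact Finset.sum_congr rfl fun w _ => sum_pi_bool'
          (fun j b => (if q j then psgn b else 1)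
            * psgn b ^ (Finset.filter (fun i => w i = j) Finset.univ).card)
    _ = ∑ w : Fin n → Fin k,
          (if (∀ j, (Finset.filter (fun i => w i = j) Finset.univ).card % 2
            = (if q j then 1 else 0)) then (2:ℝ)^k else 0) := by
        refine Finset.sum_congr rfl fun w _ => ?_
        rw [Finset.prod_congr rfl fun j _ => bool_factor' (q j) _]
        by_cases hall : ∀ j, (Finset.filter (fun i => w i = j) Finset.univ).card % 2
            = (if q j then 1 else 0)
        · rw [if_pos hall, Finset.prod_congr rfl fun j _ => if_pos (hall j),
            Finset.prod_const]
          simp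
        · rw [if_neg hall]
          push_neg at hall
          obtain ⟨j, hj⟩ := hall
          exact Finset.prod_eq_zero (Finset.mem_univ j) (if_neg hj)
    _ = 2 ^ k * ((Finset.univ.filter (fun w : Fin n → Fin k =>
          ∀ j, (Finset.filter (fun i => w i = j) Finset.univ).card % 2
            = (if q j then 1 else 0))).card : ℝ) := by
        rw [Finset.sum_ite, Finset.sum_const, Finset.sum_const_zero, add_zero,
          nsmul_eq_mul, mul_comm]

lemma exp_bd' (k n c : ℕ) (hk : 2 ≤ k) (hn : (k : ℝ) * Real.log k ≤ n)
    (hc : 2 * c ≤ k) :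
    ((k : ℝ) - 2 * c) ^ n ≤ (k : ℝ) ^ n * (((k : ℝ)⁻¹ ^ 2) ^ c) := by
  have hk0 : (0 : ℝ) < k := by positivity
  have hbase : (0 : ℝ) ≤ 1 - 2 * c / k := by
    rw [sub_nonneg, div_le_one hk0]
    exact_mod_cast hc
  have h1 : (k : ℝ) - 2 * c = k * (1 - 2 * c / k) := by field_simp
  have h2 : (1 - 2 * c / k : ℝ) ≤ Real.exp (-(2 * c / k)) := by
    have := Real.add_one_le_exp (-(2 * c / k)); linarith
  have h3 : (1 - 2 * c / k : ℝ) ^ n ≤ Real.exp (-(2 * c / k)) ^ n :=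
    pow_le_pow_left₀ hbase h2 n
  have h4 : Real.exp (-(2 * c / k)) ^ n = Real.exp (-(2 * c / k) * n) := by
    rw [← Real.exp_nat_mul]; ring_nf
  have h5 : -(2 * c / k) * n ≤ -(2 * c * Real.log k) := by
    have hcn : (0:ℝ) ≤ 2 * c / k := by positivity
    have := mul_le_mul_of_nonneg_left hn hcn
    rw [neg_mul, neg_le_neg_iff]
    calc (2 * c : ℝ) * Real.log k = 2 * c / k * (k * Real.log k) := by field_simp
      _ ≤ 2 * c / k * n := this
  have h6 : Real.exp (-(2 * c * Real.log k)) = ((k : ℝ)⁻¹ ^ 2) ^ c := by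
    rw [show -(2 * (c:ℝ) * Real.log k) = (2 * c : ℕ) * (-Real.log k) by push_cast; ring,
      Real.exp_nat_mul, Real.exp_neg, Real.exp_log hk0, ← pow_mul]
  calc ((k : ℝ) - 2 * c) ^ n = (k : ℝ) ^ n * (1 - 2 * c / k) ^ n := by rw [h1, mul_pow]
    _ ≤ (k : ℝ) ^ n * Real.exp (-(2 * c / k)) ^ n :=
        mul_le_mul_of_nonneg_left h3 (by positivity)
    _ = (k : ℝ) ^ n * Real.exp (-(2 * c / k) * n) := by rw [h4]
    _ ≤ (k : ℝ) ^ n * Real.exp (-(2 * c * Real.log k)) :=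
        mul_le_mul_of_nonneg_left (Real.exp_le_exp.2 h5) (by positivity)
    _ = (k : ℝ) ^ n * (((k : ℝ)⁻¹ ^ 2) ^ c) := by rw [h6]

lemma abs_bd' (k n c : ℕ) (hk : 2 ≤ k) (hn : (k : ℝ) * Real.log k ≤ n)
    (hc : c ≤ k) :
    |(k : ℝ) - 2 * c| ^ n
      ≤ (k : ℝ) ^ n * (((k : ℝ)⁻¹ ^ 2) ^ c + ((k : ℝ)⁻¹ ^ 2) ^ (k - c)) := by
  have hx : (0:ℝ) ≤ ((k : ℝ)⁻¹ ^ 2) := by positivity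
  rcases le_or_gt (2 * c) k with h | h
  · have habs : |(k : ℝ) - 2 * c| = (k : ℝ) - 2 * c := by
      rw [abs_of_nonneg]; rw [sub_nonneg]; exact_mod_cast h
    rw [habs]
    calc ((k : ℝ) - 2 * c) ^ n ≤ (k : ℝ) ^ n * (((k : ℝ)⁻¹ ^ 2) ^ c) :=
          exp_bd' k n c hk hn h
      _ ≤ _ := by
          nlinarith [pow_nonneg hx c, pow_nonneg hx (k - c),
            pow_nonneg (by positivity : (0:ℝ) ≤ (k:ℝ)) n]
  · have h2 : 2 * (k - c) ≤ k := by omega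
    have hcast : ((k - c : ℕ) : ℝ) = (k : ℝ) - c := by
      push_cast [Nat.cast_sub hc]; ring
    have habs : |(k : ℝ) - 2 * c| = (k : ℝ) - 2 * ((k - c : ℕ) : ℝ) := by
      rw [hcast, abs_of_nonpos] <;> push_cast <;> [ring; skip]
      have : (k:ℝ) < 2 * c := by exact_mod_cast h
      linarith
    rw [habs]
    calc ((k : ℝ) - 2 * ((k - c : ℕ):ℝ)) ^ n
        ≤ (k : ℝ) ^ n * (((k : ℝ)⁻¹ ^ 2) ^ (k - c)) := exp_bd' k n (k - c) hk hn h2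
      _ ≤ _ := by
          nlinarith [pow_nonneg hx c, pow_nonneg hx (k - c),
            pow_nonneg (by positivity : (0:ℝ) ≤ (k:ℝ)) n]

lemma psgn_sum' {k : ℕ} (s : Fin k → Bool) :
    ∑ a, psgn (s a)
      = (k : ℝ) - 2 * (Finset.filter (fun a => s a = true) Finset.univ).card := by
  have : ∀ b, psgn b = 1 - 2 * (if b = true then (1:ℝ) else 0) := by
    intro b; cases b <;> simp [psgn] <;> ring
  simp only [this]
  rw [Finset.sum_sub_distrib, Finset.sum_const, ← Finset.mul_sum, Finset.sum_boole]
  simp [mul_comm]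

lemma prod_ite_card₁ {k : ℕ} (s : Fin k → Bool) (x : ℝ) :
    ∏ j, (if s j = true then x else 1)
      = x ^ (Finset.filter (fun a => s a = true) Finset.univ).card := by
  rw [Finset.prod_ite, Finset.prod_const, Finset.prod_const_one, mul_one]

lemma prod_ite_card₂ {k : ℕ} (s : Fin k → Bool) (x : ℝ) :
    ∏ j, (if s j = true then 1 else x)
      = x ^ (k - (Finset.filter (fun a => s a = true) Finset.univ).card) := by
  rw [Finset.prod_ite, Finset.prod_const, Finset.prod_const, one_pow, one_mul]
  congr 1
  have := Finset.card_filter_add_card_filter_not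
    (s := (Finset.univ : Finset (Fin k))) (p := fun a => s a = true)
  simp only [Finset.card_univ, Fintype.card_fin] at this
  omega

lemma two_bd' (k : ℕ) (hk : 2 ≤ k) : (1 + (k:ℝ)⁻¹ ^ 2) ^ k ≤ 2 := by
  have hk0 : (0:ℝ) < k := by positivity
  have h1 : (1 + (k:ℝ)⁻¹ ^ 2) ≤ Real.exp ((k:ℝ)⁻¹ ^ 2) := by
    have := Real.add_one_le_exp ((k:ℝ)⁻¹ ^ 2); linarith
  have h2 : (1 + (k:ℝ)⁻¹ ^ 2) ^ k ≤ Real.exp ((k:ℝ)⁻¹ ^ 2) ^ k :=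
    pow_le_pow_left₀ (by positivity) h1 k
  have h3 : Real.exp ((k:ℝ)⁻¹ ^ 2) ^ k = Real.exp (k * (k:ℝ)⁻¹ ^ 2) := by
    rw [← Real.exp_nat_mul]
  have h4 : (k:ℝ) * (k:ℝ)⁻¹ ^ 2 = (k:ℝ)⁻¹ := by field_simp
  have h5 : Real.exp ((k:ℝ)⁻¹) ≤ Real.exp (1/2) := by
    apply Real.exp_le_exp.2
    rw [inv_eq_one_div, div_le_div_iff₀ hk0 (by norm_num)]
    norm_num
    exact_mod_cast hk
  have h6 : Real.exp (1/2) < 2 := by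
    have he : Real.exp (1/2) * Real.exp (1/2) = Real.exp 1 := by
      rw [← Real.exp_add]; norm_num
    nlinarith [Real.exp_one_lt_d9, Real.exp_pos (1/2)]
  calc (1 + (k:ℝ)⁻¹ ^ 2) ^ k ≤ Real.exp ((k:ℝ)⁻¹ ^ 2) ^ k := h2
    _ = Real.exp ((k:ℝ)⁻¹) := by rw [h3, h4]
    _ ≤ Real.exp (1/2) := h5
    _ ≤ 2 := le_of_lt h6

lemma sum_abs_bd' (k n : ℕ) (hk : 2 ≤ k) (hn : (k : ℝ) * Real.log k ≤ n) :
    ∑ s : Fin k → Bool, |∑ a, psgn (s a)| ^ n ≤ 4 * (k:ℝ) ^ n := by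
  set x : ℝ := (k:ℝ)⁻¹ ^ 2 with hxdef
  have hterm : ∀ s : Fin k → Bool, |∑ a, psgn (s a)| ^ n
      ≤ (k:ℝ) ^ n * ((∏ j, if s j = true then x else 1)
          + (∏ j, if s j = true then 1 else x)) := by
    intro s
    rw [psgn_sum' s, prod_ite_card₁, prod_ite_card₂]
    exact abs_bd' k n _ hk hn (le_trans (Finset.card_filter_le _ _) (by simp))
  calc ∑ s : Fin k → Bool, |∑ a, psgn (s a)| ^ n
      ≤ ∑ s : Fin k → Bool, (k:ℝ) ^ n * ((∏ j, if s j = true then x else 1)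
          + (∏ j, if s j = true then 1 else x)) :=
        Finset.sum_le_sum fun s _ => hterm s
    _ = (k:ℝ) ^ n * ((∑ s : Fin k → Bool, ∏ j, (if s j = true then x else 1))
          + (∑ s : Fin k → Bool, ∏ j, (if s j = true then 1 else x))) := by
        rw [← Finset.mul_sum, Finset.sum_add_distrib]
    _ = (k:ℝ) ^ n * ((x + 1) ^ k + (1 + x) ^ k) := by
        rw [sum_pi_bool' (fun j b => if b = true then x else 1),
          sum_pi_bool' (fun j b => if b = true then 1 else x)]
        simp [Fintype.sum_bool]
    _ ≤ (k:ℝ) ^ n * (2 + 2) := by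
        have h1 := two_bd' k hk
        have h2 : (x + 1) ^ k ≤ 2 := by rw [add_comm]; exact h1
        have : (0:ℝ) ≤ (k:ℝ) ^ n := by positivity
        nlinarith
    _ = 4 * (k:ℝ) ^ n := by ring

theorem countP_sum' {α : Type*} (p : α → Bool) (l : List α) :
    l.countP p = (l.map (fun x => if p x then 1 else 0)).sum := by
  induction l with
  | nil => simp
  | cons a l ih => by_cases h : p a <;> simp [List.countP_cons, h, ih, Nat.add_comm]

theorem count_ofFn' {k n : ℕ} (w : Fin n → Fin k) (j : Fin k) :
    (List.ofFn w).count j = (Finset.filter (fun i => w i = j) Finset.univ).card := by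
  rw [List.ofFn_eq_map, List.count_eq_countP, List.countP_map, Finset.card_filter]
  simp [Finset.sum, Fin.sum_univ_def, countP_sum', Function.comp, List.ofFn_eq_map]

theorem set_eq' (k n : ℕ) (q : Fin k → Bool) :
    {w : List (Fin k) | w.length = n ∧
        ∀ j : Fin k, w.count j % 2 = (if q j then 1 else 0)}
      = ↑((Finset.univ.filter (fun w : Fin n → Fin k =>
          ∀ j, (Finset.filter (fun i => w i = j) Finset.univ).card % 2
            = (if q j then 1 else 0))).image List.ofFn) := by
  ext l
  simp only [Set.mem_setOf_eq, Finset.coe_image, Set.mem_image, Finset.mem_coe,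
    Finset.mem_filter, Finset.mem_univ, true_and]
  constructor
  · rintro ⟨hlen, hcount⟩
    subst hlen
    refine ⟨fun i => l.get i, fun j => ?_, List.ofFn_get l⟩
    rw [← count_ofFn' (fun i => l.get i) j, List.ofFn_get l]
    exact hcount j
  · rintro ⟨w, hw, rfl⟩
    refine ⟨by simp, fun j => ?_⟩
    rw [count_ofFn' w j]
    exact hw j

/-- For `k ≥ 2`, `n ≥ k·ln k` and any parity vector `q ∈ {0,1}^k`, the number
of words `w ∈ [k]^n` with `|w|_j ≡ q_j (mod 2)` for every letter `j` is at
most `k^n · 2^{2−k}`. -/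
theorem parity_class_count_upper (k n : ℕ) (hk : 2 ≤ k)
    (hn : (k : ℝ) * Real.log (k : ℝ) ≤ (n : ℝ)) (q : Fin k → Bool) :
    (Set.ncard {w : List (Fin k) | w.length = n ∧
        ∀ j : Fin k, w.count j % 2 = (if q j then 1 else 0)} : ℝ) ≤
      (k : ℝ) ^ n * (2 : ℝ) ^ ((2 : ℤ) - (k : ℤ)) := by
  set W := (Finset.univ.filter (fun w : Fin n → Fin k =>
      ∀ j, (Finset.filter (fun i => w i = j) Finset.univ).card % 2
        = (if q j then 1 else 0))) with hW
  have hcard : Set.ncard {w : List (Fin k) | w.length = n ∧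
      ∀ j : Fin k, w.count j % 2 = (if q j then 1 else 0)} = W.card := by
    rw [set_eq' k n q, Set.ncard_coe_finset,
      Finset.card_image_of_injective _ List.ofFn_injective]
  rw [hcard]
  have hkey := key_identity' k n q
  rw [← hW] at hkey
  have hbound : (2:ℝ) ^ k * (W.card : ℝ) ≤ 4 * (k:ℝ) ^ n := by
    rw [← hkey]
    calc ∑ s : Fin k → Bool, (∏ j, (if q j then psgn (s j) else 1)) * (∑ a, psgn (s a)) ^ n
        ≤ ∑ s : Fin k → Bool, |∑ a, psgn (s a)| ^ n := by
          refine Finset.sum_le_sum fun s _ => ?_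
          have habs : |∏ j, (if q j then psgn (s j) else 1)| = 1 := by
            rw [Finset.abs_prod]
            rw [Finset.prod_congr rfl (fun j _ => ?_), Finset.prod_const_one]
            cases hq : q j <;> cases hs : s j <;> simp [psgn]
          calc (∏ j, (if q j then psgn (s j) else 1)) * (∑ a, psgn (s a)) ^ n
              ≤ |(∏ j, (if q j then psgn (s j) else 1)) * (∑ a, psgn (s a)) ^ n| :=
                le_abs_self _
            _ = |∑ a, psgn (s a)| ^ n := by rw [abs_mul, habs, one_mul, abs_pow]
      _ ≤ 4 * (k:ℝ) ^ n := sum_abs_bd' k n hk hn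
  have h2k : (0:ℝ) < (2:ℝ) ^ k := by positivity
  have hrhs : (k : ℝ) ^ n * (2 : ℝ) ^ ((2 : ℤ) - (k : ℤ)) = 4 * (k:ℝ) ^ n / 2 ^ k := by
    rw [zpow_sub₀ (two_ne_zero), zpow_natCast]
    norm_num
    ring
  rw [hrhs, le_div_iff₀ h2k]
  linarith
end

section
/- Let P_n be the language of all permutations of the alphabet [n], i.e., all words of length n in which each letter of [n] appears exactly once. Every log-product expression B with L(B) ⊆ P_n satisfies |L(B)| ≤ n! · 4^{1−n} · n^{(3 + log₂ n)/4}. -/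
open Real

noncomputable def Gf (x : ℝ) : ℝ := (3/4) * Real.log x + (Real.log x)^2 / (4 * Real.log 2)
noncomputable def Ef (x : ℝ) : ℝ := Real.exp (Gf x)

lemma Ef_pos (x : ℝ) : 0 < Ef x := Real.exp_pos _

lemma Ef_two_mul {e : ℝ} (he : 0 < e) : Ef (2*e) = 2 * Real.sqrt e * Ef e := by
  have h2 : (0:ℝ) < Real.log 2 := Real.log_pos (by norm_num)
  have hlog : Real.log (2*e) = Real.log 2 + Real.log e := Real.log_mul (by norm_num) he.ne'
  have hs : Real.sqrt e = Real.exp (Real.log e / 2) := by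
    rw [← Real.log_sqrt he.le, Real.exp_log (Real.sqrt_pos.2 he)]
  have : Gf (2*e) = Real.log 2 + Real.log e / 2 + Gf e := by
    simp only [Gf, hlog]; field_simp; ring
  rw [Ef, this, Real.exp_add, Real.exp_add, hs, Real.exp_log (by norm_num : (0:ℝ) < 2)]
  rfl

lemma central (e : ℕ) (he : 1 ≤ e) :
    (4:ℝ)^e ≤ (Nat.centralBinom e : ℝ) * (2 * Real.sqrt e) := by
  induction e with
  | zero => omega
  | succ n ih =>
    rcases Nat.eq_zero_or_pos n with hn | hn
    · subst hn
      simp [Nat.centralBinom]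
      norm_num [Nat.choose]
    · have ihn := ih hn
      have hrec : ((n:ℝ)+1) * (Nat.centralBinom (n+1) : ℝ) = 2*(2*(n:ℝ)+1) * (Nat.centralBinom n : ℝ) := by
        have := Nat.succ_mul_centralBinom_succ n
        have h' : (((n+1) * Nat.centralBinom (n+1) : ℕ) : ℝ) = ((2 * (2*n+1) * Nat.centralBinom n : ℕ) : ℝ) := by norm_cast
        push_cast at h'
        linarith
      have hsq : Real.sqrt (n:ℝ) * Real.sqrt ((n:ℝ)+1) ≤ ((2*(n:ℝ)+1))/2 := by
        rw [← Real.sqrt_mul (by positivity)]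
        have : ((n:ℝ) * ((n:ℝ)+1)) ≤ (((2*(n:ℝ)+1))/2)^2 := by nlinarith
        calc Real.sqrt ((n:ℝ) * ((n:ℝ)+1)) ≤ Real.sqrt ((((2*(n:ℝ)+1))/2)^2) := Real.sqrt_le_sqrt this
          _ = ((2*(n:ℝ)+1))/2 := Real.sqrt_sq (by positivity)
      -- goal : 4^(n+1) ≤ cb(n+1) * (2 * sqrt (n+1))
      have hcb : (0:ℝ) ≤ (Nat.centralBinom n : ℝ) := by positivity
      have hsn : (0:ℝ) < Real.sqrt (n:ℝ) := Real.sqrt_pos.2 (by exact_mod_cast hn)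
      have hsn1 : (0:ℝ) < Real.sqrt ((n:ℝ)+1) := Real.sqrt_pos.2 (by positivity)
      have key : 4 * ((Nat.centralBinom n : ℝ) * (2 * Real.sqrt (n:ℝ)))
          ≤ (Nat.centralBinom (n+1) : ℝ) * (2 * Real.sqrt ((n:ℝ)+1)) := by
        -- cb(n+1) = 2(2n+1) cb n / (n+1)
        have hn1 : (0:ℝ) < (n:ℝ)+1 := by positivity
        -- multiply out: 8 cb n sqrt n (n+1) ≤ cb(n+1) * 2 sqrt(n+1) * (n+1) = 2(2n+1) cb n * 2 sqrt(n+1)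
        have expand : (Nat.centralBinom (n+1) : ℝ) * (2 * Real.sqrt ((n:ℝ)+1)) * ((n:ℝ)+1)
            = 2*(2*(n:ℝ)+1) * (Nat.centralBinom n : ℝ) * (2 * Real.sqrt ((n:ℝ)+1)) := by
          rw [← hrec]; ring
        have lhs' : 4 * ((Nat.centralBinom n : ℝ) * (2 * Real.sqrt (n:ℝ))) * ((n:ℝ)+1)
            = 8 * (Nat.centralBinom n : ℝ) * (Real.sqrt (n:ℝ) * Real.sqrt ((n:ℝ)+1) * Real.sqrt ((n:ℝ)+1)) := by
          have : Real.sqrt ((n:ℝ)+1) * Real.sqrt ((n:ℝ)+1) = (n:ℝ)+1 := Real.mul_self_sqrt (by positivity)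
          rw [show Real.sqrt (n:ℝ) * Real.sqrt ((n:ℝ)+1) * Real.sqrt ((n:ℝ)+1) = Real.sqrt (n:ℝ) * ((n:ℝ)+1) from by rw [mul_assoc, this]]
          ring
        have ineq : 8 * (Nat.centralBinom n : ℝ) * (Real.sqrt (n:ℝ) * Real.sqrt ((n:ℝ)+1) * Real.sqrt ((n:ℝ)+1))
            ≤ 2*(2*(n:ℝ)+1) * (Nat.centralBinom n : ℝ) * (2 * Real.sqrt ((n:ℝ)+1)) := by
          nlinarith [mul_le_mul_of_nonneg_right hsq (le_of_lt hsn1), hcb, hsn1.le]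
        have := lhs' ▸ ineq
        rw [← expand] at this
        exact le_of_mul_le_mul_right this hn1
      calc (4:ℝ)^(n+1) = 4 * 4^n := by ring
        _ ≤ 4 * ((Nat.centralBinom n : ℝ) * (2 * Real.sqrt (n:ℝ))) := by linarith
        _ ≤ _ := by push_cast; exact key

noncomputable def psi (x : ℝ) : ℝ := Real.log (x+1) + Gf (x+1) - Gf x

lemma hasDerivAt_Gf {x : ℝ} (hx : x ≠ 0) :
    HasDerivAt Gf ((3/4) * x⁻¹ + (2 * Real.log x * x⁻¹) / (4 * Real.log 2)) x := by
  have h1 : HasDerivAt (fun y : ℝ => (3/4) * Real.log y) ((3/4) * x⁻¹) x :=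
    (Real.hasDerivAt_log hx).const_mul _
  have h2 : HasDerivAt (fun y : ℝ => (Real.log y)^2) (2 * Real.log x ^ 1 * x⁻¹) x := by
    simpa using (Real.hasDerivAt_log hx).fun_pow 2
  have h3 := (h2.div_const (4 * Real.log 2))
  have := h1.fun_add h3
  simpa [Gf, pow_one] using (show HasDerivAt Gf _ x from this)

lemma hasDerivAt_psi {x : ℝ} (hx : 0 < x) :
    HasDerivAt psi
      (((x+1)⁻¹ + ((3/4) * (x+1)⁻¹ + (2 * Real.log (x+1) * (x+1)⁻¹) / (4 * Real.log 2)))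
        - ((3/4) * x⁻¹ + (2 * Real.log x * x⁻¹) / (4 * Real.log 2))) x := by
  have hx1 : x + 1 ≠ 0 := by positivity
  have hid : HasDerivAt (fun y : ℝ => y + 1) 1 x := (hasDerivAt_id x).add_const 1
  have hlog : HasDerivAt (fun y : ℝ => Real.log (y+1)) (1 / (x+1)) x := by
    simpa using hid.log hx1
  have hG1 : HasDerivAt (fun y : ℝ => Gf (y+1))
      (((3/4) * (x+1)⁻¹ + (2 * Real.log (x+1) * (x+1)⁻¹) / (4 * Real.log 2)) * 1) x :=
    HasDerivAt.comp (h := fun y : ℝ => y + 1) x (hasDerivAt_Gf hx1) hid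
  have := (hlog.fun_add hG1).fun_sub (hasDerivAt_Gf hx.ne')
  simpa [psi, one_div, mul_one] using (show HasDerivAt psi _ x from this)

lemma psi_mono : MonotoneOn psi (Set.Ici (1:ℝ)) := by
  have hderiv : ∀ x ∈ interior (Set.Ici (1:ℝ)), HasDerivAt psi
      (((x+1)⁻¹ + ((3/4) * (x+1)⁻¹ + (2 * Real.log (x+1) * (x+1)⁻¹) / (4 * Real.log 2)))
        - ((3/4) * x⁻¹ + (2 * Real.log x * x⁻¹) / (4 * Real.log 2))) x := by
    intro x hx
    rw [interior_Ici] at hx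
    exact hasDerivAt_psi (lt_trans one_pos hx)
  apply monotoneOn_of_hasDerivWithinAt_nonneg (convex_Ici 1)
    (f' := fun x => (((x+1)⁻¹ + ((3/4) * (x+1)⁻¹ + (2 * Real.log (x+1) * (x+1)⁻¹) / (4 * Real.log 2)))
        - ((3/4) * x⁻¹ + (2 * Real.log x * x⁻¹) / (4 * Real.log 2))))
  · -- continuity
    intro x hx
    have hx0 : 0 < x := lt_of_lt_of_le one_pos hx
    exact (hasDerivAt_psi hx0).continuousAt.continuousWithinAt
  · intro x hx
    exact (hderiv x hx).hasDerivWithinAt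
  · intro x hx
    rw [interior_Ici] at hx
    have hx1 : (1:ℝ) < x := hx
    have hx0 : (0:ℝ) < x := by linarith
    have hc : (0.6931471803 : ℝ) < Real.log 2 := Real.log_two_gt_d9
    have hcpos : (0:ℝ) < Real.log 2 := by linarith
    have ha : 0 ≤ Real.log x := Real.log_nonneg hx1.le
    have hab : Real.log x ≤ Real.log (x+1) := Real.log_le_log hx0 (by linarith)
    have hax : Real.log x ≤ x - 1 := by
      have := Real.log_le_sub_one_of_pos hx0
      linarith
    set a := Real.log x
    set b := Real.log (x+1)
    set c := Real.log 2
    have hkey : 0 ≤ (4*x - 3) * c / 2 + x * b - (x+1) * a := by nlinarith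
    have hform : (((x+1)⁻¹ + ((3/4) * (x+1)⁻¹ + (2 * b * (x+1)⁻¹) / (4 * c)))
        - ((3/4) * x⁻¹ + (2 * a * x⁻¹) / (4 * c)))
        = ((4*x - 3) * c / 2 + x * b - (x+1) * a) / (2 * c * x * (x+1)) := by
      field_simp
      ring
    rw [hform]
    positivity

lemma exp_psi {x : ℝ} (hx : 0 < x) :
    Real.exp (psi x) = (x+1) * Ef (x+1) / Ef x := by
  rw [psi, Real.exp_sub, Real.exp_add, Real.exp_log (by linarith : (0:ℝ) < x+1)]
  rfl

lemma star (e : ℕ) (he : 1 ≤ e) :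
    ∀ m : ℕ, e ≤ m → (4:ℝ)^e * Ef m ≤ ((m+e).choose e : ℝ) * Ef (m+e) := by
  refine Nat.le_induction ?_ ?_
  · -- m = e
    have h2e : ((e:ℕ)+e).choose e = Nat.centralBinom e := by
      rw [Nat.centralBinom]; congr 1; omega
    rw [h2e]
    have hcast : ((e:ℝ) + (e:ℝ)) = 2 * (e:ℝ) := by ring
    have hepos : (0:ℝ) < (e:ℝ) := by exact_mod_cast he
    have hE : Ef ((e:ℝ) + (e:ℝ)) = 2 * Real.sqrt e * Ef e := by
      rw [hcast]; exact Ef_two_mul hepos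
    push_cast
    rw [hE]
    have := central e he
    have hEe := (Ef_pos (e:ℝ)).le
    calc (4:ℝ)^e * Ef e ≤ ((Nat.centralBinom e : ℝ) * (2 * Real.sqrt e)) * Ef e := by
          exact mul_le_mul_of_nonneg_right this hEe
      _ = (Nat.centralBinom e : ℝ) * (2 * Real.sqrt e * Ef e) := by ring
  · -- step
    intro m hm ih
    -- choose identity: (m+1) * C(m+e+1, e) = (m+e+1) * C(m+e, e)
    have hid : (m+1) * (m+e+1).choose e = (m+e+1) * (m+e).choose e := by
      have h1 := Nat.add_one_mul_choose_eq (m+e) e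
      -- (m+e+1) * C(m+e,e) = C(m+e+1,e+1) * (e+1)
      have h2 := Nat.choose_succ_right_eq (m+e+1) e
      -- C(m+e+1,e+1)*(e+1) = C(m+e+1,e) * (m+e+1-e)
      have h3 : m+e+1-e = m+1 := by omega
      rw [h3] at h2
      calc (m+1) * (m+e+1).choose e = (m+e+1).choose e * (m+1) := by ring
        _ = (m+e+1).choose (e+1) * (e+1) := h2.symm
        _ = (m+e+1) * (m+e).choose e := by
            have h4 : (m+e+1) * (m+e).choose e = (m+e+1).choose (e+1) * (e+1) := by
              simpa using h1
            exact h4.symm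
    have hm1 : (1:ℝ) ≤ (m:ℝ) := by exact_mod_cast le_trans he hm
    have he0 : (0:ℝ) ≤ (e:ℝ) := by positivity
    have hpsi : psi (m:ℝ) ≤ psi ((m:ℝ) + (e:ℝ)) :=
      psi_mono (show (m:ℝ) ∈ Set.Ici (1:ℝ) from hm1)
        (show (m:ℝ)+(e:ℝ) ∈ Set.Ici (1:ℝ) from by simp only [Set.mem_Ici]; linarith)
        (by linarith)
    have hmpos : (0:ℝ) < (m:ℝ) := by linarith
    have hmepos : (0:ℝ) < (m:ℝ) + (e:ℝ) := by linarith
    have hexp := Real.exp_le_exp.2 hpsi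
    rw [exp_psi hmpos, exp_psi hmepos] at hexp
    set A := Ef (m:ℝ) with hA
    set B := Ef ((m:ℝ)+(e:ℝ)) with hB
    set A' := Ef ((m:ℝ)+1) with hA'
    set B' := Ef ((m:ℝ)+(e:ℝ)+1) with hB'
    have hApos : 0 < A := Ef_pos _
    have hBpos : 0 < B := Ef_pos _
    have hA'pos : 0 < A' := Ef_pos _
    have hB'pos : 0 < B' := Ef_pos _
    have hexp2 : ((m:ℝ)+1)*A'*B ≤ ((m:ℝ)+(e:ℝ)+1)*B'*A := by
      rw [div_le_div_iff₀ hApos hBpos] at hexp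
      linarith
    set C0 : ℝ := ((m+e).choose e : ℝ) with hC0
    set C1 : ℝ := ((m+1+e).choose e : ℝ) with hC1
    have hidR : ((m:ℝ)+1) * C1 = ((m:ℝ)+(e:ℝ)+1) * C0 := by
      have h5 : (((m+1) * ((m+e+1).choose e) : ℕ) : ℝ) = (((m+e+1) * ((m+e).choose e) : ℕ):ℝ) := by
        norm_cast
      push_cast at h5
      rw [hC0, hC1, show m+1+e = m+e+1 from by omega]
      push_cast
      linarith
    have ihR : (4:ℝ)^e * A ≤ C0 * B := ih
    have s1 : ((m:ℝ)+(e:ℝ)+1)*B'*((4:ℝ)^e*A) ≤ ((m:ℝ)+(e:ℝ)+1)*B'*(C0*B) :=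
      mul_le_mul_of_nonneg_left ihR (by positivity)
    have s2 : (4:ℝ)^e*(((m:ℝ)+1)*A'*B) ≤ (4:ℝ)^e*(((m:ℝ)+(e:ℝ)+1)*B'*A) :=
      mul_le_mul_of_nonneg_left hexp2 (by positivity)
    have heq : ((m:ℝ)+(e:ℝ)+1)*B'*(C0*B) = (((m:ℝ)+1)*C1)*(B'*B) := by
      rw [hidR]; ring
    have s3 : (((m:ℝ)+1)*B)*((4:ℝ)^e*A') ≤ (((m:ℝ)+1)*B)*(C1*B') := by
      calc (((m:ℝ)+1)*B)*((4:ℝ)^e*A') = (4:ℝ)^e*(((m:ℝ)+1)*A'*B) := by ring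
        _ ≤ (4:ℝ)^e*(((m:ℝ)+(e:ℝ)+1)*B'*A) := s2
        _ = ((m:ℝ)+(e:ℝ)+1)*B'*((4:ℝ)^e*A) := by ring
        _ ≤ ((m:ℝ)+(e:ℝ)+1)*B'*(C0*B) := s1
        _ = (((m:ℝ)+1)*C1)*(B'*B) := heq
        _ = (((m:ℝ)+1)*B)*(C1*B') := by ring
    have s4 : (4:ℝ)^e*A' ≤ C1*B' := le_of_mul_le_mul_left s3 (by positivity)
    have hgoal : Ef ((m:ℝ)+1+(e:ℝ)) = B' := by rw [hB']; ring_nf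
    push_cast
    rw [hgoal]
    exact s4

section Comb
variable {n : ℕ}

lemma length_eq_sum_count (w : List (Fin n)) : w.length = ∑ a, w.count a := by
  have h := Multiset.sum_count_eq_card (s := Finset.univ) (m := (w : Multiset (Fin n)))
    (fun a _ => Finset.mem_univ a)
  simp only [Multiset.coe_count, Multiset.coe_card] at h
  exact h.symm

lemma count_support {S : Finset (Fin n)} {w : List (Fin n)}
    (h : ∀ a, w.count a = if a ∈ S then 1 else 0) : w.length = S.card := by
  rw [length_eq_sum_count]
  simp only [h]
  rw [Finset.sum_ite_mem, Finset.univ_inter, Finset.sum_const, smul_eq_mul, mul_one]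

lemma perms_bound (S : Finset (Fin n)) :
    {w : List (Fin n) | ∀ a, w.count a = if a ∈ S then 1 else 0}.Finite ∧
    ({w : List (Fin n) | ∀ a, w.count a = if a ∈ S then 1 else 0}).ncard ≤ S.card.factorial := by
  have hsub : {w : List (Fin n) | ∀ a, w.count a = if a ∈ S then 1 else 0}
      ⊆ ↑(S.toList.permutations.toFinset) := by
    intro w hw
    simp only [Set.mem_setOf_eq] at hw
    simp only [Finset.mem_coe, List.mem_toFinset, List.mem_permutations]
    refine List.perm_iff_count.2 ?_
    intro a
    rw [hw a]
    by_cases ha : a ∈ S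
    · rw [List.count_eq_one_of_mem S.nodup_toList (Finset.mem_toList.2 ha), if_pos ha]
    · rw [List.count_eq_zero_of_not_mem (fun h => ha (Finset.mem_toList.1 h)), if_neg ha]
  have hfin : {w : List (Fin n) | ∀ a, w.count a = if a ∈ S then 1 else 0}.Finite :=
    Set.Finite.subset (S.toList.permutations.toFinset : Finset (List (Fin n))).finite_toSet hsub
  refine ⟨hfin, ?_⟩
  calc ({w : List (Fin n) | ∀ a, w.count a = if a ∈ S then 1 else 0}).ncard
      ≤ (↑(S.toList.permutations.toFinset) : Set (List (Fin n))).ncard :=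
        Set.ncard_le_ncard hsub (Finset.finite_toSet _)
    _ = S.toList.permutations.toFinset.card := Set.ncard_coe_finset _
    _ ≤ S.toList.permutations.length := List.toFinset_card_le _
    _ = S.card.factorial := by rw [List.length_permutations, Finset.length_toList]

lemma mul_card (L₁ L₂ : Language (Fin n)) (h₁ : (show Set (List (Fin n)) from L₁).Finite)
    (h₂ : (show Set (List (Fin n)) from L₂).Finite) :
    (show Set (List (Fin n)) from L₁ * L₂).Finite ∧
    (show Set (List (Fin n)) from L₁ * L₂).ncard ≤
      (show Set (List (Fin n)) from L₁).ncard * (show Set (List (Fin n)) from L₂).ncard := by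
  classical
  have hsub : (show Set (List (Fin n)) from L₁ * L₂)
      ⊆ ↑(Finset.image₂ (· ++ ·) h₁.toFinset h₂.toFinset) := by
    intro w hw
    rcases Language.mem_mul.1 hw with ⟨a, ha, b, hb, rfl⟩
    simp only [Finset.mem_coe]
    exact Finset.mem_image₂_of_mem (h₁.mem_toFinset.2 ha) (h₂.mem_toFinset.2 hb)
  have hfin := Set.Finite.subset (Finset.image₂ (· ++ ·) h₁.toFinset h₂.toFinset).finite_toSet hsub
  refine ⟨hfin, ?_⟩
  calc (show Set (List (Fin n)) from L₁ * L₂).ncard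
      ≤ (↑(Finset.image₂ (· ++ ·) h₁.toFinset h₂.toFinset) : Set (List (Fin n))).ncard :=
        Set.ncard_le_ncard hsub (Finset.finite_toSet _)
    _ = (Finset.image₂ (· ++ ·) h₁.toFinset h₂.toFinset).card := Set.ncard_coe_finset _
    _ ≤ h₁.toFinset.card * h₂.toFinset.card := Finset.card_image₂_le _ _ _
    _ = _ := by rw [← Set.ncard_eq_toFinset_card _ h₁, ← Set.ncard_eq_toFinset_card _ h₂]

/-- The support-splitting lemma for products all of whose members are permutations of `S`. -/
lemma split (L₁ L₂ : Language (Fin n)) (S : Finset (Fin n))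
    (h : ∀ w ∈ L₁ * L₂, ∀ a, w.count a = if a ∈ S then 1 else 0)
    {w₁ w₂ : List (Fin n)} (hw₁ : w₁ ∈ L₁) (hw₂ : w₂ ∈ L₂) :
    ∃ S₁ S₂ : Finset (Fin n), S₂ ⊆ S ∧ S₁ = S \ S₂ ∧
      (∀ w ∈ L₁, ∀ a, w.count a = if a ∈ S₁ then 1 else 0) ∧
      (∀ w ∈ L₂, ∀ a, w.count a = if a ∈ S₂ then 1 else 0) := by
  classical
  set S₂ : Finset (Fin n) := S.filter (fun a => w₂.count a = 1) with hS₂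
  refine ⟨S \ S₂, S₂, Finset.filter_subset _ _, rfl, ?_, ?_⟩
  · intro u hu a
    have eq1 : u.count a + w₂.count a = if a ∈ S then 1 else 0 := by
      rw [← List.count_append]
      exact h _ (Language.mem_mul.2 ⟨u, hu, w₂, hw₂, rfl⟩) a
    by_cases haS : a ∈ S
    · rw [if_pos haS] at eq1
      by_cases ha2 : w₂.count a = 1
      · have : a ∈ S₂ := by rw [hS₂]; exact Finset.mem_filter.2 ⟨haS, ha2⟩
        rw [if_neg (by simp [Finset.mem_sdiff, this])]
        omega
      · have : a ∉ S₂ := by rw [hS₂]; intro hc; exact ha2 (Finset.mem_filter.1 hc).2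
        rw [if_pos (Finset.mem_sdiff.2 ⟨haS, this⟩)]
        omega
    · rw [if_neg haS] at eq1
      rw [if_neg (by simp [Finset.mem_sdiff, haS])]
      omega
  · intro v hv a
    have eq1 : w₁.count a + v.count a = if a ∈ S then 1 else 0 := by
      rw [← List.count_append]
      exact h _ (Language.mem_mul.2 ⟨w₁, hw₁, v, hv, rfl⟩) a
    have eq2 : w₁.count a + w₂.count a = if a ∈ S then 1 else 0 := by
      rw [← List.count_append]
      exact h _ (Language.mem_mul.2 ⟨w₁, hw₁, w₂, hw₂, rfl⟩) a
    have hv2 : v.count a = w₂.count a := by omega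
    rw [hv2]
    by_cases haS : a ∈ S
    · by_cases ha2 : w₂.count a = 1
      · rw [ha2, if_pos (by rw [hS₂]; exact Finset.mem_filter.2 ⟨haS, ha2⟩)]
      · have : a ∉ S₂ := by rw [hS₂]; intro hc; exact ha2 (Finset.mem_filter.1 hc).2
        rw [if_neg this]
        rw [if_pos haS] at eq2
        omega
    · have : a ∉ S₂ := by rw [hS₂]; intro hc; exact haS (Finset.mem_filter.1 hc).1
      rw [if_neg this]
      rw [if_neg haS] at eq2
      omega

end Comb

noncomputable def Ff (d : ℕ) : ℝ :=
  (Nat.factorial d : ℝ) * (4 : ℝ) ^ ((1 : ℤ) - (d : ℤ)) *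
    (d : ℝ) ^ ((3 + Real.logb 2 (d : ℝ)) / 4)

lemma Ff_nonneg (d : ℕ) : 0 ≤ Ff d := by
  unfold Ff
  positivity

lemma rpow_eq_Ef {d : ℕ} (hd : 1 ≤ d) :
    (d : ℝ) ^ ((3 + Real.logb 2 (d : ℝ)) / 4) = Ef d := by
  have hd0 : (0:ℝ) < d := by exact_mod_cast hd
  have hc : Real.log 2 ≠ 0 := by
    have := Real.log_pos (by norm_num : (1:ℝ) < 2); linarith
  rw [Real.rpow_def_of_pos hd0, Ef, Gf, Real.logb]
  congr 1
  field_simp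

lemma Ff_one : Ff 1 = 1 := by
  unfold Ff
  norm_num

lemma Ff_step {m e : ℕ} (hm : 1 ≤ m) (hem : e ≤ m) :
    Ff m * (Nat.factorial e : ℝ) ≤ Ff (m + e) := by
  rcases Nat.eq_zero_or_pos e with he | he
  · subst he
    simp [Nat.factorial_zero]
  · have hstar := star e he m hem
    have hme : 1 ≤ m + e := by omega
    unfold Ff
    rw [rpow_eq_Ef hme, rpow_eq_Ef hm]
    have hfac : ((m+e).factorial : ℝ) = ((m+e).choose e : ℝ) * (e.factorial : ℝ) * (m.factorial : ℝ) := by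
      have h := Nat.choose_mul_factorial_mul_factorial (show e ≤ m + e by omega)
      have h2 : m + e - e = m := by omega
      rw [h2] at h
      exact_mod_cast h.symm
    have h4 : (4:ℝ) ^ ((1:ℤ) - ((m+e:ℕ) : ℤ)) * (4:ℝ)^(e:ℕ) = (4:ℝ) ^ ((1:ℤ) - (m:ℤ)) := by
      rw [← zpow_natCast (4:ℝ) e, ← zpow_add₀ (by norm_num : (4:ℝ) ≠ 0)]
      congr 1
      push_cast
      ring
    have h4pos : (0:ℝ) < (4:ℝ)^(e:ℕ) := by positivity
    rw [← mul_le_mul_iff_of_pos_right h4pos]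
    calc (m.factorial : ℝ) * (4:ℝ) ^ ((1:ℤ) - (m:ℤ)) * Ef m * (e.factorial : ℝ) * (4:ℝ)^(e:ℕ)
        = (m.factorial : ℝ) * (e.factorial : ℝ) * (4:ℝ) ^ ((1:ℤ) - (m:ℤ)) * ((4:ℝ)^(e:ℕ) * Ef m) := by
          ring
      _ ≤ (m.factorial : ℝ) * (e.factorial : ℝ) * (4:ℝ) ^ ((1:ℤ) - (m:ℤ)) * (((m+e).choose e : ℝ) * Ef ((m:ℝ)+(e:ℝ))) := by
          apply mul_le_mul_of_nonneg_left hstar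
          positivity
      _ = ((m+e).factorial : ℝ) * ((4:ℝ) ^ ((1:ℤ) - ((m+e:ℕ) : ℤ)) * (4:ℝ)^(e:ℕ)) * Ef ((m:ℝ)+(e:ℝ)) := by
          rw [hfac, ← h4]
          ring
      _ = ((m+e).factorial : ℝ) * (4:ℝ) ^ ((1:ℤ) - ((m+e:ℕ) : ℤ)) * Ef ((m+e:ℕ) : ℝ) * (4:ℝ)^(e:ℕ) := by
          push_cast
          ring

lemma lp_ne_nil {α : Type} {B : RE α} (h : B.LogProd) : ∀ w ∈ B.lang, w ≠ [] := by
  induction h with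
  | char a =>
    intro w hw
    have : w = [a] := hw
    simp [this]
  | catL h1 hh1 hh2 hd ih =>
    intro w hw
    rcases Language.mem_mul.1 hw with ⟨x, hx, y, hy, rfl⟩
    have := ih x hx
    simp [this]
  | catR h1 hh1 hh2 hd ih =>
    intro w hw
    rcases Language.mem_mul.1 hw with ⟨x, hx, y, hy, rfl⟩
    have := ih y hy
    simp [this]

lemma main_bound {n : ℕ} (B : RE (Fin n)) (hB : B.LogProd) :
    ∀ S : Finset (Fin n), (∀ w ∈ B.lang, ∀ a, w.count a = if a ∈ S then 1 else 0) →
    (show Set (List (Fin n)) from B.lang).Finite ∧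
    ((show Set (List (Fin n)) from B.lang).ncard : ℝ) ≤ Ff S.card := by
  induction hB with
  | char a =>
    intro S hS
    have hmem : [a] ∈ (RE.char a).lang := Set.mem_singleton _
    have hSa : S = {a} := by
      ext b
      have hb := hS [a] hmem b
      simp only [Finset.mem_singleton]
      constructor
      · intro hbS
        by_contra hba
        rw [if_pos hbS, List.count_eq_zero_of_not_mem (by simp [hba])] at hb
        omega
      · intro hba
        subst hba
        have hcb : [b].count b = 1 := by simp
        rw [hcb] at hb
        by_contra hbS
        rw [if_neg hbS] at hb
        omega
    have hlang : (show Set (List (Fin n)) from (RE.char a).lang) = {[a]} := rfl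
    rw [hlang, hSa]
    refine ⟨Set.finite_singleton _, ?_⟩
    rw [Set.ncard_singleton, Finset.card_singleton, Ff_one]
    norm_num
  | @catL B₁ B₂ d₁ d₂ hlp h₁ h₂ hd ih =>
    intro S hS
    rcases Set.eq_empty_or_nonempty (show Set (List (Fin n)) from B₁.lang) with hE | ⟨w₁, hw₁⟩
    · have : (show Set (List (Fin n)) from (RE.cat B₁ B₂).lang) = ∅ := by
        ext w
        simp only [Set.mem_empty_iff_false, iff_false]
        intro hw
        rcases Language.mem_mul.1 hw with ⟨x, hx, y, hy, rfl⟩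
        exact Set.notMem_empty x (hE ▸ hx)
      rw [this]
      simpa [Set.ncard_empty] using Ff_nonneg S.card
    · rcases Set.eq_empty_or_nonempty (show Set (List (Fin n)) from B₂.lang) with hE | ⟨w₂, hw₂⟩
      · have : (show Set (List (Fin n)) from (RE.cat B₁ B₂).lang) = ∅ := by
          ext w
          simp only [Set.mem_empty_iff_false, iff_false]
          intro hw
          rcases Language.mem_mul.1 hw with ⟨x, hx, y, hy, rfl⟩
          exact Set.notMem_empty y (hE ▸ hy)
        rw [this]
        simpa [Set.ncard_empty] using Ff_nonneg S.card
      · obtain ⟨S₁, S₂, hS₂S, hS₁def, hc₁, hc₂⟩ := split B₁.lang B₂.lang S hS hw₁ hw₂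
        have hl₁ : w₁.length = S₁.card := count_support (hc₁ w₁ hw₁)
        have hl₂ : w₂.length = S₂.card := count_support (hc₂ w₂ hw₂)
        have hd₁ := h₁ w₁ hw₁
        have hd₂ := h₂ w₂ hw₂
        have hem : S₂.card ≤ S₁.card := by omega
        have hm1 : 1 ≤ S₁.card := by
          have hne := lp_ne_nil hlp w₁ hw₁
          have := List.length_pos_iff.2 hne
          omega
        have hcardsum : S₁.card + S₂.card = S.card := by
          rw [hS₁def]
          exact Finset.card_sdiff_add_card_eq_card hS₂S
        obtain ⟨fin₁, hb₁⟩ := ih S₁ hc₁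
        obtain ⟨finP, hbP⟩ := perms_bound S₂
        have hsub₂ : (show Set (List (Fin n)) from B₂.lang)
            ⊆ {w : List (Fin n) | ∀ a, w.count a = if a ∈ S₂ then 1 else 0} := hc₂
        have fin₂ := Set.Finite.subset finP hsub₂
        have hb₂ : (show Set (List (Fin n)) from B₂.lang).ncard ≤ S₂.card.factorial :=
          le_trans (Set.ncard_le_ncard hsub₂ finP) hbP
        obtain ⟨finM, hbM⟩ := mul_card B₁.lang B₂.lang fin₁ fin₂
        refine ⟨finM, ?_⟩
        calc ((show Set (List (Fin n)) from (RE.cat B₁ B₂).lang).ncard : ℝ)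
            ≤ ((show Set (List (Fin n)) from B₁.lang).ncard : ℝ) *
              ((show Set (List (Fin n)) from B₂.lang).ncard : ℝ) := by exact_mod_cast hbM
          _ ≤ Ff S₁.card * (S₂.card.factorial : ℝ) := by
              apply mul_le_mul hb₁ (by exact_mod_cast hb₂) (by positivity) (Ff_nonneg _)
          _ ≤ Ff (S₁.card + S₂.card) := Ff_step hm1 hem
          _ = Ff S.card := by rw [hcardsum]
  | @catR B₁ B₂ d₁ d₂ hlp h₁ h₂ hd ih =>
    intro S hS
    rcases Set.eq_empty_or_nonempty (show Set (List (Fin n)) from B₁.lang) with hE | ⟨w₁, hw₁⟩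
    · have : (show Set (List (Fin n)) from (RE.cat B₂ B₁).lang) = ∅ := by
        ext w
        simp only [Set.mem_empty_iff_false, iff_false]
        intro hw
        rcases Language.mem_mul.1 hw with ⟨x, hx, y, hy, rfl⟩
        exact Set.notMem_empty y (hE ▸ hy)
      rw [this]
      simpa [Set.ncard_empty] using Ff_nonneg S.card
    · rcases Set.eq_empty_or_nonempty (show Set (List (Fin n)) from B₂.lang) with hE | ⟨w₂, hw₂⟩
      · have : (show Set (List (Fin n)) from (RE.cat B₂ B₁).lang) = ∅ := by
          ext w
          simp only [Set.mem_empty_iff_false, iff_false]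
          intro hw
          rcases Language.mem_mul.1 hw with ⟨x, hx, y, hy, rfl⟩
          exact Set.notMem_empty x (hE ▸ hx)
        rw [this]
        simpa [Set.ncard_empty] using Ff_nonneg S.card
      · obtain ⟨S₁, S₂, hS₂S, hS₁def, hc₁, hc₂⟩ := split B₂.lang B₁.lang S hS hw₂ hw₁
        -- here S₁ is the support of words of B₂ (the short factor),
        -- S₂ is the support of words of B₁ (the log-product factor)
        have hl₁ : w₂.length = S₁.card := count_support (hc₁ w₂ hw₂)
        have hl₂ : w₁.length = S₂.card := count_support (hc₂ w₁ hw₁)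
        have hd₁ := h₁ w₁ hw₁
        have hd₂ := h₂ w₂ hw₂
        have hem : S₁.card ≤ S₂.card := by omega
        have hm1 : 1 ≤ S₂.card := by
          have hne := lp_ne_nil hlp w₁ hw₁
          have := List.length_pos_iff.2 hne
          omega
        have hcardsum : S₁.card + S₂.card = S.card := by
          rw [hS₁def]
          exact Finset.card_sdiff_add_card_eq_card hS₂S
        obtain ⟨fin₁, hb₁⟩ := ih S₂ hc₂
        obtain ⟨finP, hbP⟩ := perms_bound S₁
        have hsub₂ : (show Set (List (Fin n)) from B₂.lang)
            ⊆ {w : List (Fin n) | ∀ a, w.count a = if a ∈ S₁ then 1 else 0} := hc₁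
        have fin₂ := Set.Finite.subset finP hsub₂
        have hb₂ : (show Set (List (Fin n)) from B₂.lang).ncard ≤ S₁.card.factorial :=
          le_trans (Set.ncard_le_ncard hsub₂ finP) hbP
        obtain ⟨finM, hbM⟩ := mul_card B₂.lang B₁.lang fin₂ fin₁
        refine ⟨finM, ?_⟩
        calc ((show Set (List (Fin n)) from (RE.cat B₂ B₁).lang).ncard : ℝ)
            ≤ ((show Set (List (Fin n)) from B₂.lang).ncard : ℝ) *
              ((show Set (List (Fin n)) from B₁.lang).ncard : ℝ) := by exact_mod_cast hbM
          _ ≤ (S₁.card.factorial : ℝ) * Ff S₂.card := by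
              apply mul_le_mul (by exact_mod_cast hb₂) hb₁ (by positivity) (by positivity)
          _ = Ff S₂.card * (S₁.card.factorial : ℝ) := by ring
          _ ≤ Ff (S₂.card + S₁.card) := Ff_step hm1 hem
          _ = Ff S.card := by rw [← hcardsum]; ring_nf


/-- Every log-product expression `B` describing only permutations of `[n]`
(words in which each letter of `[n]` appears exactly once) satisfies
`|L(B)| ≤ n! · 4^{1−n} · n^{(3 + log₂ n)/4}`. -/
theorem logProd_perm_count (n : ℕ) (hn : 1 ≤ n) (B : RE (Fin n))
    (hB : RE.LogProd B)
    (hsub : ∀ w ∈ B.lang, ∀ a : Fin n, w.count a = 1) :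
    (Set.ncard (show Set (List (Fin n)) from B.lang) : ℝ) ≤
      (Nat.factorial n : ℝ) * (4 : ℝ) ^ ((1 : ℤ) - (n : ℤ)) *
        (n : ℝ) ^ ((3 + Real.logb 2 (n : ℝ)) / 4) := by
  have h := (main_bound B hB Finset.univ (by
    intro w hw a
    rw [hsub w hw a]
    simp)).2
  rw [Finset.card_univ, Fintype.card_fin] at h
  simpa [Ff] using h
end
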